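/- arXiv:2304.06620 — 9 statements merged into one kernel-verified Lean document; each statement's English description precedes it below -/
import Mathlib

section
/- For all natural numbers n ≥ 1, if p rows, p columns, p sum-diagonals and p difference-diagonals together cover every cell of an n × n board, then p ≥ (n-1)/2. -/
open Polynomial Finset

noncomputable def wt (A : Finset ℚ) (x : ℚ) : ℚ := ∏ y ∈ A.erase x, (x - y)⁻¹

lemma coeff_basis (A : Finset ℚ) (i : ℚ) (hi : i ∈ A) :
    (Lagrange.basis A id i).coeff (A.card - 1) = wt A i := by
  have hinj : Set.InjOn id (A : Set ℚ) := Function.injective_id.injOn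
  have hdeg := Lagrange.natDegree_basis hinj hi
  have : (Lagrange.basis A id i).coeff (A.card - 1) = (Lagrange.basis A id i).leadingCoeff := by
    rw [Polynomial.leadingCoeff, hdeg]
  rw [this, Lagrange.basis, leadingCoeff_prod]
  · unfold wt
    apply Finset.prod_congr rfl
    intro j hj
    have hij : (i : ℚ) ≠ j := fun h => (Finset.mem_erase.mp hj).1 (by simp [h.symm])
    rw [Lagrange.basisDivisor, leadingCoeff_mul, leadingCoeff_C]
    simp [Polynomial.leadingCoeff_X_sub_C]

lemma keyFact (A : Finset ℚ) (t : ℕ) (ht : t < A.card) :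
    ∑ x ∈ A, wt A x * x ^ t = if t = A.card - 1 then 1 else 0 := by
  have hinj : Set.InjOn id (A : Set ℚ) := Function.injective_id.injOn
  have hdeg : ((X : ℚ[X]) ^ t).degree < A.card := by
    rw [degree_X_pow]; exact_mod_cast ht
  have h := Lagrange.eq_interpolate (f := (X : ℚ[X]) ^ t) hinj hdeg
  have h2 := congrArg (fun q : ℚ[X] => q.coeff (A.card - 1)) h
  simp only [Lagrange.interpolate_apply] at h2
  rw [finset_sum_coeff] at h2
  have h3 : ∀ x ∈ A, (Polynomial.C (eval (id x) ((X:ℚ[X])^t)) * Lagrange.basis A id x).coeff (A.card - 1)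
      = wt A x * x ^ t := by
    intro x hx
    rw [coeff_C_mul, coeff_basis A x hx]
    simp [mul_comm]
  rw [Finset.sum_congr rfl h3] at h2
  rw [← h2, coeff_X_pow]
  by_cases h : t = A.card - 1 <;> simp [h, eq_comm]

open MvPolynomial in
lemma pair_eq (d : Fin 2 →₀ ℕ) (α β : ℕ) :
    d = Finsupp.single 0 α + Finsupp.single 1 β ↔ (d 0 = α ∧ d 1 = β) := by
  constructor
  · rintro rfl
    simp [Finsupp.single_apply]
  · rintro ⟨h0, h1⟩
    ext i
    fin_cases i <;> simp [Finsupp.single_apply, h0, h1]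

open MvPolynomial in
lemma gridLemma (A B : Finset ℚ) (hA : 2 ≤ A.card) (hB : 2 ≤ B.card)
    (q : MvPolynomial (Fin 2) ℚ) (hq : q.totalDegree ≤ A.card + B.card - 2) :
    ∑ x ∈ A, ∑ y ∈ B, wt A x * wt B y * MvPolynomial.eval ![x, y] q
      = q.coeff (Finsupp.single 0 (A.card - 1) + Finsupp.single 1 (B.card - 1)) := by
  classical
  set a := A.card with ha
  set b := B.card with hb
  set tgt : Fin 2 →₀ ℕ := Finsupp.single 0 (a - 1) + Finsupp.single 1 (b - 1) with htgt
  have step : ∀ x ∈ A, ∀ y ∈ B, wt A x * wt B y * MvPolynomial.eval ![x, y] q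
      = ∑ d ∈ q.support, q.coeff d * ((wt A x * x ^ d 0) * (wt B y * y ^ d 1)) := by
    intro x hx y hy
    rw [eval_eq']
    rw [Finset.mul_sum]
    apply Finset.sum_congr rfl
    intro d hd
    rw [Fin.prod_univ_two]
    simp only [Matrix.cons_val_zero, Matrix.cons_val_one, Matrix.head_cons]
    ring
  calc ∑ x ∈ A, ∑ y ∈ B, wt A x * wt B y * MvPolynomial.eval ![x, y] q
      = ∑ d ∈ q.support, q.coeff d * ((∑ x ∈ A, wt A x * x ^ d 0) * (∑ y ∈ B, wt B y * y ^ d 1)) := by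
        rw [Finset.sum_congr rfl (fun x hx => Finset.sum_congr rfl (step x hx))]
        rw [Finset.sum_congr rfl (fun x _ => Finset.sum_comm), Finset.sum_comm]
        apply Finset.sum_congr rfl
        intro d _
        rw [Finset.sum_mul_sum, Finset.mul_sum]
        apply Finset.sum_congr rfl
        intro x _
        rw [Finset.mul_sum]
    _ = ∑ d ∈ q.support, (if d = tgt then q.coeff d else 0) := by
        apply Finset.sum_congr rfl
        intro d hd
        have hdsum : d 0 + d 1 ≤ a + b - 2 := by
          have h1 := MvPolynomial.le_totalDegree hd
          have h2 : d.sum (fun _ e => e) = d 0 + d 1 := by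
            rw [Finsupp.sum_fintype _ _ (fun _ => rfl), Fin.sum_univ_two]
          omega
        by_cases hc : d 0 = a - 1 ∧ d 1 = b - 1
        · rw [if_pos ((pair_eq d _ _).mpr hc)]
          rw [keyFact A _ (by omega), keyFact B _ (by omega), if_pos hc.1, if_pos hc.2]
          ring
        · rw [if_neg (fun h => hc ((pair_eq d _ _).mp h))]
          rcases Nat.lt_or_ge (d 0) a with h0 | h0
          · rcases Nat.lt_or_ge (d 1) b with h1 | h1
            · -- both in range; one of them misses its target
              rw [keyFact A _ h0, keyFact B _ h1]
              rcases not_and_or.mp hc with h | h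
              · rw [if_neg h]; ring
              · rw [if_neg h]; ring
            · -- d 1 ≥ b, then d 0 < a - 1
              rw [keyFact A _ h0, if_neg (by omega)]
              ring
          · -- d 0 ≥ a, then d 1 < b - 1
            rw [keyFact B _ (by omega), if_neg (by omega)]
            ring
    _ = q.coeff tgt := by
        rw [Finset.sum_ite_eq' q.support tgt (fun d => q.coeff d)]
        by_cases h : tgt ∈ q.support
        · rw [if_pos h]
        · rw [if_neg h]
          exact (MvPolynomial.notMem_support_iff.mp h).symm

open MvPolynomial in
lemma tdeg_sub_le (p q : MvPolynomial (Fin 2) ℚ) :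
    (p - q).totalDegree ≤ max p.totalDegree q.totalDegree := by
  rw [sub_eq_add_neg]
  refine (totalDegree_add _ _).trans ?_
  rw [totalDegree_neg]

open MvPolynomial in
lemma deg2 (d : Fin 2 →₀ ℕ) : d.degree = d 0 + d 1 := by
  rw [Finsupp.degree_apply]
  rw [Finset.sum_subset (Finset.subset_univ d.support) (by intro i _ h; simpa using h)]
  exact Fin.sum_univ_two d

open MvPolynomial in
lemma prodAffine (L : MvPolynomial (Fin 2) ℚ) (hL : L.totalDegree ≤ 1) (T : Finset ℚ) :
    (∏ s ∈ T, (L - MvPolynomial.C s)) - L ^ T.card = 0 ∨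
      ((∏ s ∈ T, (L - MvPolynomial.C s)) - L ^ T.card).totalDegree < T.card := by
  classical
  induction T using Finset.induction_on with
  | empty => left; simp
  | @insert a T ha IH =>
    right
    rw [Finset.prod_insert ha, Finset.card_insert_of_notMem ha]
    set E := (∏ s ∈ T, (L - MvPolynomial.C s)) - L ^ T.card with hE
    have hexp : (L - MvPolynomial.C a) * ∏ s ∈ T, (L - MvPolynomial.C s) - L ^ (T.card + 1)
        = L * E - MvPolynomial.C a * L ^ T.card - MvPolynomial.C a * E := by
      have : (∏ s ∈ T, (L - MvPolynomial.C s)) = E + L ^ T.card := by rw [hE]; ring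
      rw [this]; ring
    rw [hexp]
    have hLk : (L ^ T.card).totalDegree ≤ T.card := by
      refine (totalDegree_pow _ _).trans ?_
      calc T.card * L.totalDegree ≤ T.card * 1 := Nat.mul_le_mul_left _ hL
        _ = T.card := Nat.mul_one _
    have hCaLk : (MvPolynomial.C a * L ^ T.card).totalDegree ≤ T.card := by
      refine (totalDegree_mul _ _).trans ?_
      simpa using hLk
    rcases IH with h0 | hlt
    · rw [h0]
      simp only [mul_zero, zero_sub, sub_zero]
      rw [totalDegree_neg]
      exact Nat.lt_succ_of_le hCaLk
    · have h1 : (L * E).totalDegree ≤ T.card := by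
        refine (totalDegree_mul _ _).trans ?_
        omega
      have h2 : (MvPolynomial.C a * E).totalDegree < T.card := by
        refine lt_of_le_of_lt (totalDegree_mul _ _) ?_
        simpa using hlt
      calc (L * E - MvPolynomial.C a * L ^ T.card - MvPolynomial.C a * E).totalDegree
          ≤ max (L * E - MvPolynomial.C a * L ^ T.card).totalDegree (MvPolynomial.C a * E).totalDegree := tdeg_sub_le _ _
        _ ≤ max (max (L * E).totalDegree (MvPolynomial.C a * L ^ T.card).totalDegree) (MvPolynomial.C a * E).totalDegree := by
            exact max_le_max (tdeg_sub_le _ _) le_rfl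
        _ < T.card + 1 := by
            apply max_lt (max_lt (Nat.lt_succ_of_le h1) (Nat.lt_succ_of_le hCaLk))
            omega

open MvPolynomial in
noncomputable def PP (Sq Dq : Finset ℚ) : MvPolynomial (Fin 2) ℚ :=
  (∏ s ∈ Sq, (X 0 + X 1 - MvPolynomial.C s)) * (∏ d ∈ Dq, (X 0 - X 1 - MvPolynomial.C d))

open MvPolynomial in
noncomputable def HH (M K : ℕ) : MvPolynomial (Fin 2) ℚ :=
  (X 0 + X 1 : MvPolynomial (Fin 2) ℚ) ^ M * (X 0 - X 1) ^ K

open MvPolynomial in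
lemma tdeg_L1 : (X 0 + X 1 : MvPolynomial (Fin 2) ℚ).totalDegree ≤ 1 := by
  refine (totalDegree_add _ _).trans ?_
  simp [totalDegree_X]

open MvPolynomial in
lemma tdeg_L2 : (X 0 - X 1 : MvPolynomial (Fin 2) ℚ).totalDegree ≤ 1 := by
  refine (tdeg_sub_le _ _).trans ?_
  simp [totalDegree_X]

open MvPolynomial in
lemma coeff_PP_eq_coeff_HH (Sq Dq : Finset ℚ) (u : Fin 2 →₀ ℕ)
    (hu : u.degree = Sq.card + Dq.card) :
    coeff u (PP Sq Dq) = coeff u (HH Sq.card Dq.card) := by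
  classical
  have key : coeff u (PP Sq Dq - HH Sq.card Dq.card) = 0 := by
    set E1 := (∏ s ∈ Sq, (X 0 + X 1 - MvPolynomial.C s)) -
        (X 0 + X 1 : MvPolynomial (Fin 2) ℚ) ^ Sq.card with hE1
    set E2 := (∏ d ∈ Dq, (X 0 - X 1 - MvPolynomial.C d)) -
        (X 0 - X 1 : MvPolynomial (Fin 2) ℚ) ^ Dq.card with hE2
    have hsplit : PP Sq Dq - HH Sq.card Dq.card
        = E1 * (∏ d ∈ Dq, (X 0 - X 1 - MvPolynomial.C d))
          + (X 0 + X 1 : MvPolynomial (Fin 2) ℚ) ^ Sq.card * E2 := by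
      rw [hE1, hE2, PP, HH]; ring
    have hdu : ∑ i ∈ u.support, u i = Sq.card + Dq.card := by
      rw [← hu, Finsupp.degree_apply]
    rw [hsplit, MvPolynomial.coeff_add]
    have hprod2 : (∏ d ∈ Dq, (X 0 - X 1 - MvPolynomial.C d) :
        MvPolynomial (Fin 2) ℚ).totalDegree ≤ Dq.card := by
      refine (totalDegree_finset_prod _ _).trans ?_
      refine le_trans (Finset.sum_le_sum (fun d _ => ?_)) (le_of_eq (by rw [Finset.sum_const, smul_eq_mul, mul_one]))
      exact (tdeg_sub_le _ _).trans (by simpa using tdeg_L2)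
    have hpow1 : ((X 0 + X 1 : MvPolynomial (Fin 2) ℚ) ^ Sq.card).totalDegree ≤ Sq.card := by
      refine (totalDegree_pow _ _).trans ?_
      calc Sq.card * (X 0 + X 1 : MvPolynomial (Fin 2) ℚ).totalDegree
          ≤ Sq.card * 1 := Nat.mul_le_mul_left _ tdeg_L1
        _ = Sq.card := Nat.mul_one _
    have hz1 : coeff u (E1 * ∏ d ∈ Dq, (X 0 - X 1 - MvPolynomial.C d)) = 0 := by
      rcases prodAffine _ tdeg_L1 Sq with h0 | hlt
      · rw [← hE1] at h0; rw [h0, zero_mul, MvPolynomial.coeff_zero]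
      · rw [← hE1] at hlt
        apply coeff_eq_zero_of_totalDegree_lt
        rw [hdu]
        calc (E1 * ∏ d ∈ Dq, (X 0 - X 1 - MvPolynomial.C d)).totalDegree
            ≤ E1.totalDegree + _ := totalDegree_mul _ _
          _ < Sq.card + Dq.card := by omega
    have hz2 : coeff u ((X 0 + X 1 : MvPolynomial (Fin 2) ℚ) ^ Sq.card * E2) = 0 := by
      rcases prodAffine _ tdeg_L2 Dq with h0 | hlt
      · rw [← hE2] at h0; rw [h0, mul_zero, MvPolynomial.coeff_zero]
      · rw [← hE2] at hlt
        apply coeff_eq_zero_of_totalDegree_lt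
        rw [hdu]
        calc ((X 0 + X 1 : MvPolynomial (Fin 2) ℚ) ^ Sq.card * E2).totalDegree
            ≤ _ + E2.totalDegree := totalDegree_mul _ _
          _ < Sq.card + Dq.card := by omega
    rw [hz1, hz2, add_zero]
  have h2 := MvPolynomial.coeff_sub _ u (PP Sq Dq) (HH Sq.card Dq.card)
  rw [key] at h2
  linarith [h2]

noncomputable def ff (M K : ℕ) : Polynomial ℚ := (Polynomial.X + 1) ^ M * (Polynomial.X - 1) ^ K

open MvPolynomial in
lemma HH_hom (M K : ℕ) : (HH M K).IsHomogeneous (M + K) := by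
  have h1 := ((isHomogeneous_X ℚ (0 : Fin 2)).add (isHomogeneous_X _ 1)).pow M
  have h2 := ((isHomogeneous_X ℚ (0 : Fin 2)).sub (isHomogeneous_X _ 1)).pow K
  simpa [HH] using h1.mul h2

open MvPolynomial in
lemma coeff_HH (M K : ℕ) (α β : ℕ) (hαβ : α + β = M + K) :
    coeff (Finsupp.single 0 α + Finsupp.single 1 β) (HH M K) = (ff M K).coeff α := by
  classical
  set u : Fin 2 →₀ ℕ := Finsupp.single 0 α + Finsupp.single 1 β with hu
  have hu0 : u 0 = α ∧ u 1 = β := (pair_eq u α β).mp rfl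
  set φ : MvPolynomial (Fin 2) ℚ →+* Polynomial ℚ :=
    eval₂Hom (Polynomial.C : ℚ →+* Polynomial ℚ) ![Polynomial.X, 1] with hφ
  have hφH : φ (HH M K) = ff M K := by
    rw [HH, ff]
    simp [hφ]
  have hexp : φ (HH M K) = ∑ d ∈ (HH M K).support,
      Polynomial.C (coeff d (HH M K)) * Polynomial.X ^ (d 0) := by
    rw [hφ]
    show MvPolynomial.eval₂ _ _ _ = _
    rw [MvPolynomial.eval₂_eq']
    apply Finset.sum_congr rfl
    intro d _
    rw [Fin.prod_univ_two]
    simp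
  have hcoeff : (ff M K).coeff α = ∑ d ∈ (HH M K).support,
      coeff d (HH M K) * (if α = d 0 then 1 else 0) := by
    rw [← hφH, hexp, Polynomial.finset_sum_coeff]
    apply Finset.sum_congr rfl
    intro d _
    rw [Polynomial.coeff_C_mul, Polynomial.coeff_X_pow]
  rw [hcoeff]
  have hstep : ∀ d ∈ (HH M K).support,
      coeff d (HH M K) * (if α = d 0 then 1 else 0)
        = if d = u then coeff u (HH M K) else 0 := by
    intro d hd
    by_cases hdu : d = u
    · subst hdu
      rw [if_pos rfl, if_pos hu0.1.symm, mul_one]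
    · rw [if_neg hdu]
      by_cases hα : α = d 0
      · exfalso
        apply hdu
        have hdeg : d.degree = M + K := by
          by_contra hne
          exact (mem_support_iff.mp hd) ((HH_hom M K).coeff_eq_zero hne)
        rw [deg2] at hdeg
        exact (pair_eq d α β).mpr ⟨hα.symm, by omega⟩
      · rw [if_neg hα, mul_zero]
  rw [Finset.sum_congr rfl hstep, Finset.sum_ite_eq' ((HH M K).support) u]
  by_cases h : u ∈ (HH M K).support
  · rw [if_pos h]
  · rw [if_neg h]
    exact notMem_support_iff.mp h


lemma ff_monic (M K : ℕ) : (ff M K).Monic := by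
  apply Monic.mul <;> apply Monic.pow
  · simpa using monic_X_add_C (1 : ℚ)
  · simpa using monic_X_sub_C (1 : ℚ)

lemma ff_natDegree (M K : ℕ) : (ff M K).natDegree = M + K := by
  rw [ff, natDegree_mul (Monic.ne_zero (by apply Monic.pow; simpa using monic_X_add_C (1:ℚ)))
      (Monic.ne_zero (by apply Monic.pow; simpa using monic_X_sub_C (1:ℚ))),
    natDegree_pow, natDegree_pow]
  have h1 : ((X:ℚ[X]) + 1).natDegree = 1 := by simpa using natDegree_X_add_C (1:ℚ)
  have h2 : ((X:ℚ[X]) - 1).natDegree = 1 := by simpa using natDegree_X_sub_C (1:ℚ)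
  rw [h1, h2]; ring

lemma aux_deriv_pow (c : ℚ) (M : ℕ) :
    (X + Polynomial.C c) * derivative ((X + Polynomial.C c) ^ M)
      = Polynomial.C (M : ℚ) * (X + Polynomial.C c) ^ M := by
  cases M with
  | zero => simp
  | succ m =>
    rw [derivative_pow]
    simp only [derivative_add, derivative_X, derivative_C, add_zero, mul_one,
      Nat.add_sub_cancel]
    rw [pow_succ]
    push_cast
    ring

lemma ff_ident (M K : ℕ) :
    (X ^ 2 - 1) * derivative (ff M K)
      = (Polynomial.C ((M : ℚ) + K) * X + Polynomial.C ((K : ℚ) - M)) * ff M K := by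
  have hg := aux_deriv_pow 1 M
  have hh := aux_deriv_pow (-1) K
  simp only [map_one, map_neg] at hg hh
  have hh' : (X - 1) * derivative ((X - (1:ℚ[X])) ^ K) = Polynomial.C (K : ℚ) * (X - 1) ^ K := by
    simpa [sub_eq_add_neg] using hh
  have hg' : (X + 1) * derivative ((X + (1:ℚ[X])) ^ M) = Polynomial.C (M : ℚ) * (X + 1) ^ M := hg
  rw [ff, derivative_mul]
  have expand : (X ^ 2 - 1 : ℚ[X]) = (X - 1) * (X + 1) := by ring
  rw [expand]
  calc (X - 1) * (X + 1) * (derivative ((X + 1) ^ M) * (X - 1) ^ K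
        + (X + 1) ^ M * derivative ((X - 1) ^ K))
      = ((X + 1) * derivative ((X + 1) ^ M)) * ((X - 1) * (X - 1) ^ K)
        + ((X - 1) * derivative ((X - 1) ^ K)) * ((X + 1) * (X + 1) ^ M) := by ring
    _ = (Polynomial.C (M : ℚ) * (X + 1) ^ M) * ((X - 1) * (X - 1) ^ K)
        + (Polynomial.C (K : ℚ) * (X - 1) ^ K) * ((X + 1) * (X + 1) ^ M) := by rw [hg', hh']
    _ = (Polynomial.C ((M : ℚ) + K) * X + Polynomial.C ((K : ℚ) - M)) * ((X + 1) ^ M * (X - 1) ^ K) := by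
        simp only [map_add, map_sub]
        ring

lemma ff_step (M K i : ℕ) (h0 : (ff M K).coeff i = 0) (h1 : (ff M K).coeff (i + 1) = 0) :
    (ff M K).coeff (i + 2) = 0 := by
  have hid := congrArg (fun q : ℚ[X] => q.coeff (i + 1)) (ff_ident M K)
  simp only [sub_mul, one_mul, add_mul, coeff_sub, coeff_add, mul_assoc, coeff_C_mul,
    coeff_X_mul, h0, h1] at hid
  rw [mul_comm ((X:ℚ[X])^2) (derivative (ff M K)), coeff_mul_X_pow'] at hid
  rw [coeff_derivative] at hid
  by_cases h2 : 2 ≤ i + 1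
  · rw [if_pos h2, coeff_derivative] at hid
    have e1 : i + 1 - 2 + 1 = i := by omega
    rw [e1, h0] at hid
    have hz : (ff M K).coeff (i + 1 + 1) * ((i:ℚ) + 1 + 1) = 0 := by
      push_cast at hid ⊢
      linarith [hid]
    have hne : ((i:ℚ) + 1 + 1) ≠ 0 := by positivity
    have := (mul_eq_zero.mp hz).resolve_right hne
    simpa [show i + 1 + 1 = i + 2 from rfl] using this
  · rw [if_neg h2, coeff_derivative] at hid
    have hi0 : i = 0 := by omega
    subst hi0
    have hz : (ff M K).coeff 2 * (2:ℚ) = 0 := by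
      push_cast at hid ⊢
      linarith [hid]
    have := (mul_eq_zero.mp hz).resolve_right (by norm_num)
    simpa using this

lemma ff_no_consec (M K i : ℕ) (hi : i + 1 ≤ M + K)
    (h0 : (ff M K).coeff i = 0) (h1 : (ff M K).coeff (i + 1) = 0) : False := by
  have prop : ∀ t, (ff M K).coeff (i + t) = 0 := by
    intro t
    induction t using Nat.twoStepInduction with
    | zero => simpa using h0
    | one => simpa using h1
    | more t ih0 ih1 =>
      have h1' : (ff M K).coeff (i + t + 1) = 0 := by
        rw [show i + t + 1 = i + (t + 1) by omega]; exact ih1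
      have := ff_step M K (i + t) ih0 h1'
      rw [show i + (t + 2) = i + t + 2 by omega]
      exact this
  have hlead : (ff M K).coeff (M + K) = 1 := by
    have := (ff_monic M K).leadingCoeff
    rwa [Polynomial.leadingCoeff, ff_natDegree] at this
  have := prop (M + K - i)
  rw [show i + (M + K - i) = M + K by omega, hlead] at this
  exact one_ne_zero this

open MvPolynomial in
lemma tdeg_affprod (L : MvPolynomial (Fin 2) ℚ) (hL : L.totalDegree ≤ 1) (T : Finset ℚ) :
    (∏ s ∈ T, (L - MvPolynomial.C s)).totalDegree ≤ T.card := by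
  refine (totalDegree_finset_prod _ _).trans ?_
  refine le_trans (Finset.sum_le_sum (fun d _ => ?_))
    (le_of_eq (by rw [Finset.sum_const, smul_eq_mul, mul_one]))
  exact (tdeg_sub_le _ _).trans (by simpa using hL)

open MvPolynomial in
lemma cover_lower (A B Sq Dq : Finset ℚ) (hA : 2 ≤ A.card) (hB : 2 ≤ B.card)
    (hcov : ∀ x ∈ A, ∀ y ∈ B, x + y ∈ Sq ∨ x - y ∈ Dq) :
    A.card + B.card ≤ Sq.card + Dq.card + 2 := by
  classical
  by_contra hcon
  push_neg at hcon
  set a := A.card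
  set b := B.card
  set M := Sq.card
  set K := Dq.card
  set N := M + K with hN
  have hN3 : N + 3 ≤ a + b := by omega
  -- vanishing of PP on A × B
  have hvan : ∀ x ∈ A, ∀ y ∈ B, MvPolynomial.eval ![x, y] (PP Sq Dq) = 0 := by
    intro x hx y hy
    rw [PP, map_mul, map_prod, map_prod]
    rcases hcov x hx y hy with h | h
    · apply mul_eq_zero_of_left
      apply Finset.prod_eq_zero h
      simp
    · apply mul_eq_zero_of_right
      apply Finset.prod_eq_zero h
      simp
  have hPdeg : (PP Sq Dq).totalDegree ≤ N := by
    rw [PP]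
    refine (totalDegree_mul _ _).trans ?_
    exact Nat.add_le_add (tdeg_affprod _ tdeg_L1 _) (tdeg_affprod _ tdeg_L2 _)
  -- N = 0 impossible
  have hNpos : 1 ≤ N := by
    rcases Nat.eq_zero_or_pos N with h0 | h
    · exfalso
      have hS : Sq = ∅ := Finset.card_eq_zero.mp (by omega)
      have hD : Dq = ∅ := Finset.card_eq_zero.mp (by omega)
      obtain ⟨x, hx⟩ := Finset.card_pos.mp (by omega : 0 < A.card)
      obtain ⟨y, hy⟩ := Finset.card_pos.mp (by omega : 0 < B.card)
      rcases hcov x hx y hy with h | h <;> simp [hS, hD] at h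
    · exact h
  -- window lemma
  have window : ∀ γ₁ γ₂ : ℕ, γ₁ + γ₂ = a + b - 2 - N → γ₁ ≤ a - 1 → γ₂ ≤ b - 1 →
      (ff M K).coeff (a - 1 - γ₁) = 0 := by
    intro γ₁ γ₂ hγ hγ1 hγ2
    set u : Fin 2 →₀ ℕ := Finsupp.single 0 γ₁ + Finsupp.single 1 γ₂ with hu
    set q : MvPolynomial (Fin 2) ℚ := PP Sq Dq * monomial u 1 with hq
    have husum : u.sum (fun _ e => e) = γ₁ + γ₂ := by
      rw [hu, Finsupp.sum_fintype _ _ (fun _ => rfl), Fin.sum_univ_two]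
      simp [Finsupp.single_apply]
    have hqdeg : q.totalDegree ≤ a + b - 2 := by
      rw [hq]
      refine (totalDegree_mul _ _).trans ?_
      rw [totalDegree_monomial u (one_ne_zero), husum]
      omega
    have hgrid := gridLemma A B hA hB q hqdeg
    have hzero : ∑ x ∈ A, ∑ y ∈ B, wt A x * wt B y * MvPolynomial.eval ![x, y] q = 0 := by
      apply Finset.sum_eq_zero
      intro x hx
      apply Finset.sum_eq_zero
      intro y hy
      rw [hq, map_mul, hvan x hx y hy, zero_mul, mul_zero]
    rw [hzero] at hgrid
    have hle : u ≤ Finsupp.single 0 (a - 1) + Finsupp.single 1 (b - 1) := by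
      rw [hu, Finsupp.le_def]
      intro i
      fin_cases i <;> simp [Finsupp.single_apply, hγ1, hγ2]
    have hsub : (Finsupp.single (0 : Fin 2) (a - 1) + Finsupp.single 1 (b - 1)) - u
        = Finsupp.single 0 (a - 1 - γ₁) + Finsupp.single 1 (b - 1 - γ₂) := by
      rw [hu]
      ext i
      fin_cases i <;> simp [Finsupp.single_apply]
    rw [hq, coeff_mul_monomial', if_pos hle, hsub, mul_one] at hgrid
    have hdeg : (Finsupp.single (0 : Fin 2) (a - 1 - γ₁) + Finsupp.single 1 (b - 1 - γ₂)).degree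
        = M + K := by
      rw [deg2]
      simp only [Finsupp.add_apply, Finsupp.single_apply]
      norm_num
      omega
    rw [coeff_PP_eq_coeff_HH Sq Dq _ hdeg] at hgrid
    rw [coeff_HH M K _ _ (by omega)] at hgrid
    exact hgrid.symm
  -- choose two consecutive indices
  rcases Nat.lt_or_ge N (a - 1) with hcase | hcase
  · -- N < a - 1 : indices N-1, N via γ₁ = a - N, a - 1 - N
    have h1 := window (a - N) (b - 2) (by omega) (by omega) (by omega)
    have h2 := window (a - 1 - N) (b - 1) (by omega) (by omega) (by omega)
    rw [show a - 1 - (a - N) = N - 1 by omega] at h1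
    rw [show a - 1 - (a - 1 - N) = N by omega] at h2
    exact ff_no_consec M K (N - 1) (by omega) h1 (by rw [show N - 1 + 1 = N by omega]; exact h2)
  · -- N ≥ a - 1 : indices a-2, a-1 via γ₁ = 1, 0
    have h1 := window 1 (a + b - 3 - N) (by omega) (by omega) (by omega)
    have h2 := window 0 (a + b - 2 - N) (by omega) (by omega) (by omega)
    rw [show a - 1 - 1 = a - 2 by omega] at h1
    rw [Nat.sub_zero] at h2
    exact ff_no_consec M K (a - 2) (by omega) h1 (by rw [show a - 2 + 1 = a - 1 by omega]; exact h2)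

/-- If `p` rows, `p` columns, `p` sum-diagonals and `p` difference-diagonals
cover every cell of the `n × n` board (`n ≥ 1`), then `p ≥ (n-1)/2`,
i.e. `2*p ≥ n - 1`. -/
theorem relaxed_queens_square_lower_bound (n p : ℕ) (hn : 1 ≤ n)
    (R C : Fin p → ℕ) (S D : Fin p → ℤ)
    (hcover : ∀ x y : ℕ, x < n → y < n →
      ∃ i : Fin p, y = R i ∨ x = C i ∨ (x : ℤ) + y = S i ∨ (x : ℤ) - y = D i) :
    2 * p ≥ n - 1 := by
  classical
  by_contra hcon
  push_neg at hcon
  have hnp : 2 * p + 2 ≤ n := by omega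
  set U : Finset ℕ := (Finset.range n).filter (fun x => ∀ i, x ≠ C i) with hU
  set V : Finset ℕ := (Finset.range n).filter (fun y => ∀ i, y ≠ R i) with hV
  have hUcard : n - p ≤ U.card := by
    have hsub : Finset.range n \ Finset.image C Finset.univ ⊆ U := by
      intro x hx
      rw [Finset.mem_sdiff] at hx
      rw [hU, Finset.mem_filter]
      refine ⟨hx.1, fun i hi => hx.2 ?_⟩
      rw [Finset.mem_image]
      exact ⟨i, Finset.mem_univ i, hi.symm⟩
    calc n - p ≤ (Finset.range n).card - (Finset.image C Finset.univ).card := by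
          have h1 : (Finset.image C Finset.univ).card ≤ p := by
            refine (Finset.card_image_le).trans ?_
            simp
          rw [Finset.card_range]
          omega
      _ ≤ (Finset.range n \ Finset.image C Finset.univ).card := Finset.le_card_sdiff _ _
      _ ≤ U.card := Finset.card_le_card hsub
  have hVcard : n - p ≤ V.card := by
    have hsub : Finset.range n \ Finset.image R Finset.univ ⊆ V := by
      intro y hy
      rw [Finset.mem_sdiff] at hy
      rw [hV, Finset.mem_filter]
      refine ⟨hy.1, fun i hi => hy.2 ?_⟩
      rw [Finset.mem_image]
      exact ⟨i, Finset.mem_univ i, hi.symm⟩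
    calc n - p ≤ (Finset.range n).card - (Finset.image R Finset.univ).card := by
          have h1 : (Finset.image R Finset.univ).card ≤ p := by
            refine (Finset.card_image_le).trans ?_
            simp
          rw [Finset.card_range]
          omega
      _ ≤ (Finset.range n \ Finset.image R Finset.univ).card := Finset.le_card_sdiff _ _
      _ ≤ V.card := Finset.card_le_card hsub
  set A : Finset ℚ := Finset.image (fun x : ℕ => (x : ℚ)) U with hA
  set B : Finset ℚ := Finset.image (fun y : ℕ => (y : ℚ)) V with hB
  have hAcard : A.card = U.card := Finset.card_image_of_injective _ (Nat.cast_injective)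
  have hBcard : B.card = V.card := Finset.card_image_of_injective _ (Nat.cast_injective)
  set Sq : Finset ℚ := Finset.image (fun i => ((S i : ℤ) : ℚ)) Finset.univ with hSq
  set Dq : Finset ℚ := Finset.image (fun i => ((D i : ℤ) : ℚ)) Finset.univ with hDq
  have hSqcard : Sq.card ≤ p := (Finset.card_image_le).trans (by simp)
  have hDqcard : Dq.card ≤ p := (Finset.card_image_le).trans (by simp)
  have hcov : ∀ x ∈ A, ∀ y ∈ B, x + y ∈ Sq ∨ x - y ∈ Dq := by
    intro x' hx' y' hy'
    rw [hA, Finset.mem_image] at hx'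
    rw [hB, Finset.mem_image] at hy'
    obtain ⟨x, hx, rfl⟩ := hx'
    obtain ⟨y, hy, rfl⟩ := hy'
    rw [hU, Finset.mem_filter, Finset.mem_range] at hx
    rw [hV, Finset.mem_filter, Finset.mem_range] at hy
    obtain ⟨i, hi⟩ := hcover x y hx.1 hy.1
    rcases hi with h | h | h | h
    · exact absurd h (hy.2 i)
    · exact absurd h (hx.2 i)
    · left
      rw [hSq, Finset.mem_image]
      refine ⟨i, Finset.mem_univ i, ?_⟩
      rw [← h]
      push_cast
      ring
    · right
      rw [hDq, Finset.mem_image]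
      refine ⟨i, Finset.mem_univ i, ?_⟩
      rw [← h]
      push_cast
      ring
  have hmain := cover_lower A B Sq Dq (by omega) (by omega) hcov
  omega
end

section
/- For all natural numbers n with n ≡ 1 (mod 4), if p rows, p columns, p sum-diagonals and p difference-diagonals together cover every cell of the n × n board, then p ≥ (n+1)/2. -/
open Finset Polynomial

section helpers

lemma exists_weights' {k K : ℕ} (hk : k = K + 1) (x : Fin k → ℚ) (hx : Function.Injective x) :
    ∃ w : Fin k → ℚ, ∀ m : ℕ, m ≤ K → ∑ i, w i * x i ^ m = if m = K then 1 else 0 := by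
  have hdet : (Matrix.vandermonde x).det ≠ 0 := by
    rw [Matrix.det_vandermonde]
    refine Finset.prod_ne_zero_iff.2 fun i _ => Finset.prod_ne_zero_iff.2 fun j hj => ?_
    refine sub_ne_zero.2 fun h => ?_
    have := hx h
    simp only [Finset.mem_Ioi] at hj
    exact absurd this (ne_of_gt hj)
  set M := Matrix.vandermonde x with hMdef
  have hKk : K < k := by omega
  refine ⟨Matrix.vecMul (Pi.single ⟨K, hKk⟩ 1) M⁻¹, ?_⟩
  intro m hm
  have h1 : Matrix.vecMul (Matrix.vecMul (Pi.single ⟨K, hKk⟩ (1:ℚ)) M⁻¹) M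
      = Pi.single ⟨K, hKk⟩ 1 := by
    rw [Matrix.vecMul_vecMul, Matrix.nonsing_inv_mul M (isUnit_iff_ne_zero.2 hdet),
      Matrix.vecMul_one]
  have hmk : m < k := by omega
  have h2 := congrFun h1 ⟨m, hmk⟩
  rw [Matrix.vecMul, dotProduct] at h2
  simp only [hMdef, Matrix.vandermonde] at h2
  rw [Pi.single_apply] at h2
  convert h2 using 2
  all_goals simp [Fin.ext_iff, hMdef, Matrix.vandermonde]

lemma psi_expand' (m : ℕ) : ((X^2 - 1 : ℚ[X]))^m
    = ∑ e ∈ range (m+1), Polynomial.C ((-1:ℚ)^(m-e) * (m.choose e)) * X^(2*e) := by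
  have : (X^2 - 1 : ℚ[X]) = X^2 + (-1) := by ring
  rw [this, add_pow]
  refine Finset.sum_congr rfl fun e _ => ?_
  rw [← pow_mul, map_mul, map_pow, map_neg, map_one, Polynomial.C_eq_natCast]
  ring

lemma psi_coeff' (m t : ℕ) : ((X^2 - 1 : ℚ[X])^m).coeff t
    = if 2 * (t/2) = t then (-1:ℚ)^(m - t/2) * (m.choose (t/2)) else 0 := by
  rw [psi_expand', Polynomial.finset_sum_coeff]
  have key : ∀ e ∈ range (m+1), (Polynomial.C ((-1:ℚ)^(m-e) * (m.choose e)) * X^(2*e)).coeff t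
      = if 2*e = t then (-1:ℚ)^(m-e) * (m.choose e) else 0 := by
    intro e _
    rw [Polynomial.coeff_C_mul, Polynomial.coeff_X_pow]
    by_cases h : t = 2*e
    · subst h; rw [if_pos rfl, if_pos rfl, mul_one]
    · rw [if_neg h, if_neg (fun hh => h hh.symm), mul_zero]
  rw [Finset.sum_congr rfl key]
  by_cases ht : 2 * (t/2) = t
  · by_cases htm : t/2 ≤ m
    · rw [if_pos ht, Finset.sum_eq_single (t/2)]
      · rw [if_pos ht]
      · intro b _ hb
        rw [if_neg (by omega)]
      · intro h
        exact absurd (Finset.mem_range.2 (by omega)) h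
    · rw [if_pos ht, Finset.sum_eq_zero, Nat.choose_eq_zero_of_lt (by omega)]
      · simp
      · intro e he
        rw [Finset.mem_range] at he
        rw [if_neg (by omega)]
  · rw [if_neg ht, Finset.sum_eq_zero]
    intro e _
    rw [if_neg (by omega)]

lemma caseA' {K : ℕ} (hK : K % 2 = 0) : (((1+X)^K * (X-1)^K : ℚ[X])).coeff K ≠ 0 := by
  have h1 : ((1+X)^K * (X-1)^K : ℚ[X]) = (X^2-1)^K := by
    rw [← mul_pow]; ring_nf
  rw [h1, psi_coeff', if_pos (by omega)]
  have hc : (K.choose (K/2) : ℚ) ≠ 0 :=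
    Nat.cast_ne_zero.2 (Nat.choose_pos (by omega)).ne'
  exact mul_ne_zero (pow_ne_zero _ (by norm_num)) hc

lemma caseB' {K : ℕ} (hK : K % 2 = 1) : (((1+X)^(K+1) * (X-1)^(K-1) : ℚ[X])).coeff K ≠ 0 := by
  have h0 : K - 1 + 2 = K + 1 := by omega
  have h1 : ((1+X)^(K+1) * (X-1)^(K-1) : ℚ[X]) = (1+X)^2 * (X^2-1)^(K-1) := by
    have h2 : (X^2-1:ℚ[X]) = (1+X)*(X-1) := by ring
    rw [← h0, pow_add, h2, mul_pow]; ring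
  rw [h1, Polynomial.coeff_mul, Finset.Nat.sum_antidiagonal_eq_sum_range_succ_mk]
  rw [Finset.sum_eq_single 1]
  · have h2 : ((1+X:ℚ[X])^2).coeff 1 = 2 := by
      have : ((1+X:ℚ[X]))^2 = (X+1)^2 := by ring
      rw [this, Polynomial.coeff_X_add_one_pow]; norm_num
    simp only []
    rw [h2, psi_coeff', if_pos (by omega)]
    have hc : (((K-1).choose ((K-1)/2)) : ℚ) ≠ 0 :=
      Nat.cast_ne_zero.2 (Nat.choose_pos (by omega)).ne'
    exact mul_ne_zero (by norm_num) (mul_ne_zero (pow_ne_zero _ (by norm_num)) hc)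
  · intro b hb hb1
    have h3 : ((1+X:ℚ[X]))^2 = (X+1)^2 := by ring
    simp only []
    rw [h3, Polynomial.coeff_X_add_one_pow, psi_coeff']
    rw [Finset.mem_range] at hb
    rcases Nat.lt_or_ge b 3 with h4 | h4
    · interval_cases b
      · rw [if_neg (by omega)]; ring
      · exact absurd rfl hb1
      · rw [if_neg (by omega)]; ring
    · rw [Nat.choose_eq_zero_of_lt (by omega)]; norm_num
  · intro h
    exact absurd (Finset.mem_range.2 (by omega)) h

lemma coeff_X_sub_one_pow'' (δ b : ℕ) : ((X - 1 : ℚ[X])^δ).coeff b = (-1:ℚ)^(δ-b) * (δ.choose b) := by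
  have h1 : (X - 1 : ℚ[X])^δ = ∑ b ∈ range (δ+1), Polynomial.C ((-1:ℚ)^(δ-b) * (δ.choose b)) * X^b := by
    have : (X - 1 : ℚ[X]) = X + (-1) := by ring
    rw [this, add_pow]
    refine Finset.sum_congr rfl fun e _ => ?_
    rw [map_mul, map_pow, map_neg, map_one, Polynomial.C_eq_natCast]
    ring
  rw [h1, Polynomial.finset_sum_coeff]
  have key : ∀ e ∈ range (δ+1), (Polynomial.C ((-1:ℚ)^(δ-e) * (δ.choose e)) * X^e).coeff b
      = if e = b then (-1:ℚ)^(δ-e) * (δ.choose e) else 0 := by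
    intro e _
    rw [Polynomial.coeff_C_mul, Polynomial.coeff_X_pow]
    by_cases h : b = e
    · subst h; rw [if_pos rfl, if_pos rfl, mul_one]
    · rw [if_neg h, if_neg (fun hh => h hh.symm), mul_zero]
  rw [Finset.sum_congr rfl key]
  by_cases hb : b ≤ δ
  · rw [Finset.sum_eq_single b]
    · rw [if_pos rfl]
    · intro e _ he; rw [if_neg he]
    · intro h; exact absurd (Finset.mem_range.2 (by omega)) h
  · rw [Finset.sum_eq_zero, Nat.choose_eq_zero_of_lt (by omega)]
    · simp
    · intro e he
      rw [Finset.mem_range] at he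
      rw [if_neg (by omega)]

lemma sum_eq_coeff' (σ δ K : ℕ) :
    ∑ a ∈ range (σ+1), ∑ b ∈ range (δ+1),
      (if a + b = K then ((σ.choose a : ℚ) * (δ.choose b) * (-1:ℚ)^(δ-b)) else 0)
    = ((1+X)^σ * (X-1)^δ : ℚ[X]).coeff K := by
  have hz : ∀ a b : ℕ, (σ < a ∨ δ < b) →
      ((σ.choose a : ℚ) * (δ.choose b) * (-1:ℚ)^(δ-b)) = 0 := by
    intro a b h
    rcases h with h | h <;> rw [Nat.choose_eq_zero_of_lt h] <;> push_cast <;> ring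
  have hstep1 : ∀ a : ℕ, ∑ b ∈ range (δ+1),
      (if a + b = K then ((σ.choose a : ℚ) * (δ.choose b) * (-1:ℚ)^(δ-b)) else 0)
      = if a ≤ K then (σ.choose a : ℚ) * (δ.choose (K-a)) * (-1:ℚ)^(δ-(K-a)) else 0 := by
    intro a
    by_cases ha : a ≤ K
    · rw [if_pos ha]
      by_cases hKa : K - a ≤ δ
      · rw [Finset.sum_eq_single (K-a)]
        · rw [if_pos (by omega)]
        · intro b _ hb; rw [if_neg (by omega)]
        · intro h; exact absurd (Finset.mem_range.2 (by omega)) h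
      · rw [Finset.sum_eq_zero, hz a (K-a) (Or.inr (by omega))]
        intro b hb
        rw [Finset.mem_range] at hb
        rw [if_neg (by omega)]
    · rw [if_neg ha, Finset.sum_eq_zero]
      intro b _
      rw [if_neg (by omega)]
  rw [Finset.sum_congr rfl (fun a _ => hstep1 a)]
  rw [Polynomial.coeff_mul, Finset.Nat.sum_antidiagonal_eq_sum_range_succ_mk]
  have hval : ∀ a : ℕ, ((1+X:ℚ[X])^σ).coeff a * ((X-1:ℚ[X])^δ).coeff (K-a)
      = (σ.choose a : ℚ) * (δ.choose (K-a)) * (-1:ℚ)^(δ-(K-a)) := by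
    intro a
    have h1X : (1+X:ℚ[X]) = X+1 := by ring
    rw [h1X, Polynomial.coeff_X_add_one_pow, coeff_X_sub_one_pow'']
    ring
  have hR : ∀ a ∈ range (K+1),
      ((1+X:ℚ[X])^σ).coeff (a, K-a).1 * ((X-1:ℚ[X])^δ).coeff (a, K-a).2
      = if a ≤ K then (σ.choose a : ℚ) * (δ.choose (K-a)) * (-1:ℚ)^(δ-(K-a)) else 0 := by
    intro a ha
    rw [Finset.mem_range] at ha
    rw [if_pos (by omega)]
    exact hval a
  rw [show K.succ = K + 1 from rfl, Finset.sum_congr rfl hR]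
  have hF0 : ∀ a : ℕ, K < a ∨ σ < a →
      (if a ≤ K then (σ.choose a : ℚ) * (δ.choose (K-a)) * (-1:ℚ)^(δ-(K-a)) else 0) = 0 := by
    intro a h
    rcases h with h | h
    · rw [if_neg (by omega)]
    · by_cases hK : a ≤ K
      · rw [if_pos hK, hz a (K-a) (Or.inl h)]
      · rw [if_neg hK]
  trans (∑ a ∈ range (σ + K + 2),
      if a ≤ K then (σ.choose a : ℚ) * (δ.choose (K-a)) * (-1:ℚ)^(δ-(K-a)) else 0)
  · refine Finset.sum_subset (by intro z hz'; simp only [Finset.mem_range] at *; omega) ?_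
    intro a ha ha'
    simp only [Finset.mem_range] at ha ha'
    exact hF0 a (by omega)
  · refine (Finset.sum_subset (by intro z hz'; simp only [Finset.mem_range] at *; omega) ?_).symm
    intro a ha ha'
    simp only [Finset.mem_range] at ha ha'
    exact hF0 a (by omega)

lemma binom2' (x y : ℚ) (σ δ α β : ℕ) (hα : α ≤ σ) (hβ : β ≤ δ) :
    (x+y)^α * (x-y)^β = ∑ a ∈ range (σ+1), ∑ b ∈ range (δ+1),
      ((α.choose a : ℚ) * (β.choose b) * (-1:ℚ)^(β-b)) * (x^(a+b) * y^((α-a)+(β-b))) := by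
  have h1 : (x+y)^α = ∑ a ∈ range (σ+1), x^a * y^(α-a) * (α.choose a : ℚ) := by
    rw [add_pow]
    refine Finset.sum_subset (by intro z hz; simp only [Finset.mem_range] at *; omega) ?_
    intro a _ ha
    simp only [Finset.mem_range] at ha
    rw [Nat.choose_eq_zero_of_lt (by omega)]
    push_cast; ring
  have h2 : (x-y)^β = ∑ b ∈ range (δ+1), x^b * (-y)^(β-b) * (β.choose b : ℚ) := by
    rw [sub_eq_add_neg, add_pow]
    refine Finset.sum_subset (by intro z hz; simp only [Finset.mem_range] at *; omega) ?_
    intro b _ hb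
    simp only [Finset.mem_range] at hb
    rw [Nat.choose_eq_zero_of_lt (by omega)]
    push_cast; ring
  rw [h1, h2, Finset.sum_mul_sum]
  refine Finset.sum_congr rfl fun a _ => Finset.sum_congr rfl fun b _ => ?_
  rw [neg_pow, pow_add, pow_add]
  ring

lemma expand_point' (f g : ℚ[X]) (σ δ : ℕ) (hf : f.natDegree < σ+1) (hg : g.natDegree < δ+1)
    (c d x y : ℚ) :
    c * d * (f.eval (x+y) * g.eval (x-y)) =
    ∑ α ∈ range (σ+1), ∑ β ∈ range (δ+1), ∑ a ∈ range (σ+1), ∑ b ∈ range (δ+1),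
      (f.coeff α * g.coeff β * (α.choose a) * (β.choose b) * (-1:ℚ)^(β-b))
        * ((c * x^(a+b)) * (d * y^((α-a)+(β-b)))) := by
  rw [Polynomial.eval_eq_sum_range' hf (x+y), Polynomial.eval_eq_sum_range' hg (x-y),
    Finset.sum_mul_sum, Finset.mul_sum]
  refine Finset.sum_congr rfl fun α hα => ?_
  rw [Finset.mul_sum]
  refine Finset.sum_congr rfl fun β hβ => ?_
  rw [Finset.mem_range] at hα hβ
  calc c * d * (f.coeff α * (x+y)^α * (g.coeff β * (x-y)^β))
      = (c * d * f.coeff α * g.coeff β) * ((x+y)^α * (x-y)^β) := by ring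
    _ = (c * d * f.coeff α * g.coeff β) * ∑ a ∈ range (σ+1), ∑ b ∈ range (δ+1),
          ((α.choose a : ℚ) * (β.choose b) * (-1:ℚ)^(β-b)) * (x^(a+b) * y^((α-a)+(β-b))) := by
        rw [binom2' x y σ δ α β (by omega) (by omega)]
    _ = _ := by
        rw [Finset.mul_sum]
        refine Finset.sum_congr rfl fun a _ => ?_
        rw [Finset.mul_sum]
        exact Finset.sum_congr rfl fun b _ => by ring

lemma flatten4' {M : Type*} [AddCommMonoid M] (σ δ : ℕ) (F : ℕ → ℕ → ℕ → ℕ → M) :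
    ∑ q ∈ (range (σ+1) ×ˢ range (δ+1)) ×ˢ (range (σ+1) ×ˢ range (δ+1)),
      F q.1.1 q.1.2 q.2.1 q.2.2
    = ∑ α ∈ range (σ+1), ∑ β ∈ range (δ+1), ∑ a ∈ range (σ+1), ∑ b ∈ range (δ+1), F α β a b := by
  calc ∑ q ∈ (range (σ+1) ×ˢ range (δ+1)) ×ˢ (range (σ+1) ×ˢ range (δ+1)),
        F q.1.1 q.1.2 q.2.1 q.2.2
      = ∑ αβ ∈ range (σ+1) ×ˢ range (δ+1), ∑ ab ∈ range (σ+1) ×ˢ range (δ+1),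
          F αβ.1 αβ.2 ab.1 ab.2 :=
        Finset.sum_product _ _ (fun q : (ℕ×ℕ)×(ℕ×ℕ) => F q.1.1 q.1.2 q.2.1 q.2.2)
    _ = ∑ α ∈ range (σ+1), ∑ β ∈ range (δ+1), ∑ ab ∈ range (σ+1) ×ˢ range (δ+1),
          F α β ab.1 ab.2 :=
        Finset.sum_product _ _ (fun αβ : ℕ×ℕ => ∑ ab ∈ range (σ+1) ×ˢ range (δ+1), F αβ.1 αβ.2 ab.1 ab.2)
    _ = _ := Finset.sum_congr rfl fun α _ => Finset.sum_congr rfl fun β _ =>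
        Finset.sum_product _ _ (fun ab : ℕ×ℕ => F α β ab.1 ab.2)

lemma swap_in' {k : ℕ} (Q : Finset ((ℕ×ℕ)×(ℕ×ℕ))) (t : Fin k → Fin k → ((ℕ×ℕ)×(ℕ×ℕ)) → ℚ) :
    ∑ i : Fin k, ∑ j : Fin k, ∑ q ∈ Q, t i j q = ∑ q ∈ Q, ∑ i : Fin k, ∑ j : Fin k, t i j q := by
  calc ∑ i : Fin k, ∑ j : Fin k, ∑ q ∈ Q, t i j q
      = ∑ i : Fin k, ∑ q ∈ Q, ∑ j : Fin k, t i j q :=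
        Finset.sum_congr rfl fun i _ => Finset.sum_comm
    _ = ∑ q ∈ Q, ∑ i : Fin k, ∑ j : Fin k, t i j q := Finset.sum_comm

lemma pair_factor' {k : ℕ} (c : ℚ) (A B : Fin k → ℚ) :
    ∑ i : Fin k, ∑ j : Fin k, c * (A i * B j) = c * ((∑ i, A i) * (∑ j, B j)) := by
  symm
  calc c * ((∑ i, A i) * (∑ j, B j))
      = ∑ i : Fin k, c * (A i * (∑ j, B j)) := by
        rw [Finset.sum_mul, Finset.mul_sum]
    _ = ∑ i : Fin k, ∑ j : Fin k, c * (A i * B j) := by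
        refine Finset.sum_congr rfl fun i _ => ?_
        rw [Finset.mul_sum, Finset.mul_sum]

lemma exists_avoid' (n p k : ℕ) (C : Fin p → ℕ) (hk : k + p ≤ n) :
    ∃ u : Fin k → ℕ, Function.Injective u ∧ ∀ i, u i < n ∧ ∀ t, C t ≠ u i := by
  classical
  set V : Finset ℕ := (Finset.range n).filter (fun x => ∀ t, C t ≠ x) with hV
  have hsub : Finset.range n ⊆ V ∪ Finset.univ.image C := by
    intro x hx
    by_cases h : ∀ t, C t ≠ x
    · exact Finset.mem_union_left _ (Finset.mem_filter.2 ⟨hx, h⟩)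
    · push_neg at h
      obtain ⟨t, ht⟩ := h
      exact Finset.mem_union_right _ (Finset.mem_image.2 ⟨t, Finset.mem_univ t, ht⟩)
  have hcard : n ≤ V.card + p := by
    have h1 := Finset.card_le_card hsub
    have h2 := Finset.card_union_le V (Finset.univ.image C)
    have h3 := Finset.card_image_le (s := (Finset.univ : Finset (Fin p))) (f := C)
    simp only [Finset.card_range, Finset.card_univ, Fintype.card_fin] at h1 h2 h3
    omega
  obtain ⟨U, hUV, hUcard⟩ := Finset.exists_subset_card_eq (show k ≤ V.card by omega)
  refine ⟨fun i => (U.orderIsoOfFin hUcard i : ℕ), ?_, ?_⟩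
  · intro i j hij
    exact (U.orderIsoOfFin hUcard).injective (Subtype.ext hij)
  · intro i
    have hmem : ((U.orderIsoOfFin hUcard i : ℕ)) ∈ V := hUV (U.orderIsoOfFin hUcard i).2
    rw [hV, Finset.mem_filter, Finset.mem_range] at hmem
    exact hmem

end helpers

/-- If `n ≡ 1 [MOD 4]` and `p` rows, `p` columns, `p` sum-diagonals and
`p` difference-diagonals cover the `n × n` board, then `p ≥ (n+1)/2`. -/
theorem relaxed_queens_square_lower_bound_one_mod_four (n p : ℕ) (hn : n % 4 = 1)
    (R C : Fin p → ℕ) (S D : Fin p → ℤ)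
    (hcover : ∀ x y : ℕ, x < n → y < n →
      ∃ i : Fin p, y = R i ∨ x = C i ∨ (x : ℤ) + y = S i ∨ (x : ℤ) - y = D i) :
    p ≥ (n + 1) / 2 := by
  classical
  by_contra hcon
  push_neg at hcon
  have hn1 : 1 ≤ n := by omega
  have h2p : 2 * p + 1 ≤ n := by omega
  have hp0 : 0 < p := by
    rcases Nat.eq_zero_or_pos p with h | h
    · subst h
      obtain ⟨i, -⟩ := hcover 0 0 (by omega) (by omega)
      exact i.elim0
    · exact h
  set k := n - p with hkdef
  set K := n - p - 1 with hKdef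
  have hk : k = K + 1 := by omega
  have hpK : p ≤ K := by omega
  -- choose σ δ
  obtain ⟨σ, δ, hσp, hδp, hσδ, hcne⟩ :
      ∃ σ δ : ℕ, p ≤ σ ∧ p ≤ δ ∧ σ + δ = 2*K ∧
        ((1+X)^σ * (X-1)^δ : ℚ[X]).coeff K ≠ 0 := by
    rcases Nat.even_or_odd K with hK | hK
    · exact ⟨K, K, hpK, hpK, by omega, caseA' (Nat.even_iff.mp hK)⟩
    · have hpK' : p < K := by
        rcases Nat.lt_or_ge p K with h | h
        · exact h
        · exfalso
          have hpk : p = K := by omega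
          have : n = 2 * p + 1 := by omega
          have hpe : p % 2 = 0 := by omega
          have : K % 2 = 1 := Nat.odd_iff.mp hK
          omega
      exact ⟨K+1, K-1, by omega, by omega, by omega, caseB' (Nat.odd_iff.mp hK)⟩
  -- uncovered columns and rows
  obtain ⟨u, hu, hup⟩ := exists_avoid' n p k C (by omega)
  obtain ⟨v, hv, hvp⟩ := exists_avoid' n p k R (by omega)
  set xu : Fin k → ℚ := fun i => (u i : ℚ) with hxudef
  set yv : Fin k → ℚ := fun j => (v j : ℚ) with hyvdef
  have hxu : Function.Injective xu := by
    intro i j h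
    simp only [hxudef, Nat.cast_inj] at h
    exact hu h
  have hyv : Function.Injective yv := by
    intro i j h
    simp only [hyvdef, Nat.cast_inj] at h
    exact hv h
  obtain ⟨w, hW⟩ := exists_weights' hk xu hxu
  obtain ⟨w', hW'⟩ := exists_weights' hk yv hyv
  -- padded root lists
  set sQ : Fin σ → ℚ := fun t => if h : (t:ℕ) < p then ((S ⟨t, h⟩ : ℤ) : ℚ) else ((S ⟨0, hp0⟩ : ℤ) : ℚ) with hsQ
  set dQ : Fin δ → ℚ := fun t => if h : (t:ℕ) < p then ((D ⟨t, h⟩ : ℤ) : ℚ) else ((D ⟨0, hp0⟩ : ℤ) : ℚ) with hdQ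
  set f : ℚ[X] := ∏ t : Fin σ, (X - Polynomial.C (sQ t)) with hfdef
  set g : ℚ[X] := ∏ t : Fin δ, (X - Polynomial.C (dQ t)) with hgdef
  have hfm : f.Monic := monic_prod_of_monic _ _ fun t _ => monic_X_sub_C _
  have hgm : g.Monic := monic_prod_of_monic _ _ fun t _ => monic_X_sub_C _
  have hfdeg : f.natDegree = σ := by
    rw [hfdef, Polynomial.natDegree_prod _ _ (fun t _ => X_sub_C_ne_zero _)]
    simp [Polynomial.natDegree_X_sub_C]
  have hgdeg : g.natDegree = δ := by
    rw [hgdef, Polynomial.natDegree_prod _ _ (fun t _ => X_sub_C_ne_zero _)]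
    simp [Polynomial.natDegree_X_sub_C]
  have hfc : f.coeff σ = 1 := by
    have := hfm.coeff_natDegree
    rwa [hfdeg] at this
  have hgc : g.coeff δ = 1 := by
    have := hgm.coeff_natDegree
    rwa [hgdeg] at this
  -- vanishing on the grid
  have hroots : ∀ i j : Fin k, f.eval (xu i + yv j) = 0 ∨ g.eval (xu i - yv j) = 0 := by
    intro i j
    obtain ⟨t, ht⟩ := hcover (u i) (v j) (hup i).1 (hvp j).1
    rcases ht with ht | ht | ht | ht
    · exact absurd ht.symm ((hvp j).2 t)
    · exact absurd ht.symm ((hup i).2 t)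
    · left
      rw [hfdef, Polynomial.eval_prod]
      refine Finset.prod_eq_zero (Finset.mem_univ (⟨(t:ℕ), lt_of_lt_of_le t.isLt hσp⟩ : Fin σ)) ?_
      rw [Polynomial.eval_sub, Polynomial.eval_X, Polynomial.eval_C, hsQ]
      simp only [dif_pos t.isLt]
      rw [sub_eq_zero, hxudef, hyvdef]
      have h5 : ((u i : ℤ) : ℚ) + ((v j : ℤ) : ℚ) = ((S t : ℤ) : ℚ) := by exact_mod_cast congrArg (fun z : ℤ => (z : ℚ)) ht
      push_cast at h5 ⊢
      convert h5 using 3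
    · right
      rw [hgdef, Polynomial.eval_prod]
      refine Finset.prod_eq_zero (Finset.mem_univ (⟨(t:ℕ), lt_of_lt_of_le t.isLt hδp⟩ : Fin δ)) ?_
      rw [Polynomial.eval_sub, Polynomial.eval_X, Polynomial.eval_C, hdQ]
      simp only [dif_pos t.isLt]
      rw [sub_eq_zero, hxudef, hyvdef]
      have h5 : ((u i : ℤ) : ℚ) - ((v j : ℤ) : ℚ) = ((D t : ℤ) : ℚ) := by exact_mod_cast congrArg (fun z : ℤ => (z : ℚ)) ht
      push_cast at h5 ⊢
      convert h5 using 3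
  -- the functional
  set P4 : Finset ((ℕ×ℕ)×(ℕ×ℕ)) :=
    (range (σ+1) ×ˢ range (δ+1)) ×ˢ (range (σ+1) ×ˢ range (δ+1)) with hP4
  set coefq : (ℕ×ℕ)×(ℕ×ℕ) → ℚ := fun q =>
    f.coeff q.1.1 * g.coeff q.1.2 * (q.1.1.choose q.2.1 : ℚ) * (q.1.2.choose q.2.2 : ℚ)
      * (-1:ℚ)^(q.1.2 - q.2.2) with hcoefq
  set T : ℚ := ∑ i : Fin k, ∑ j : Fin k,
    w i * w' j * (f.eval (xu i + yv j) * g.eval (xu i - yv j)) with hTdef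
  have hT0 : T = 0 := by
    rw [hTdef]
    refine Finset.sum_eq_zero fun i _ => Finset.sum_eq_zero fun j _ => ?_
    rcases hroots i j with h | h <;> rw [h] <;> ring
  -- expand T
  have hexp : ∀ i j : Fin k,
      w i * w' j * (f.eval (xu i + yv j) * g.eval (xu i - yv j))
      = ∑ q ∈ P4, coefq q * ((w i * xu i ^ (q.2.1 + q.2.2))
          * (w' j * yv j ^ ((q.1.1 - q.2.1) + (q.1.2 - q.2.2)))) := by
    intro i j
    rw [expand_point' f g σ δ (by omega) (by omega) (w i) (w' j) (xu i) (yv j)]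
    exact (flatten4' σ δ (fun α β a b =>
      (f.coeff α * g.coeff β * (α.choose a) * (β.choose b) * (-1:ℚ)^(β-b))
        * ((w i * xu i ^ (a+b)) * (w' j * yv j ^ ((α-a)+(β-b)))))).symm
  have hTval : T = ∑ q ∈ P4, coefq q *
      ((∑ i : Fin k, w i * xu i ^ (q.2.1 + q.2.2))
        * (∑ j : Fin k, w' j * yv j ^ ((q.1.1 - q.2.1) + (q.1.2 - q.2.2)))) := by
    rw [hTdef]
    calc ∑ i : Fin k, ∑ j : Fin k, w i * w' j * (f.eval (xu i + yv j) * g.eval (xu i - yv j))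
        = ∑ i : Fin k, ∑ j : Fin k, ∑ q ∈ P4, coefq q * ((w i * xu i ^ (q.2.1 + q.2.2))
            * (w' j * yv j ^ ((q.1.1 - q.2.1) + (q.1.2 - q.2.2)))) :=
          Finset.sum_congr rfl fun i _ => Finset.sum_congr rfl fun j _ => hexp i j
      _ = ∑ q ∈ P4, ∑ i : Fin k, ∑ j : Fin k, coefq q * ((w i * xu i ^ (q.2.1 + q.2.2))
            * (w' j * yv j ^ ((q.1.1 - q.2.1) + (q.1.2 - q.2.2)))) := swap_in' P4 _
      _ = _ := Finset.sum_congr rfl fun q _ => pair_factor' (coefq q) _ _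
  -- analyze each term
  have hterm : ∀ q ∈ P4, coefq q *
      ((∑ i : Fin k, w i * xu i ^ (q.2.1 + q.2.2))
        * (∑ j : Fin k, w' j * yv j ^ ((q.1.1 - q.2.1) + (q.1.2 - q.2.2))))
      = if q.1 = (σ, δ) ∧ q.2.1 + q.2.2 = K then
          ((σ.choose q.2.1 : ℚ) * (δ.choose q.2.2) * (-1:ℚ)^(δ - q.2.2)) else 0 := by
    rintro ⟨⟨α, β⟩, ⟨a, b⟩⟩ hq
    rw [hP4, Finset.mem_product] at hq
    obtain ⟨hq1, hq2⟩ := hq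
    rw [Finset.mem_product] at hq1 hq2
    simp only [Finset.mem_range] at hq1 hq2
    obtain ⟨hα, hβ⟩ := hq1
    obtain ⟨ha, hb⟩ := hq2
    simp only [hcoefq]
    by_cases hle : a ≤ α ∧ b ≤ β
    · obtain ⟨haα, hbβ⟩ := hle
      rcases lt_trichotomy (a + b) K with h | h | h
      · have hWm : (∑ i : Fin k, w i * xu i ^ (a + b)) = 0 := by
          rw [hW _ (by omega), if_neg (by omega)]
        rw [hWm]
        rw [if_neg (by
          rintro ⟨-, h2⟩
          omega)]
        ring
      · have hWm : (∑ i : Fin k, w i * xu i ^ (a + b)) = 1 := by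
          rw [hW _ (by omega), if_pos h]
        by_cases h2 : α = σ ∧ β = δ
        · obtain ⟨rfl, rfl⟩ := h2
          have hm' : (α - a) + (β - b) = K := by omega
          rw [hWm, hW' _ (le_of_eq hm'), if_pos hm', hfc, hgc,
            if_pos ⟨rfl, h⟩]
          ring
        · have hαβ : α + β < 2*K := by
            rcases Nat.lt_or_ge (α + β) (2*K) with hh | hh
            · exact hh
            · exfalso
              have : α = σ ∧ β = δ := by omega
              exact h2 this
          have hm' : (α - a) + (β - b) < K := by omega
          have hWm' : (∑ j : Fin k, w' j * yv j ^ ((α - a) + (β - b))) = 0 := by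
            rw [hW' _ (by omega), if_neg (by omega)]
          rw [hWm, hWm']
          rw [if_neg (by
            rintro ⟨h3, -⟩
            rw [Prod.mk.injEq] at h3
            exact h2 ⟨h3.1, h3.2⟩)]
          ring
      · have hm' : (α - a) + (β - b) < K := by omega
        have hWm' : (∑ j : Fin k, w' j * yv j ^ ((α - a) + (β - b))) = 0 := by
          rw [hW' _ (by omega), if_neg (by omega)]
        rw [hWm']
        rw [if_neg (by
          rintro ⟨-, h2⟩
          omega)]
        ring
    · -- coefficient zero
      have hRHS : (if ((α,β) : ℕ×ℕ) = (σ, δ) ∧ a + b = K then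
          ((σ.choose a : ℚ) * (δ.choose b) * (-1:ℚ)^(δ - b)) else 0) = 0 := by
        rw [if_neg]
        rintro ⟨h3, -⟩
        rw [Prod.mk.injEq] at h3
        obtain ⟨rfl, rfl⟩ := h3
        exact hle ⟨by omega, by omega⟩
      rw [hRHS]
      rcases Nat.lt_or_ge α a with h | h
      · rw [Nat.choose_eq_zero_of_lt h]
        push_cast
        ring
      · have : β < b := by omega
        rw [Nat.choose_eq_zero_of_lt this]
        push_cast
        ring
  -- collapse
  have hcollapse : T = ((1+X)^σ * (X-1)^δ : ℚ[X]).coeff K := by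
    rw [hTval, Finset.sum_congr rfl hterm]
    rw [← sum_eq_coeff' σ δ K]
    calc ∑ q ∈ P4, (if q.1 = (σ, δ) ∧ q.2.1 + q.2.2 = K then
            ((σ.choose q.2.1 : ℚ) * (δ.choose q.2.2) * (-1:ℚ)^(δ - q.2.2)) else 0)
        = ∑ αβ ∈ range (σ+1) ×ˢ range (δ+1), ∑ ab ∈ range (σ+1) ×ˢ range (δ+1),
            (if αβ = (σ, δ) ∧ ab.1 + ab.2 = K then
              ((σ.choose ab.1 : ℚ) * (δ.choose ab.2) * (-1:ℚ)^(δ - ab.2)) else 0) :=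
          Finset.sum_product _ _ (fun q : (ℕ×ℕ)×(ℕ×ℕ) =>
            if q.1 = (σ, δ) ∧ q.2.1 + q.2.2 = K then
              ((σ.choose q.2.1 : ℚ) * (δ.choose q.2.2) * (-1:ℚ)^(δ - q.2.2)) else 0)
      _ = ∑ ab ∈ range (σ+1) ×ˢ range (δ+1),
            (if ab.1 + ab.2 = K then
              ((σ.choose ab.1 : ℚ) * (δ.choose ab.2) * (-1:ℚ)^(δ - ab.2)) else 0) := by
          rw [Finset.sum_eq_single ((σ, δ) : ℕ×ℕ)]
          · refine Finset.sum_congr rfl fun ab _ => ?_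
            by_cases h : ab.1 + ab.2 = K
            · rw [if_pos ⟨rfl, h⟩, if_pos h]
            · rw [if_neg (fun hh => h hh.2), if_neg h]
          · intro αβ _ hne
            refine Finset.sum_eq_zero fun ab _ => ?_
            rw [if_neg (fun hh => hne hh.1)]
          · intro hnotmem
            exfalso
            apply hnotmem
            rw [Finset.mem_product]
            constructor <;> simp
      _ = ∑ a ∈ range (σ+1), ∑ b ∈ range (δ+1),
            (if a + b = K then ((σ.choose a : ℚ) * (δ.choose b) * (-1:ℚ)^(δ-b)) else 0) :=
          Finset.sum_product _ _ (fun ab : ℕ×ℕ =>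
            if ab.1 + ab.2 = K then
              ((σ.choose ab.1 : ℚ) * (δ.choose ab.2) * (-1:ℚ)^(δ - ab.2)) else 0)
  rw [hT0] at hcollapse
  exact hcne hcollapse.symm
end

section
/- For every natural number k ≥ 1, it is impossible to cover the (2k−1) × (2k−1) board using at most 2k−2 sum diagonals and at most 2k−2 difference diagonals. Equivalently, α(B_{(2k−1)×(2k−1)}) ≥ 2k−1. -/
open Finset

private lemma diag_parity_count (m a r : ℤ) (hm2 : m % 2 = 0)
    (ha0 : 0 ≤ a) (ham : a ≤ m) (hr : r = 0 ∨ r = 1) :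
    (((Finset.Icc (-m) m).filter (fun u => u % 2 = r ∧ (u ≤ -a ∨ a ≤ u))).card : ℤ)
      ≤ m - a + 2 - r := by
  have hsub : ((Finset.Icc (-m) m).filter (fun u => u % 2 = r ∧ (u ≤ -a ∨ a ≤ u))).card
      ≤ (Finset.Icc (0:ℤ) (m - a + 1 - r)).card := by
    apply Finset.card_le_card_of_injOn
      (fun u => if 0 < u then (u - a) / 2 else (u + 2*m + 2 - 2*r - a) / 2)
    · intro u hu
      simp only [Finset.mem_coe, Finset.mem_filter, Finset.mem_Icc] at hu ⊢
      obtain ⟨⟨h1, h2⟩, h3, h4⟩ := hu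
      split <;> omega
    · intro u hu u' hu' heq
      simp only [Finset.coe_filter, Set.mem_setOf_eq, Finset.mem_Icc] at hu hu'
      simp only at heq
      split at heq <;> split at heq <;> omega
  have hc := Int.card_Icc (0:ℤ) (m - a + 1 - r)
  omega

/-- For `k ≥ 1` it is impossible to cover the `(2k-1) × (2k-1)` board using
at most `2k-2` sum diagonals and at most `2k-2` difference diagonals. -/
theorem bishops_odd_square_lower_bound (k : ℕ) (hk : 1 ≤ k) (p : ℕ) (hp : p ≤ 2 * k - 2)
    (S D : Fin p → ℤ) :
    ¬ (∀ x y : ℕ, x < 2 * k - 1 → y < 2 * k - 1 →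
        ∃ i : Fin p, (x : ℤ) + y = S i ∨ (x : ℤ) - y = D i) := by
  intro h
  rcases eq_or_lt_of_le hk with hk1 | hk2
  · obtain ⟨i, -⟩ := h 0 0 (by omega) (by omega)
    have := i.isLt; omega
  have hk2' : (2:ℤ) ≤ (k:ℤ) := by exact_mod_cast hk2
  set m : ℤ := 2 * (k:ℤ) - 2 with hmdef
  have hm0 : 0 ≤ m := by omega
  have hm2 : m % 2 = 0 := by omega
  classical
  set A : Finset ℤ := Finset.image S Finset.univ with hAdef
  set B : Finset ℤ := Finset.image D Finset.univ with hBdef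
  have hAcard : A.card ≤ p := le_trans Finset.card_image_le (by simp)
  have hBcard : B.card ≤ p := le_trans Finset.card_image_le (by simp)
  set U : Finset ℤ := (Finset.Icc (-m) m).filter (fun u => ¬ (u + m ∈ A)) with hUdef
  set V : Finset ℤ := (Finset.Icc (-m) m).filter (fun v => ¬ (v ∈ B)) with hVdef
  have hIccCard : (Finset.Icc (-m) m).card = 4 * k - 3 := by
    rw [Int.card_Icc]; omega
  -- lower bounds on |U|, |V|
  have hUcard : 4 * k - 3 ≤ U.card + p := by
    have h1 : (Finset.Icc (-m) m).card
        ≤ ((Finset.Icc (-m) m).filter (fun u => u + m ∈ A)).card + U.card := by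
      calc (Finset.Icc (-m) m).card
          ≤ (((Finset.Icc (-m) m).filter (fun u => u + m ∈ A)) ∪ U).card := by
            apply Finset.card_le_card
            intro u hu
            rw [Finset.mem_union, hUdef]
            by_cases hc : u + m ∈ A
            · exact Or.inl (Finset.mem_filter.mpr ⟨hu, hc⟩)
            · exact Or.inr (Finset.mem_filter.mpr ⟨hu, hc⟩)
        _ ≤ _ := Finset.card_union_le _ _
    have h2 : ((Finset.Icc (-m) m).filter (fun u => u + m ∈ A)).card ≤ A.card :=
      Finset.card_le_card_of_injOn (fun u => u + m)
        (fun u hu => (Finset.mem_filter.mp hu).2)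
        (fun x _ y _ hxy => by simpa using hxy)
    omega
  have hVcard : 4 * k - 3 ≤ V.card + p := by
    have h1 : (Finset.Icc (-m) m).card
        ≤ ((Finset.Icc (-m) m).filter (fun v => v ∈ B)).card + V.card := by
      calc (Finset.Icc (-m) m).card
          ≤ (((Finset.Icc (-m) m).filter (fun v => v ∈ B)) ∪ V).card := by
            apply Finset.card_le_card
            intro v hv
            rw [Finset.mem_union, hVdef]
            by_cases hc : v ∈ B
            · exact Or.inl (Finset.mem_filter.mpr ⟨hv, hc⟩)
            · exact Or.inr (Finset.mem_filter.mpr ⟨hv, hc⟩)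
        _ ≤ _ := Finset.card_union_le _ _
    have h2 : ((Finset.Icc (-m) m).filter (fun v => v ∈ B)).card ≤ B.card :=
      Finset.card_le_card_of_injOn (fun v => v)
        (fun v hv => (Finset.mem_filter.mp hv).2)
        (fun x _ y _ hxy => hxy)
    omega
  -- the covering hypothesis in (sum,diff) coordinates
  have key : ∀ u ∈ U, ∀ v ∈ V, u % 2 = v % 2 → ¬ (|u| + |v| ≤ m) := by
    intro u hu v hv hpar hle
    obtain ⟨hu1, hu2⟩ := Finset.mem_filter.mp hu
    obtain ⟨hv1, hv2⟩ := Finset.mem_filter.mp hv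
    rw [Finset.mem_Icc] at hu1 hv1
    have habs1 : |u + v| ≤ |u| + |v| := abs_add_le u v
    have habs2 : |u - v| ≤ |u| + |v| := by
      calc |u - v| = |u + -v| := by ring_nf
        _ ≤ |u| + |-v| := abs_add_le u (-v)
        _ = |u| + |v| := by rw [abs_neg]
    rw [abs_le] at habs1 habs2
    set X : ℤ := (u + v) / 2 + ((k:ℤ) - 1) with hXdef
    set Y : ℤ := (u - v) / 2 + ((k:ℤ) - 1) with hYdef
    obtain ⟨i, hi⟩ := h X.toNat Y.toNat (by omega) (by omega)
    have hXnn : (X.toNat : ℤ) = X := by omega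
    have hYnn : (Y.toNat : ℤ) = Y := by omega
    rcases hi with hi | hi
    · apply hu2
      have : u + m = S i := by omega
      rw [this, hAdef]
      exact Finset.mem_image_of_mem S (Finset.mem_univ i)
    · apply hv2
      have : v = D i := by omega
      rw [this, hBdef]
      exact Finset.mem_image_of_mem D (Finset.mem_univ i)
  -- parity split
  set Ue : Finset ℤ := U.filter (fun u => u % 2 = 0) with hUedef
  set Uo : Finset ℤ := U.filter (fun u => u % 2 = 1) with hUodef
  set Ve : Finset ℤ := V.filter (fun v => v % 2 = 0) with hVedef
  set Vo : Finset ℤ := V.filter (fun v => v % 2 = 1) with hVodef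
  have eU : U.filter (fun u => u % 2 = 1) = U.filter (fun u => ¬ u % 2 = 0) :=
    Finset.filter_congr (fun u _ => by omega)
  have hUsplit : Ue.card + Uo.card = U.card := by
    rw [hUedef, hUodef, eU]
    exact Finset.card_filter_add_card_filter_not (p := fun u => u % 2 = 0)
  have eV : V.filter (fun v => v % 2 = 1) = V.filter (fun v => ¬ v % 2 = 0) :=
    Finset.filter_congr (fun v _ => by omega)
  have hVsplit : Ve.card + Vo.card = V.card := by
    rw [hVedef, hVodef, eV]
    exact Finset.card_filter_add_card_filter_not (p := fun v => v % 2 = 0)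
  -- generic cardinality bound
  have bound : ∀ (W : Finset ℤ) (a r : ℤ),
      (∀ u ∈ W, u ∈ Finset.Icc (-m) m ∧ u % 2 = r ∧ (u ≤ -a ∨ a ≤ u)) →
      0 ≤ a → a ≤ m → (r = 0 ∨ r = 1) → (W.card : ℤ) ≤ m - a + 2 - r := by
    intro W a r hW ha ham hr
    have hsub : W ⊆ (Finset.Icc (-m) m).filter (fun u => u % 2 = r ∧ (u ≤ -a ∨ a ≤ u)) := by
      intro u hu
      exact Finset.mem_filter.mpr ⟨(hW u hu).1, (hW u hu).2.1, (hW u hu).2.2⟩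
    have := Finset.card_le_card hsub
    have := diag_parity_count m a r hm2 ha ham hr
    omega
  -- facts about membership
  have hUmem : ∀ u ∈ U, -m ≤ u ∧ u ≤ m := by
    intro u hu
    have := (Finset.mem_filter.mp hu).1
    rw [Finset.mem_Icc] at this; exact this
  have hVmem : ∀ v ∈ V, -m ≤ v ∧ v ≤ m := by
    intro v hv
    have := (Finset.mem_filter.mp hv).1
    rw [Finset.mem_Icc] at this; exact this
  -- Ue, Ve nonempty
  have hUene : Ue.Nonempty := by
    rw [Finset.nonempty_iff_ne_empty]
    intro he
    have hb : (Uo.card : ℤ) ≤ m - 1 + 2 - 1 := by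
      apply bound Uo 1 1 _ (by omega) (by omega) (Or.inr rfl)
      intro u hu
      obtain ⟨huU, hup⟩ := Finset.mem_filter.mp hu
      have := hUmem u huU
      exact ⟨Finset.mem_Icc.mpr this, hup, by omega⟩
    rw [he] at hUsplit
    simp at hUsplit
    omega
  have hVene : Ve.Nonempty := by
    rw [Finset.nonempty_iff_ne_empty]
    intro he
    have hb : (Vo.card : ℤ) ≤ m - 1 + 2 - 1 := by
      apply bound Vo 1 1 _ (by omega) (by omega) (Or.inr rfl)
      intro v hv
      obtain ⟨hvV, hvp⟩ := Finset.mem_filter.mp hv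
      have := hVmem v hvV
      exact ⟨Finset.mem_Icc.mpr this, hvp, by omega⟩
    rw [he] at hVsplit
    simp at hVsplit
    omega
  -- minima of |·| on even parts
  obtain ⟨u0, hu0U, hu0min⟩ := Finset.exists_min_image Ue (fun u => |u|) hUene
  obtain ⟨v0, hv0V, hv0min⟩ := Finset.exists_min_image Ve (fun v => |v|) hVene
  set a : ℤ := |u0| with hadef
  set b : ℤ := |v0| with hbdef
  obtain ⟨hu0U', hu0par⟩ := Finset.mem_filter.mp hu0U
  obtain ⟨hv0V', hv0par⟩ := Finset.mem_filter.mp hv0V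
  have hu0m := hUmem u0 hu0U'
  have hv0m := hVmem v0 hv0V'
  have hau : |u0| = u0 ∨ |u0| = -u0 := abs_choice u0
  have hbv : |v0| = v0 ∨ |v0| = -v0 := abs_choice v0
  have hapar : a % 2 = 0 := by omega
  have hbpar : b % 2 = 0 := by omega
  have ha0 : 0 ≤ a := abs_nonneg u0
  have hb0 : 0 ≤ b := abs_nonneg v0
  have ham : a ≤ m := by omega
  have hbm : b ≤ m := by omega
  have hab : ¬ (a + b ≤ m) := by
    intro hle
    exact key u0 hu0U' v0 hv0V' (by omega) (by omega)
  -- bounds on Ue, Ve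
  have hUeb : (Ue.card : ℤ) ≤ m - a + 2 := by
    have := bound Ue a 0 ?_ ha0 ham (Or.inl rfl)
    · omega
    · intro u hu
      obtain ⟨huU, hup⟩ := Finset.mem_filter.mp hu
      have h1 := hUmem u huU
      have h2 := hu0min u hu
      have h3 : |u| = u ∨ |u| = -u := abs_choice u
      exact ⟨Finset.mem_Icc.mpr h1, hup, by omega⟩
  have hVeb : (Ve.card : ℤ) ≤ m - b + 2 := by
    have := bound Ve b 0 ?_ hb0 hbm (Or.inl rfl)
    · omega
    · intro v hv
      obtain ⟨hvV, hvp⟩ := Finset.mem_filter.mp hv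
      have h1 := hVmem v hvV
      have h2 := hv0min v hv
      have h3 : |v| = v ∨ |v| = -v := abs_choice v
      exact ⟨Finset.mem_Icc.mpr h1, hvp, by omega⟩
  -- Uo, Vo nonempty
  have hUone : Uo.Nonempty := by
    rw [Finset.nonempty_iff_ne_empty]
    intro he
    rw [he] at hUsplit
    simp at hUsplit
    omega
  have hVone : Vo.Nonempty := by
    rw [Finset.nonempty_iff_ne_empty]
    intro he
    rw [he] at hVsplit
    simp at hVsplit
    omega
  obtain ⟨u1, hu1U, hu1min⟩ := Finset.exists_min_image Uo (fun u => |u|) hUone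
  obtain ⟨v1, hv1V, hv1min⟩ := Finset.exists_min_image Vo (fun v => |v|) hVone
  set a' : ℤ := |u1| with ha'def
  set b' : ℤ := |v1| with hb'def
  obtain ⟨hu1U', hu1par⟩ := Finset.mem_filter.mp hu1U
  obtain ⟨hv1V', hv1par⟩ := Finset.mem_filter.mp hv1V
  have hu1m := hUmem u1 hu1U'
  have hv1m := hVmem v1 hv1V'
  have hau1 : |u1| = u1 ∨ |u1| = -u1 := abs_choice u1
  have hbv1 : |v1| = v1 ∨ |v1| = -v1 := abs_choice v1
  have ha'par : a' % 2 = 1 := by omega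
  have hb'par : b' % 2 = 1 := by omega
  have ha'0 : 0 ≤ a' := abs_nonneg u1
  have hb'0 : 0 ≤ b' := abs_nonneg v1
  have ha'm : a' ≤ m := by omega
  have hb'm : b' ≤ m := by omega
  have ha'b' : ¬ (a' + b' ≤ m) := by
    intro hle
    exact key u1 hu1U' v1 hv1V' (by omega) (by omega)
  have hUob : (Uo.card : ℤ) ≤ m - a' + 1 := by
    have := bound Uo a' 1 ?_ ha'0 ha'm (Or.inr rfl)
    · omega
    · intro u hu
      obtain ⟨huU, hup⟩ := Finset.mem_filter.mp hu
      have h1 := hUmem u huU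
      have h2 := hu1min u hu
      have h3 : |u| = u ∨ |u| = -u := abs_choice u
      exact ⟨Finset.mem_Icc.mpr h1, hup, by omega⟩
  have hVob : (Vo.card : ℤ) ≤ m - b' + 1 := by
    have := bound Vo b' 1 ?_ hb'0 hb'm (Or.inr rfl)
    · omega
    · intro v hv
      obtain ⟨hvV, hvp⟩ := Finset.mem_filter.mp hv
      have h1 := hVmem v hvV
      have h2 := hv1min v hv
      have h3 : |v| = v ∨ |v| = -v := abs_choice v
      exact ⟨Finset.mem_Icc.mpr h1, hvp, by omega⟩
  omega
end

section
/- For all natural numbers n: α(B_{n×n}) = 2k−1 if n = 2k is even, and α(B_{n×n}) = 2k+1 if n = 2k+1 is odd. -/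
open Finset

section AlphaBAux

/-- Upper bound construction for even boards: the `2k-1` odd sum diagonals together with
the `2k-1` even difference diagonals cover the `2k × 2k` board. -/
lemma alphaB_upper_even (k : ℕ) :
    ∃ S D : Fin (2*k-1) → ℤ, ∀ x y : ℕ, x < 2*k → y < 2*k →
      ∃ i : Fin (2*k-1), (x:ℤ)+y = S i ∨ (x:ℤ)-y = D i := by
  refine ⟨fun i => 2*(i:ℤ)+1, fun i => 2*(i:ℤ) - 2*k + 2, fun x y hx hy => ?_⟩
  suffices h : ∃ j : ℕ, j < 2*k-1 ∧ ((x:ℤ)+y = 2*j+1 ∨ (x:ℤ)-y = 2*j-2*k+2) by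
    obtain ⟨j, hj, hor⟩ := h
    refine ⟨⟨j, hj⟩, ?_⟩
    rcases hor with h | h
    · left; simpa using h
    · right; simpa using h
  rcases Nat.even_or_odd (x+y) with he | ho
  · have h2 : (x+y) % 2 = 0 := Nat.even_iff.mp he
    exact ⟨(x + 2*k - 2 - y)/2, by omega, Or.inr (by push_cast; omega)⟩
  · have h2 : (x+y) % 2 = 1 := Nat.odd_iff.mp ho
    exact ⟨(x + y - 1)/2, by omega, Or.inl (by push_cast; omega)⟩

/-- Upper bound construction for odd boards: the `2k+1` even sum diagonals together with
the odd difference diagonals cover the `(2k+1) × (2k+1)` board. -/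
lemma alphaB_upper_odd (k : ℕ) :
    ∃ S D : Fin (2*k+1) → ℤ, ∀ x y : ℕ, x < 2*k+1 → y < 2*k+1 →
      ∃ i : Fin (2*k+1), (x:ℤ)+y = S i ∨ (x:ℤ)-y = D i := by
  refine ⟨fun i => 2*(i:ℤ), fun i => 2*(i:ℤ) - 2*k + 1, fun x y hx hy => ?_⟩
  suffices h : ∃ j : ℕ, j < 2*k+1 ∧ ((x:ℤ)+y = 2*j ∨ (x:ℤ)-y = 2*j-2*k+1) by
    obtain ⟨j, hj, hor⟩ := h
    refine ⟨⟨j, hj⟩, ?_⟩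
    rcases hor with h | h
    · left; simpa using h
    · right; simpa using h
  rcases Nat.even_or_odd (x+y) with he | ho
  · have h2 : (x+y) % 2 = 0 := Nat.even_iff.mp he
    exact ⟨(x + y)/2, by omega, Or.inl (by push_cast; omega)⟩
  · have h2 : (x+y) % 2 = 1 := Nat.odd_iff.mp ho
    exact ⟨(x + 2*k - 1 - y)/2, by omega, Or.inr (by push_cast; omega)⟩

/-- Counting lemma for one parity class. `MS` is a set of missing sums of parity `c`,
`MD` a set of missing differences of parity `c`, such that no missing sum and missing
difference are realized by a common cell.  Then there is a threshold `M ≡ c (mod 2)` with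
`|MS| ≤ M + 2 - c` and `|MD| + M + 1` at most the total number of parity-`c` differences. -/
lemma alphaB_class_bound (n : ℕ) (c : ℤ) (hc : c = 0 ∨ c = 1)
    (MS MD : Finset ℤ)
    (hMS : ∀ s ∈ MS, 0 ≤ s ∧ s ≤ 2*(n:ℤ) - 2 ∧ s % 2 = c)
    (hMD : ∀ d ∈ MD, -((n:ℤ)-1) ≤ d ∧ d ≤ (n:ℤ)-1 ∧ d % 2 = c)
    (incomp : ∀ s ∈ MS, ∀ d ∈ MD,
      ¬(-s ≤ d ∧ d ≤ s ∧ s - (2*(n:ℤ)-2) ≤ d ∧ d ≤ 2*(n:ℤ)-2 - s)) :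
    ∃ M : ℤ, M % 2 = c % 2 ∧ (MS.card : ℤ) ≤ M + 2 - c ∧
      (MD.card : ℤ) + (M + 1) ≤
        (((Finset.Icc (-((n:ℤ)-1)) ((n:ℤ)-1)).filter (fun d => d % 2 = c)).card : ℤ) := by
  have hMDsub : MD ⊆ (Finset.Icc (-((n:ℤ)-1)) ((n:ℤ)-1)).filter (fun d => d % 2 = c) := by
    intro d hd
    obtain ⟨h1, h2, h3⟩ := hMD d hd
    simp only [mem_filter, mem_Icc]
    exact ⟨⟨h1, h2⟩, h3⟩
  rcases MS.eq_empty_or_nonempty with h | hne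
  · refine ⟨c - 2, by omega, by simp [h], ?_⟩
    have := card_le_card hMDsub
    omega
  obtain ⟨s₀, hs₀, hmax⟩ := MS.exists_max_image (fun s => min s (2*(n:ℤ)-2-s)) hne
  obtain ⟨h0, h2n, hpar⟩ := hMS s₀ hs₀
  set M : ℤ := min s₀ (2*(n:ℤ)-2-s₀) with hM
  have hM0 : 0 ≤ M := by omega
  have hMn : M ≤ (n:ℤ) - 1 := by omega
  have hMpar : M % 2 = c % 2 := by omega
  refine ⟨M, hMpar, ?_, ?_⟩
  · -- bound on the number of missing sums of parity `c`
    set Mc : ℤ := (M - c)/2 with hMc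
    have hsub : MS ⊆ (Finset.Icc (0:ℤ) Mc).image (fun j => 2*j+c) ∪
        (Finset.Icc (0:ℤ) Mc).image (fun j => 2*(n:ℤ)-2-c-2*j) := by
      intro s hs
      obtain ⟨hb0, hb1, hbp⟩ := hMS s hs
      have hm := hmax s hs
      simp only [mem_union, mem_image, mem_Icc]
      rcases (by omega : s ≤ M ∨ 2*(n:ℤ)-2-M ≤ s) with hcase | hcase
      · exact Or.inl ⟨(s-c)/2, by omega, by omega⟩
      · exact Or.inr ⟨(2*(n:ℤ)-2-c-s)/2, by omega, by omega⟩
    have h1 := card_le_card hsub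
    have h2 := card_union_le ((Finset.Icc (0:ℤ) Mc).image (fun j => 2*j+c))
      ((Finset.Icc (0:ℤ) Mc).image (fun j => 2*(n:ℤ)-2-c-2*j))
    have h3 : ((Finset.Icc (0:ℤ) Mc).image (fun j => 2*j+c)).card ≤ (Finset.Icc (0:ℤ) Mc).card :=
      card_image_le
    have h4 : ((Finset.Icc (0:ℤ) Mc).image (fun j => 2*(n:ℤ)-2-c-2*j)).card ≤
        (Finset.Icc (0:ℤ) Mc).card := card_image_le
    have h5 : (Finset.Icc (0:ℤ) Mc).card = (Mc + 1).toNat := Int.card_Icc 0 Mc |>.trans (by ring_nf)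
    omega
  · -- bound on the number of missing differences of parity `c`
    set L : Finset ℤ := (Finset.Icc (0:ℤ) M).image (fun j => 2*j - M) with hL
    have hLsub : L ⊆ (Finset.Icc (-((n:ℤ)-1)) ((n:ℤ)-1)).filter (fun d => d % 2 = c) := by
      intro d hd
      simp only [hL, mem_image, mem_Icc] at hd
      obtain ⟨j, hj, rfl⟩ := hd
      simp only [mem_filter, mem_Icc]
      omega
    have hdisj : Disjoint MD L := by
      rw [Finset.disjoint_left]
      intro d hdMD hdL
      simp only [hL, mem_image, mem_Icc] at hdL
      obtain ⟨j, hj, rfl⟩ := hdL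
      exact incomp s₀ hs₀ _ hdMD (by omega)
    have hLcard : L.card = (M+1).toNat := by
      rw [hL, card_image_of_injective _ (fun a b hab => by omega), Int.card_Icc]
      ring_nf
    have hunion : (MD ∪ L).card = MD.card + L.card := card_union_of_disjoint hdisj
    have hsub2 : MD ∪ L ⊆ (Finset.Icc (-((n:ℤ)-1)) ((n:ℤ)-1)).filter (fun d => d % 2 = c) :=
      union_subset hMDsub hLsub
    have := card_le_card hsub2
    omega

/-- Lower bound: any covering of the `n × n` board by `p` sum diagonals and `p` difference
diagonals satisfies `p ≥ n - 1`, and `p ≥ n` when `n` is odd. -/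
lemma alphaB_lower (n p : ℕ) (S D : Fin p → ℤ)
    (hcov : ∀ x y : ℕ, x < n → y < n → ∃ i : Fin p, (x:ℤ)+y = S i ∨ (x:ℤ)-y = D i) :
    n ≤ p + 1 ∧ (n % 2 = 1 → n ≤ p) := by
  rcases Nat.eq_zero_or_pos n with rfl | hn
  · simp
  classical
  set MSall : Finset ℤ := (Finset.Icc (0:ℤ) (2*(n:ℤ)-2)).filter (fun s => ∀ i, s ≠ S i)
    with hMSall
  set MDall : Finset ℤ := (Finset.Icc (-((n:ℤ)-1)) ((n:ℤ)-1)).filter (fun d => ∀ i, d ≠ D i)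
    with hMDall
  -- at least `2n - 1 - p` sums are missing
  have hF1 : 2*n - 1 ≤ p + MSall.card := by
    have hsub : Finset.Icc (0:ℤ) (2*(n:ℤ)-2) ⊆ MSall ∪ Finset.univ.image S := by
      intro s hs
      by_cases h : ∀ i, s ≠ S i
      · exact mem_union_left _ (mem_filter.mpr ⟨hs, h⟩)
      · push_neg at h
        obtain ⟨i, hi⟩ := h
        exact mem_union_right _ (mem_image.mpr ⟨i, mem_univ i, hi.symm⟩)
    have h1 := card_le_card hsub
    have h2 := card_union_le MSall (Finset.univ.image S)
    have h3 : (Finset.univ.image S).card ≤ p := by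
      refine le_trans card_image_le ?_
      simp
    have h4 : (Finset.Icc (0:ℤ) (2*(n:ℤ)-2)).card = 2*n - 1 := by
      rw [Int.card_Icc]; omega
    omega
  -- at least `2n - 1 - p` differences are missing
  have hF2 : 2*n - 1 ≤ p + MDall.card := by
    have hsub : Finset.Icc (-((n:ℤ)-1)) ((n:ℤ)-1) ⊆ MDall ∪ Finset.univ.image D := by
      intro d hd
      by_cases h : ∀ i, d ≠ D i
      · exact mem_union_left _ (mem_filter.mpr ⟨hd, h⟩)
      · push_neg at h
        obtain ⟨i, hi⟩ := h
        exact mem_union_right _ (mem_image.mpr ⟨i, mem_univ i, hi.symm⟩)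
    have h1 := card_le_card hsub
    have h2 := card_union_le MDall (Finset.univ.image D)
    have h3 : (Finset.univ.image D).card ≤ p := by
      refine le_trans card_image_le ?_
      simp
    have h4 : (Finset.Icc (-((n:ℤ)-1)) ((n:ℤ)-1)).card = 2*n - 1 := by
      rw [Int.card_Icc]; omega
    omega
  -- a missing sum and a missing difference are never realized by a common cell
  have hinc : ∀ s ∈ MSall, ∀ d ∈ MDall, s % 2 = d % 2 →
      ¬(-s ≤ d ∧ d ≤ s ∧ s - (2*(n:ℤ)-2) ≤ d ∧ d ≤ 2*(n:ℤ)-2 - s) := by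
    rintro s hs d hd hpar ⟨h1, h2, h3, h4⟩
    obtain ⟨x', hx'⟩ : ∃ x' : ℤ, s + d = 2*x' := ⟨(s+d)/2, by omega⟩
    obtain ⟨y', hy'⟩ : ∃ y' : ℤ, s - d = 2*y' := ⟨(s-d)/2, by omega⟩
    have hsmem := mem_filter.mp hs
    have hdmem := mem_filter.mp hd
    have hsIcc := mem_Icc.mp hsmem.1
    have hdIcc := mem_Icc.mp hdmem.1
    obtain ⟨i, hi | hi⟩ := hcov x'.toNat y'.toNat (by omega) (by omega)
    · have hxx : ((x'.toNat : ℕ) : ℤ) = x' := Int.toNat_of_nonneg (by omega)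
      have hyy : ((y'.toNat : ℕ) : ℤ) = y' := Int.toNat_of_nonneg (by omega)
      exact hsmem.2 i (by omega)
    · have hxx : ((x'.toNat : ℕ) : ℤ) = x' := Int.toNat_of_nonneg (by omega)
      have hyy : ((y'.toNat : ℕ) : ℤ) = y' := Int.toNat_of_nonneg (by omega)
      exact hdmem.2 i (by omega)
  -- apply the class bound to each parity class
  have key : ∀ c : ℤ, c = 0 ∨ c = 1 →
      ∃ M : ℤ, M % 2 = c % 2 ∧ ((MSall.filter (fun s => s % 2 = c)).card : ℤ) ≤ M + 2 - c ∧
      ((MDall.filter (fun d => d % 2 = c)).card : ℤ) + (M + 1) ≤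
        (((Finset.Icc (-((n:ℤ)-1)) ((n:ℤ)-1)).filter (fun d => d % 2 = c)).card : ℤ) := by
    intro c hc
    refine alphaB_class_bound n c hc _ _ ?_ ?_ ?_
    · intro s hs
      have h := mem_filter.mp hs
      have h2 := mem_Icc.mp (mem_filter.mp h.1).1
      exact ⟨h2.1, h2.2, h.2⟩
    · intro d hd
      have h := mem_filter.mp hd
      have h2 := mem_Icc.mp (mem_filter.mp h.1).1
      exact ⟨h2.1, h2.2, h.2⟩
    · intro s hs d hd
      exact hinc s (mem_filter.mp hs).1 d (mem_filter.mp hd).1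
        (by rw [(mem_filter.mp hs).2, (mem_filter.mp hd).2])
  obtain ⟨M0, hM0p, hA0, hB0⟩ := key 0 (Or.inl rfl)
  obtain ⟨M1, hM1p, hA1, hB1⟩ := key 1 (Or.inr rfl)
  -- parity decompositions of the various sets
  have hSsplit : (MSall.filter (fun s => s % 2 = 0)).card
      + (MSall.filter (fun s => s % 2 = 1)).card = MSall.card := by
    rw [show (MSall.filter (fun s => s % 2 = 1)) = MSall.filter (fun s => ¬ (s % 2 = 0)) from
      filter_congr (fun x _ => by constructor <;> intro h <;> omega)]
    exact Finset.card_filter_add_card_filter_not _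
  have hDsplit : (MDall.filter (fun d => d % 2 = 0)).card
      + (MDall.filter (fun d => d % 2 = 1)).card = MDall.card := by
    rw [show (MDall.filter (fun d => d % 2 = 1)) = MDall.filter (fun d => ¬ (d % 2 = 0)) from
      filter_congr (fun x _ => by constructor <;> intro h <;> omega)]
    exact Finset.card_filter_add_card_filter_not _
  have hTsplit : ((Finset.Icc (-((n:ℤ)-1)) ((n:ℤ)-1)).filter (fun d => d % 2 = 0)).card
      + ((Finset.Icc (-((n:ℤ)-1)) ((n:ℤ)-1)).filter (fun d => d % 2 = 1)).card = 2*n - 1 := by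
    rw [show ((Finset.Icc (-((n:ℤ)-1)) ((n:ℤ)-1)).filter (fun d => d % 2 = 1))
        = (Finset.Icc (-((n:ℤ)-1)) ((n:ℤ)-1)).filter (fun d => ¬ (d % 2 = 0)) from
      filter_congr (fun x _ => by constructor <;> intro h <;> omega)]
    rw [Finset.card_filter_add_card_filter_not _, Int.card_Icc]
    omega
  omega

end AlphaBAux

/-- `alphaB m n` is the least `p` such that `p` sum diagonals and `p` difference
diagonals cover the `m × n` board. -/
noncomputable def alphaB (m n : ℕ) : ℕ :=
  sInf {p : ℕ | ∃ S D : Fin p → ℤ,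
    ∀ x y : ℕ, x < m → y < n → ∃ i : Fin p, (x : ℤ) + y = S i ∨ (x : ℤ) - y = D i}

/-- `α(B_{n×n}) = 2k-1` if `n = 2k` and `α(B_{n×n}) = 2k+1` if `n = 2k+1`. -/
theorem alphaB_square (k : ℕ) :
    alphaB (2 * k) (2 * k) = 2 * k - 1 ∧ alphaB (2 * k + 1) (2 * k + 1) = 2 * k + 1 := by
  constructor
  · apply le_antisymm
    · exact Nat.sInf_le (alphaB_upper_even k)
    · refine le_csInf ⟨2*k-1, alphaB_upper_even k⟩ ?_
      rintro q ⟨S, D, h⟩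
      have := (alphaB_lower (2*k) q S D h).1
      omega
  · apply le_antisymm
    · exact Nat.sInf_le (alphaB_upper_odd k)
    · refine le_csInf ⟨2*k+1, alphaB_upper_odd k⟩ ?_
      rintro q ⟨S, D, h⟩
      have := (alphaB_lower (2*k+1) q S D h).2 (by omega)
      omega
end

section
/- For all natural numbers n: β(Q_{n×n}) = 2k if n = 4k, and β(Q_{n×n}) = 2k+1 if n ∈ {4k+1, 4k+2, 4k+3}. -/
open Finset

lemma pair_card {W U V : Finset ℤ} {c : ℤ} (hU : U ⊆ W) (hV : V ⊆ W)
    (hUc : ∀ d ∈ U, c ≤ d) (hVc : ∀ d ∈ V, d ≤ c) :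
    U.card + V.card ≤ W.card + 1 := by
  have hUV : U ∩ V ⊆ {c} := by
    intro d hd
    simp only [Finset.mem_inter] at hd
    have h1 := hUc d hd.1
    have h2 := hVc d hd.2
    simp only [Finset.mem_singleton]
    omega
  have key := Finset.card_union_add_card_inter U V
  have h1 := Finset.card_le_card (Finset.union_subset hU hV)
  have h2 := Finset.card_le_card hUV
  simp only [Finset.card_singleton] at h2
  omega

section
variable (A B S D : Finset ℤ) (hA : A.Nonempty) (hB : B.Nonempty)

-- inequality (I): a₁ + b₂ ≤ S.card + 1
lemma ineq_I :
    (A.filter (fun x => x + B.max' hB ∈ S)).card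
      + (B.filter (fun y => A.min' hA + y ∈ S)).card ≤ S.card + 1 := by
  have h := pair_card (W := S)
    (U := (A.filter (fun x => x + B.max' hB ∈ S)).image (fun x => x + B.max' hB))
    (V := (B.filter (fun y => A.min' hA + y ∈ S)).image (fun y => A.min' hA + y))
    (c := A.min' hA + B.max' hB) ?_ ?_ ?_ ?_
  · rwa [Finset.card_image_of_injective _ (add_left_injective _),
      Finset.card_image_of_injective _ (add_right_injective _)] at h
  · intro s hs
    simp only [Finset.mem_image, Finset.mem_filter] at hs
    obtain ⟨x, ⟨-, h⟩, rfl⟩ := hs; exact h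
  · intro s hs
    simp only [Finset.mem_image, Finset.mem_filter] at hs
    obtain ⟨y, ⟨-, h⟩, rfl⟩ := hs; exact h
  · intro d hd
    simp only [Finset.mem_image, Finset.mem_filter] at hd
    obtain ⟨x, ⟨hx, -⟩, rfl⟩ := hd
    have := A.min'_le x hx; omega
  · intro d hd
    simp only [Finset.mem_image, Finset.mem_filter] at hd
    obtain ⟨y, ⟨hy, -⟩, rfl⟩ := hd
    have := B.le_max' y hy; omega

-- inequality (II): a₂ + b₁ ≤ S.card + 1
lemma ineq_II :
    (A.filter (fun x => x + B.min' hB ∈ S)).card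
      + (B.filter (fun y => A.max' hA + y ∈ S)).card ≤ S.card + 1 := by
  have h := pair_card (W := S)
    (U := (B.filter (fun y => A.max' hA + y ∈ S)).image (fun y => A.max' hA + y))
    (V := (A.filter (fun x => x + B.min' hB ∈ S)).image (fun x => x + B.min' hB))
    (c := A.max' hA + B.min' hB) ?_ ?_ ?_ ?_
  · rw [Finset.card_image_of_injective _ (add_right_injective _),
      Finset.card_image_of_injective _ (add_left_injective _)] at h
    omega
  · intro s hs
    simp only [Finset.mem_image, Finset.mem_filter] at hs
    obtain ⟨y, ⟨-, h⟩, rfl⟩ := hs; exact h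
  · intro s hs
    simp only [Finset.mem_image, Finset.mem_filter] at hs
    obtain ⟨x, ⟨-, h⟩, rfl⟩ := hs; exact h
  · intro d hd
    simp only [Finset.mem_image, Finset.mem_filter] at hd
    obtain ⟨y, ⟨hy, -⟩, rfl⟩ := hd
    have := B.min'_le y hy; omega
  · intro d hd
    simp only [Finset.mem_image, Finset.mem_filter] at hd
    obtain ⟨x, ⟨hx, -⟩, rfl⟩ := hd
    have := A.le_max' x hx; omega

-- inequality (III)
lemma ineq_III (hcov : ∀ x ∈ A, ∀ y ∈ B, x + y ∈ S ∨ x - y ∈ D) :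
    (B.filter (fun y => ¬ (A.max' hA + y ∈ S))).card
      + (A.filter (fun x => ¬ (x + B.max' hB ∈ S))).card ≤ D.card + 1 := by
  have h := pair_card (W := D)
    (U := (B.filter (fun y => ¬ (A.max' hA + y ∈ S))).image (fun y => A.max' hA - y))
    (V := (A.filter (fun x => ¬ (x + B.max' hB ∈ S))).image (fun x => x - B.max' hB))
    (c := A.max' hA - B.max' hB) ?_ ?_ ?_ ?_
  · rwa [Finset.card_image_of_injective _ sub_right_injective,
      Finset.card_image_of_injective _ sub_left_injective] at h
  · intro d hd
    simp only [Finset.mem_image, Finset.mem_filter] at hd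
    obtain ⟨y, ⟨hy, h⟩, rfl⟩ := hd
    rcases hcov _ (A.max'_mem hA) y hy with h' | h'
    · exact absurd h' h
    · exact h'
  · intro d hd
    simp only [Finset.mem_image, Finset.mem_filter] at hd
    obtain ⟨x, ⟨hx, h⟩, rfl⟩ := hd
    rcases hcov x hx _ (B.max'_mem hB) with h' | h'
    · exact absurd h' h
    · exact h'
  · intro d hd
    simp only [Finset.mem_image, Finset.mem_filter] at hd
    obtain ⟨y, ⟨hy, -⟩, rfl⟩ := hd
    have := B.le_max' y hy; omega
  · intro d hd
    simp only [Finset.mem_image, Finset.mem_filter] at hd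
    obtain ⟨x, ⟨hx, -⟩, rfl⟩ := hd
    have := A.le_max' x hx; omega

-- inequality (IV)
lemma ineq_IV (hcov : ∀ x ∈ A, ∀ y ∈ B, x + y ∈ S ∨ x - y ∈ D) :
    (A.filter (fun x => ¬ (x + B.min' hB ∈ S))).card
      + (B.filter (fun y => ¬ (A.min' hA + y ∈ S))).card ≤ D.card + 1 := by
  have h := pair_card (W := D)
    (U := (A.filter (fun x => ¬ (x + B.min' hB ∈ S))).image (fun x => x - B.min' hB))
    (V := (B.filter (fun y => ¬ (A.min' hA + y ∈ S))).image (fun y => A.min' hA - y))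
    (c := A.min' hA - B.min' hB) ?_ ?_ ?_ ?_
  · rwa [Finset.card_image_of_injective _ sub_left_injective,
      Finset.card_image_of_injective _ sub_right_injective] at h
  · intro d hd
    simp only [Finset.mem_image, Finset.mem_filter] at hd
    obtain ⟨x, ⟨hx, h⟩, rfl⟩ := hd
    rcases hcov x hx _ (B.min'_mem hB) with h' | h'
    · exact absurd h' h
    · exact h'
  · intro d hd
    simp only [Finset.mem_image, Finset.mem_filter] at hd
    obtain ⟨y, ⟨hy, h⟩, rfl⟩ := hd
    rcases hcov _ (A.min'_mem hA) y hy with h' | h'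
    · exact absurd h' h
    · exact h'
  · intro d hd
    simp only [Finset.mem_image, Finset.mem_filter] at hd
    obtain ⟨x, ⟨hx, -⟩, rfl⟩ := hd
    have := A.min'_le x hx; omega
  · intro d hd
    simp only [Finset.mem_image, Finset.mem_filter] at hd
    obtain ⟨y, ⟨hy, -⟩, rfl⟩ := hd
    have := B.min'_le y hy; omega

include hA hB in
lemma L1 (hcov : ∀ x ∈ A, ∀ y ∈ B, x + y ∈ S ∨ x - y ∈ D) :
    A.card + B.card ≤ S.card + D.card + 2 := by
  have h1 := ineq_I A B S hA hB
  have h2 := ineq_II A B S hA hB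
  have h3 := ineq_III A B S D hA hB hcov
  have h4 := ineq_IV A B S D hA hB hcov
  have e1 : (A.filter (fun x => x + B.max' hB ∈ S)).card
      + (A.filter (fun x => ¬(x + B.max' hB ∈ S))).card = A.card :=
    Finset.card_filter_add_card_filter_not _
  have e2 : (A.filter (fun x => x + B.min' hB ∈ S)).card
      + (A.filter (fun x => ¬(x + B.min' hB ∈ S))).card = A.card :=
    Finset.card_filter_add_card_filter_not _
  have e3 : (B.filter (fun y => A.max' hA + y ∈ S)).card
      + (B.filter (fun y => ¬(A.max' hA + y ∈ S))).card = B.card :=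
    Finset.card_filter_add_card_filter_not _
  have e4 : (B.filter (fun y => A.min' hA + y ∈ S)).card
      + (B.filter (fun y => ¬(A.min' hA + y ∈ S))).card = B.card :=
    Finset.card_filter_add_card_filter_not _
  omega

include hA hB in
lemma L2aux (m : ℕ) (hAm : A.card = m) (hBm : B.card = m)
    (hcov : ∀ x ∈ A, ∀ y ∈ B, x + y ∈ S ∨ x - y ∈ D)
    (hS : S.card + 1 ≤ m) (hD : D.card + 1 ≤ m)
    (huv : A.max' hA - B.max' hB ≤ A.min' hA - B.min' hB) : 2 ∣ m := by
  have h1 := ineq_I A B S hA hB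
  have h2 := ineq_II A B S hA hB
  have h3 := ineq_III A B S D hA hB hcov
  have h4 := ineq_IV A B S D hA hB hcov
  have e1 : (A.filter (fun x => x + B.max' hB ∈ S)).card
      + (A.filter (fun x => ¬(x + B.max' hB ∈ S))).card = A.card :=
    Finset.card_filter_add_card_filter_not _
  have e2 : (A.filter (fun x => x + B.min' hB ∈ S)).card
      + (A.filter (fun x => ¬(x + B.min' hB ∈ S))).card = A.card :=
    Finset.card_filter_add_card_filter_not _
  have e3 : (B.filter (fun y => A.max' hA + y ∈ S)).card
      + (B.filter (fun y => ¬(A.max' hA + y ∈ S))).card = B.card :=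
    Finset.card_filter_add_card_filter_not _
  have e4 : (B.filter (fun y => A.min' hA + y ∈ S)).card
      + (B.filter (fun y => ¬(A.min' hA + y ∈ S))).card = B.card :=
    Finset.card_filter_add_card_filter_not _
  -- D-decomposition
  have hU3 : (B.filter (fun y => ¬(A.max' hA + y ∈ S))).image (fun y => A.max' hA - y) ⊆ D := by
    intro d hd
    simp only [Finset.mem_image, Finset.mem_filter] at hd
    obtain ⟨y, ⟨hy, h⟩, rfl⟩ := hd
    rcases hcov _ (A.max'_mem hA) y hy with h' | h'
    · exact absurd h' h
    · exact h'
  have hV3 : (A.filter (fun x => ¬(x + B.max' hB ∈ S))).image (fun x => x - B.max' hB) ⊆ D := by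
    intro d hd
    simp only [Finset.mem_image, Finset.mem_filter] at hd
    obtain ⟨x, ⟨hx, h⟩, rfl⟩ := hd
    rcases hcov x hx _ (B.max'_mem hB) with h' | h'
    · exact absurd h' h
    · exact h'
  have hU3c : ((B.filter (fun y => ¬(A.max' hA + y ∈ S))).image (fun y => A.max' hA - y)).card
      = (B.filter (fun y => ¬(A.max' hA + y ∈ S))).card :=
    Finset.card_image_of_injective _ sub_right_injective
  have hV3c : ((A.filter (fun x => ¬(x + B.max' hB ∈ S))).image (fun x => x - B.max' hB)).card
      = (A.filter (fun x => ¬(x + B.max' hB ∈ S))).card :=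
    Finset.card_image_of_injective _ sub_left_injective
  have hint3 : ((B.filter (fun y => ¬(A.max' hA + y ∈ S))).image (fun y => A.max' hA - y))
      ∩ ((A.filter (fun x => ¬(x + B.max' hB ∈ S))).image (fun x => x - B.max' hB))
      ⊆ {A.max' hA - B.max' hB} := by
    intro d hd
    simp only [Finset.mem_inter, Finset.mem_image, Finset.mem_filter] at hd
    obtain ⟨⟨y, ⟨hy, -⟩, hdy⟩, ⟨x, ⟨hx, -⟩, hdx⟩⟩ := hd
    have := B.le_max' y hy
    have := A.le_max' x hx
    simp only [Finset.mem_singleton]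
    omega
  have hcui3 := Finset.card_union_add_card_inter
    ((B.filter (fun y => ¬(A.max' hA + y ∈ S))).image (fun y => A.max' hA - y))
    ((A.filter (fun x => ¬(x + B.max' hB ∈ S))).image (fun x => x - B.max' hB))
  have hint3le : (((B.filter (fun y => ¬(A.max' hA + y ∈ S))).image (fun y => A.max' hA - y))
      ∩ ((A.filter (fun x => ¬(x + B.max' hB ∈ S))).image (fun x => x - B.max' hB))).card ≤ 1 := by
    simpa using Finset.card_le_card hint3
  have hDeq : ((B.filter (fun y => ¬(A.max' hA + y ∈ S))).image (fun y => A.max' hA - y))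
      ∪ ((A.filter (fun x => ¬(x + B.max' hB ∈ S))).image (fun x => x - B.max' hB)) = D := by
    apply Finset.eq_of_subset_of_card_le (Finset.union_subset hU3 hV3)
    omega
  have hDcard : (((B.filter (fun y => ¬(A.max' hA + y ∈ S))).image (fun y => A.max' hA - y))
      ∪ ((A.filter (fun x => ¬(x + B.max' hB ∈ S))).image (fun x => x - B.max' hB))).card
      = D.card := by rw [hDeq]
  have hbe1 : ¬ (A.max' hA + B.max' hB ∈ S) := by
    have hint_pos : 0 < (((B.filter (fun y => ¬(A.max' hA + y ∈ S))).image (fun y => A.max' hA - y))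
        ∩ ((A.filter (fun x => ¬(x + B.max' hB ∈ S))).image (fun x => x - B.max' hB))).card := by
      omega
    obtain ⟨d, hd⟩ := Finset.card_pos.mp hint_pos
    have hdc := hint3 hd
    simp only [Finset.mem_singleton] at hdc
    subst hdc
    have hd1 := (Finset.mem_inter.mp hd).1
    simp only [Finset.mem_image, Finset.mem_filter] at hd1
    obtain ⟨y, ⟨hy, hyn⟩, hdy⟩ := hd1
    have : y = B.max' hB := by omega
    rwa [this] at hyn
  -- S-decomposition
  have hU1 : (A.filter (fun x => x + B.max' hB ∈ S)).image (fun x => x + B.max' hB) ⊆ S := by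
    intro s hs
    simp only [Finset.mem_image, Finset.mem_filter] at hs
    obtain ⟨x, ⟨-, h⟩, rfl⟩ := hs; exact h
  have hV1 : (B.filter (fun y => A.min' hA + y ∈ S)).image (fun y => A.min' hA + y) ⊆ S := by
    intro s hs
    simp only [Finset.mem_image, Finset.mem_filter] at hs
    obtain ⟨y, ⟨-, h⟩, rfl⟩ := hs; exact h
  have hU1c : ((A.filter (fun x => x + B.max' hB ∈ S)).image (fun x => x + B.max' hB)).card
      = (A.filter (fun x => x + B.max' hB ∈ S)).card :=
    Finset.card_image_of_injective _ (add_left_injective _)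
  have hV1c : ((B.filter (fun y => A.min' hA + y ∈ S)).image (fun y => A.min' hA + y)).card
      = (B.filter (fun y => A.min' hA + y ∈ S)).card :=
    Finset.card_image_of_injective _ (add_right_injective _)
  have hint1 : ((A.filter (fun x => x + B.max' hB ∈ S)).image (fun x => x + B.max' hB))
      ∩ ((B.filter (fun y => A.min' hA + y ∈ S)).image (fun y => A.min' hA + y))
      ⊆ {A.min' hA + B.max' hB} := by
    intro d hd
    simp only [Finset.mem_inter, Finset.mem_image, Finset.mem_filter] at hd
    obtain ⟨⟨x, ⟨hx, -⟩, hdx⟩, ⟨y, ⟨hy, -⟩, hdy⟩⟩ := hd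
    have := A.min'_le x hx
    have := B.le_max' y hy
    simp only [Finset.mem_singleton]
    omega
  have hcui1 := Finset.card_union_add_card_inter
    ((A.filter (fun x => x + B.max' hB ∈ S)).image (fun x => x + B.max' hB))
    ((B.filter (fun y => A.min' hA + y ∈ S)).image (fun y => A.min' hA + y))
  have hint1le : (((A.filter (fun x => x + B.max' hB ∈ S)).image (fun x => x + B.max' hB))
      ∩ ((B.filter (fun y => A.min' hA + y ∈ S)).image (fun y => A.min' hA + y))).card ≤ 1 := by
    simpa using Finset.card_le_card hint1
  have hSeq : ((A.filter (fun x => x + B.max' hB ∈ S)).image (fun x => x + B.max' hB))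
      ∪ ((B.filter (fun y => A.min' hA + y ∈ S)).image (fun y => A.min' hA + y)) = S := by
    apply Finset.eq_of_subset_of_card_le (Finset.union_subset hU1 hV1)
    omega
  have hScard : (((A.filter (fun x => x + B.max' hB ∈ S)).image (fun x => x + B.max' hB))
      ∪ ((B.filter (fun y => A.min' hA + y ∈ S)).image (fun y => A.min' hA + y))).card
      = S.card := by rw [hSeq]
  have hbe2 : A.min' hA + B.max' hB ∈ S := by
    have hint_pos : 0 < (((A.filter (fun x => x + B.max' hB ∈ S)).image (fun x => x + B.max' hB))
        ∩ ((B.filter (fun y => A.min' hA + y ∈ S)).image (fun y => A.min' hA + y))).card := by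
      omega
    obtain ⟨d, hd⟩ := Finset.card_pos.mp hint_pos
    have hdc := hint1 hd
    simp only [Finset.mem_singleton] at hdc
    subst hdc
    have hd1 := (Finset.mem_inter.mp hd).2
    simp only [Finset.mem_image, Finset.mem_filter] at hd1
    obtain ⟨y, ⟨hy, hyn⟩, hdy⟩ := hd1
    have : y = B.max' hB := by omega
    rwa [this] at hyn
  -- claim 2 : a₂ ≤ b₂
  have claim2 : (A.filter (fun x => x + B.min' hB ∈ S)).card
      ≤ (B.filter (fun y => A.min' hA + y ∈ S)).card := by
    have himg : (A.filter (fun x => x + B.min' hB ∈ S)).image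
        (fun x => x + B.min' hB - A.min' hA) ⊆ B.filter (fun y => A.min' hA + y ∈ S) := by
      intro z hz
      simp only [Finset.mem_image, Finset.mem_filter] at hz
      obtain ⟨x, ⟨hxA, hxS⟩, rfl⟩ := hz
      have hmem : x + B.min' hB ∈
          ((A.filter (fun x => x + B.max' hB ∈ S)).image (fun x => x + B.max' hB))
          ∪ ((B.filter (fun y => A.min' hA + y ∈ S)).image (fun y => A.min' hA + y)) := by
        rw [hSeq]; exact hxS
      rcases Finset.mem_union.mp hmem with hm | hm
      · simp only [Finset.mem_image, Finset.mem_filter] at hm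
        obtain ⟨x', ⟨hx'A, -⟩, hx'⟩ := hm
        have hxa := A.le_max' x hxA
        have hxa' := A.min'_le x' hx'A
        have hz : x + B.min' hB - A.min' hA = B.max' hB := by omega
        rw [hz]
        simp only [Finset.mem_filter]
        exact ⟨B.max'_mem hB, hbe2⟩
      · simp only [Finset.mem_image, Finset.mem_filter] at hm
        obtain ⟨y, ⟨hyB, hyS⟩, hy⟩ := hm
        have hz : x + B.min' hB - A.min' hA = y := by omega
        rw [hz]
        simp only [Finset.mem_filter]
        exact ⟨hyB, hyS⟩
    have hinj : ((A.filter (fun x => x + B.min' hB ∈ S)).image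
        (fun x => x + B.min' hB - A.min' hA)).card
        = (A.filter (fun x => x + B.min' hB ∈ S)).card :=
      Finset.card_image_of_injective _ (fun x y h => by omega)
    have := Finset.card_le_card himg
    omega
  -- claim 1 : b₁ ≤ a₂ (via complements)
  have claim1 : (A.filter (fun x => ¬(x + B.min' hB ∈ S))).card
      ≤ (B.filter (fun y => ¬(A.max' hA + y ∈ S))).card := by
    have himg : (A.filter (fun x => ¬(x + B.min' hB ∈ S))).image
        (fun x => A.max' hA - (x - B.min' hB)) ⊆ B.filter (fun y => ¬(A.max' hA + y ∈ S)) := by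
      intro z hz
      simp only [Finset.mem_image, Finset.mem_filter] at hz
      obtain ⟨x, ⟨hxA, hxS⟩, rfl⟩ := hz
      have hxd : x - B.min' hB ∈ D := by
        rcases hcov x hxA _ (B.min'_mem hB) with h' | h'
        · exact absurd h' hxS
        · exact h'
      have hmem : x - B.min' hB ∈
          ((B.filter (fun y => ¬(A.max' hA + y ∈ S))).image (fun y => A.max' hA - y))
          ∪ ((A.filter (fun x => ¬(x + B.max' hB ∈ S))).image (fun x => x - B.max' hB)) := by
        rw [hDeq]; exact hxd
      rcases Finset.mem_union.mp hmem with hm | hm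
      · simp only [Finset.mem_image, Finset.mem_filter] at hm
        obtain ⟨y, ⟨hyB, hyS⟩, hy⟩ := hm
        have hz : A.max' hA - (x - B.min' hB) = y := by omega
        rw [hz]
        simp only [Finset.mem_filter]
        exact ⟨hyB, hyS⟩
      · simp only [Finset.mem_image, Finset.mem_filter] at hm
        obtain ⟨x', ⟨hx'A, -⟩, hx'⟩ := hm
        have hxa := A.min'_le x hxA
        have hxa' := A.le_max' x' hx'A
        have hz : A.max' hA - (x - B.min' hB) = B.max' hB := by omega
        rw [hz]
        simp only [Finset.mem_filter]
        exact ⟨B.max'_mem hB, hbe1⟩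
    have hinj : ((A.filter (fun x => ¬(x + B.min' hB ∈ S))).image
        (fun x => A.max' hA - (x - B.min' hB))).card
        = (A.filter (fun x => ¬(x + B.min' hB ∈ S))).card :=
      Finset.card_image_of_injective _ (fun x y h => by omega)
    have := Finset.card_le_card himg
    omega
  exact ⟨(A.filter (fun x => x + B.min' hB ∈ S)).card, by omega⟩

include hA hB in
lemma L2 (m : ℕ) (hAm : A.card = m) (hBm : B.card = m)
    (hcov : ∀ x ∈ A, ∀ y ∈ B, x + y ∈ S ∨ x - y ∈ D)
    (hS : S.card + 1 ≤ m) (hD : D.card + 1 ≤ m) (hm : m % 2 = 1) : False := by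
  rcases le_total (A.max' hA - B.max' hB) (A.min' hA - B.min' hB) with h | h
  · have := L2aux A B S D hA hB m hAm hBm hcov hS hD h
    omega
  · have hcov' : ∀ y ∈ B, ∀ x ∈ A, y + x ∈ S ∨ y - x ∈ D.image (fun d => -d) := by
      intro y hy x hx
      rcases hcov x hx y hy with h' | h'
      · left; rwa [add_comm]
      · right
        simp only [Finset.mem_image]
        exact ⟨x - y, h', by ring⟩
    have hDc : (D.image (fun d => -d)).card = D.card :=
      Finset.card_image_of_injective _ neg_injective
    have := L2aux B A S (D.image (fun d => -d)) hB hA m hBm hAm hcov'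
      hS (by omega) (by omega)
    omega

end

lemma lower (n p : ℕ) (R C : Fin p → ℕ) (S D : Fin p → ℤ)
    (h : ∀ x y : ℕ, x < n → y < n →
      ∃ i : Fin p, y = R i ∨ x = C i ∨ (x : ℤ) + y = S i ∨ (x : ℤ) - y = D i) :
    2*n ≤ 4*p + 2 ∧ (n % 4 = 1 → n ≤ 2*p) := by
  classical
  have hSfc : (Finset.univ.image S).card ≤ p := by
    calc (Finset.univ.image S).card ≤ (Finset.univ : Finset (Fin p)).card :=
          Finset.card_image_le
    _ = p := by simp
  have hDfc : (Finset.univ.image D).card ≤ p := by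
    calc (Finset.univ.image D).card ≤ (Finset.univ : Finset (Fin p)).card :=
          Finset.card_image_le
    _ = p := by simp
  have hAnc : n ≤ ((Finset.range n).filter (fun x => ∀ i, x ≠ C i)).card + p := by
    have hid : ((Finset.range n).filter (fun x => ∀ i, x ≠ C i)).card
        + ((Finset.range n).filter (fun x => ¬ ∀ i, x ≠ C i)).card
        = (Finset.range n).card :=
      Finset.card_filter_add_card_filter_not _
    have hsub : (Finset.range n).filter (fun x => ¬ ∀ i, x ≠ C i) ⊆ Finset.univ.image C := by
      intro x hx
      simp only [Finset.mem_filter, not_forall, not_not] at hx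
      obtain ⟨-, i, rfl⟩ := hx
      exact Finset.mem_image.mpr ⟨i, Finset.mem_univ i, rfl⟩
    have h1 := Finset.card_le_card hsub
    have h2 : (Finset.univ.image C).card ≤ p := by
      calc (Finset.univ.image C).card ≤ (Finset.univ : Finset (Fin p)).card :=
            Finset.card_image_le
      _ = p := by simp
    have h3 : (Finset.range n).card = n := Finset.card_range n
    omega
  have hBnc : n ≤ ((Finset.range n).filter (fun y => ∀ i, y ≠ R i)).card + p := by
    have hid : ((Finset.range n).filter (fun y => ∀ i, y ≠ R i)).card
        + ((Finset.range n).filter (fun y => ¬ ∀ i, y ≠ R i)).card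
        = (Finset.range n).card :=
      Finset.card_filter_add_card_filter_not _
    have hsub : (Finset.range n).filter (fun y => ¬ ∀ i, y ≠ R i) ⊆ Finset.univ.image R := by
      intro y hy
      simp only [Finset.mem_filter, not_forall, not_not] at hy
      obtain ⟨-, i, rfl⟩ := hy
      exact Finset.mem_image.mpr ⟨i, Finset.mem_univ i, rfl⟩
    have h1 := Finset.card_le_card hsub
    have h2 : (Finset.univ.image R).card ≤ p := by
      calc (Finset.univ.image R).card ≤ (Finset.univ : Finset (Fin p)).card :=
            Finset.card_image_le
      _ = p := by simp
    have h3 : (Finset.range n).card = n := Finset.card_range n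
    omega
  have hAzc : (((Finset.range n).filter (fun x => ∀ i, x ≠ C i)).image
      (fun x : ℕ => (x : ℤ))).card = ((Finset.range n).filter (fun x => ∀ i, x ≠ C i)).card :=
    Finset.card_image_of_injective _ (fun a b hab => by exact_mod_cast hab)
  have hBzc : (((Finset.range n).filter (fun y => ∀ i, y ≠ R i)).image
      (fun y : ℕ => (y : ℤ))).card = ((Finset.range n).filter (fun y => ∀ i, y ≠ R i)).card :=
    Finset.card_image_of_injective _ (fun a b hab => by exact_mod_cast hab)
  have hcov : ∀ a ∈ ((Finset.range n).filter (fun x => ∀ i, x ≠ C i)).image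
        (fun x : ℕ => (x : ℤ)),
      ∀ b ∈ ((Finset.range n).filter (fun y => ∀ i, y ≠ R i)).image (fun y : ℕ => (y : ℤ)),
      a + b ∈ Finset.univ.image S ∨ a - b ∈ Finset.univ.image D := by
    intro a ha b hb
    obtain ⟨x, hx, rfl⟩ := Finset.mem_image.mp ha
    obtain ⟨y, hy, rfl⟩ := Finset.mem_image.mp hb
    simp only [Finset.mem_filter, Finset.mem_range] at hx hy
    obtain ⟨i, hi | hi | hi | hi⟩ := h x y hx.1 hy.1
    · exact absurd hi (hy.2 i)
    · exact absurd hi (hx.2 i)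
    · left; rw [hi]; exact Finset.mem_image.mpr ⟨i, Finset.mem_univ i, rfl⟩
    · right; rw [hi]; exact Finset.mem_image.mpr ⟨i, Finset.mem_univ i, rfl⟩
  have part1 : 2*n ≤ 4*p + 2 := by
    by_contra hcon
    have hAne : (((Finset.range n).filter (fun x => ∀ i, x ≠ C i)).image
        (fun x : ℕ => (x : ℤ))).Nonempty := Finset.card_pos.mp (by omega)
    have hBne : (((Finset.range n).filter (fun y => ∀ i, y ≠ R i)).image
        (fun y : ℕ => (y : ℤ))).Nonempty := Finset.card_pos.mp (by omega)
    have := L1 _ _ _ _ hAne hBne hcov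
    omega
  refine ⟨part1, ?_⟩
  intro hn4
  by_contra hcon
  have hn : n = 2*p + 1 := by omega
  have hAne : (((Finset.range n).filter (fun x => ∀ i, x ≠ C i)).image
      (fun x : ℕ => (x : ℤ))).Nonempty := Finset.card_pos.mp (by omega)
  have hBne : (((Finset.range n).filter (fun y => ∀ i, y ≠ R i)).image
      (fun y : ℕ => (y : ℤ))).Nonempty := Finset.card_pos.mp (by omega)
  have hL1 := L1 _ _ _ _ hAne hBne hcov
  exact L2 _ _ _ _ hAne hBne (p+1) (by omega) (by omega) hcov (by omega) (by omega) (by omega)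


lemma upper_mem (k p n : ℕ)
    (hb : ∀ x y : ℕ, x < n → y < n →
      (y % 2 = 1 → y / 2 < p) ∧ (x % 2 = 1 → x / 2 < p) ∧
      (y % 2 = 0 → x % 2 = 0 → (x+y) % 4 = 2 → (x+y)/4 < p) ∧
      (y % 2 = 0 → x % 2 = 0 → (x+y) % 4 = 0 → (x + 4*k - y)/4 < p ∧ y ≤ x + 4*k)) :
    ∃ R C : Fin p → ℕ, ∃ S D : Fin p → ℤ,
      ∀ x y : ℕ, x < n → y < n →
        ∃ i : Fin p, y = R i ∨ x = C i ∨ (x : ℤ) + y = S i ∨ (x : ℤ) - y = D i := by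
  refine ⟨fun i => 2*(i:ℕ)+1, fun i => 2*(i:ℕ)+1, fun i => 4*(i:ℤ)+2,
    fun i => 4*(i:ℤ) - 4*(k:ℤ), ?_⟩
  intro x y hx hy
  obtain ⟨h1, h2, h3, h4⟩ := hb x y hx hy
  by_cases hy2 : y % 2 = 1
  · exact ⟨⟨y/2, h1 hy2⟩, Or.inl (by show y = 2*(y/2)+1; omega)⟩
  · by_cases hx2 : x % 2 = 1
    · exact ⟨⟨x/2, h2 hx2⟩, Or.inr (Or.inl (by show x = 2*(x/2)+1; omega))⟩
    · by_cases hs : (x+y) % 4 = 2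
      · refine ⟨⟨(x+y)/4, h3 (by omega) (by omega) hs⟩, Or.inr (Or.inr (Or.inl ?_))⟩
        show (x:ℤ) + y = 4*(((x+y)/4 : ℕ) : ℤ) + 2
        omega
      · have hs0 : (x+y) % 4 = 0 := by omega
        obtain ⟨hlt, hle⟩ := h4 (by omega) (by omega) hs0
        refine ⟨⟨(x + 4*k - y)/4, hlt⟩, Or.inr (Or.inr (Or.inr ?_))⟩
        show (x:ℤ) - y = 4*(((x + 4*k - y)/4 : ℕ) : ℤ) - 4*(k:ℤ)
        omega

/-- `betaQ m n` is the least `p` such that `p` rows, `p` columns, `p` sum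
diagonals and `p` difference diagonals cover the `m × n` board. -/
noncomputable def betaQ (m n : ℕ) : ℕ :=
  sInf {p : ℕ | ∃ R C : Fin p → ℕ, ∃ S D : Fin p → ℤ,
    ∀ x y : ℕ, x < m → y < n →
      ∃ i : Fin p, y = R i ∨ x = C i ∨ (x : ℤ) + y = S i ∨ (x : ℤ) - y = D i}

/-- `β(Q_{n×n})` equals `2k` for `n = 4k` and `2k+1` for `n ∈ {4k+1, 4k+2, 4k+3}`. -/
theorem betaQ_square (k : ℕ) :
    betaQ (4 * k) (4 * k) = 2 * k ∧
    betaQ (4 * k + 1) (4 * k + 1) = 2 * k + 1 ∧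
    betaQ (4 * k + 2) (4 * k + 2) = 2 * k + 1 ∧
    betaQ (4 * k + 3) (4 * k + 3) = 2 * k + 1 := by
  unfold betaQ
  refine ⟨?_, ?_, ?_, ?_⟩
  · have hmem : (2*k) ∈ {p : ℕ | ∃ R C : Fin p → ℕ, ∃ S D : Fin p → ℤ,
        ∀ x y : ℕ, x < 4*k → y < 4*k →
          ∃ i : Fin p, y = R i ∨ x = C i ∨ (x : ℤ) + y = S i ∨ (x : ℤ) - y = D i} :=
      upper_mem k (2*k) (4*k) (by intro x y hx hy; omega)
    refine le_antisymm (Nat.sInf_le hmem) (le_csInf ⟨2*k, hmem⟩ (fun q hq => ?_))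
    obtain ⟨R, C, S, D, hc⟩ := hq
    have := (lower (4*k) q R C S D hc).1
    omega
  · have hmem : (2*k+1) ∈ {p : ℕ | ∃ R C : Fin p → ℕ, ∃ S D : Fin p → ℤ,
        ∀ x y : ℕ, x < 4*k+1 → y < 4*k+1 →
          ∃ i : Fin p, y = R i ∨ x = C i ∨ (x : ℤ) + y = S i ∨ (x : ℤ) - y = D i} :=
      upper_mem k (2*k+1) (4*k+1) (by intro x y hx hy; omega)
    refine le_antisymm (Nat.sInf_le hmem) (le_csInf ⟨2*k+1, hmem⟩ (fun q hq => ?_))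
    obtain ⟨R, C, S, D, hc⟩ := hq
    have := (lower (4*k+1) q R C S D hc).2 (by omega)
    omega
  · have hmem : (2*k+1) ∈ {p : ℕ | ∃ R C : Fin p → ℕ, ∃ S D : Fin p → ℤ,
        ∀ x y : ℕ, x < 4*k+2 → y < 4*k+2 →
          ∃ i : Fin p, y = R i ∨ x = C i ∨ (x : ℤ) + y = S i ∨ (x : ℤ) - y = D i} :=
      upper_mem k (2*k+1) (4*k+2) (by intro x y hx hy; omega)
    refine le_antisymm (Nat.sInf_le hmem) (le_csInf ⟨2*k+1, hmem⟩ (fun q hq => ?_))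
    obtain ⟨R, C, S, D, hc⟩ := hq
    have := (lower (4*k+1) q R C S D
      (fun x y hx hy => hc x y (by omega) (by omega))).2 (by omega)
    omega
  · have hmem : (2*k+1) ∈ {p : ℕ | ∃ R C : Fin p → ℕ, ∃ S D : Fin p → ℤ,
        ∀ x y : ℕ, x < 4*k+3 → y < 4*k+3 →
          ∃ i : Fin p, y = R i ∨ x = C i ∨ (x : ℤ) + y = S i ∨ (x : ℤ) - y = D i} :=
      upper_mem k (2*k+1) (4*k+3) (by intro x y hx hy; omega)
    refine le_antisymm (Nat.sInf_le hmem) (le_csInf ⟨2*k+1, hmem⟩ (fun q hq => ?_))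
    obtain ⟨R, C, S, D, hc⟩ := hq
    have := (lower (4*k+1) q R C S D
      (fun x y hx hy => hc x y (by omega) (by omega))).2 (by omega)
    omega
end

section
/- For all natural numbers m ≥ n ≥ 1 with m ≥ 3n−2: if p rows, p columns, p sum diagonals and p difference diagonals cover the m × n board, then p ≥ n. -/
/-- For `m ≥ n ≥ 1` with `m ≥ 3n - 2`: if `p` rows, `p` columns, `p` sum diagonals
and `p` difference diagonals cover the `m × n` board, then `p ≥ n`. -/
theorem relaxed_queens_rect_trivial_case (m n p : ℕ) (hmn : n ≤ m) (hn : 1 ≤ n)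
    (htriv : 3 * n - 2 ≤ m)
    (R C : Fin p → ℕ) (S D : Fin p → ℤ)
    (hcover : ∀ x y : ℕ, x < m → y < n →
      ∃ i : Fin p, y = R i ∨ x = C i ∨ (x : ℤ) + y = S i ∨ (x : ℤ) - y = D i) :
    p ≥ n := by
  by_contra hp
  push_neg at hp
  -- find a row y0 not used by any R i
  obtain ⟨y0, hy0n, hy0⟩ : ∃ y0 < n, ∀ i : Fin p, y0 ≠ R i := by
    have h2 : ¬ (Finset.range n ⊆ Finset.image R Finset.univ) := by
      intro h
      have := Finset.card_le_card h
      have h1 : (Finset.image R Finset.univ).card ≤ p :=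
        le_trans Finset.card_image_le (by simp)
      simp [Finset.card_range] at this
      omega
    obtain ⟨y0, hy0r, hy0i⟩ := Finset.not_subset.mp h2
    exact ⟨y0, Finset.mem_range.mp hy0r,
      fun i hi => hy0i (Finset.mem_image.mpr ⟨i, Finset.mem_univ i, hi.symm⟩)⟩
  have key : ∀ x, x < m → ∃ i : Fin p,
      x = C i ∨ (x : ℤ) + y0 = S i ∨ (x : ℤ) - y0 = D i := by
    intro x hx
    obtain ⟨i, h⟩ := hcover x y0 hx hy0n
    rcases h with h | h | h | h
    · exact absurd h (hy0 i)
    · exact ⟨i, Or.inl h⟩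
    · exact ⟨i, Or.inr (Or.inl h)⟩
    · exact ⟨i, Or.inr (Or.inr h)⟩
  choose f hf using key
  classical
  let F : Fin m → Fin p × Fin 3 := fun x =>
    ⟨f x x.2, if (x : ℕ) = C (f x x.2) then 0
      else if (x : ℤ) + y0 = S (f x x.2) then 1 else 2⟩
  have hFinj : Function.Injective F := by
    intro a b hab
    have h1 : f a a.2 = f b b.2 := congrArg Prod.fst hab
    have h2 := congrArg Prod.snd hab
    simp only [F] at h2
    set i := f a a.2 with hi
    have hfa := hf a a.2
    have hfb := hf b b.2
    rw [← h1] at hfb h2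
    by_cases ha1 : (a : ℕ) = C i
    · by_cases hb1 : (b : ℕ) = C i
      · exact Fin.ext (ha1.trans hb1.symm)
      · simp [ha1, hb1] at h2
        split at h2 <;> exact absurd h2 (by decide)
    · by_cases hb1 : (b : ℕ) = C i
      · simp [ha1, hb1] at h2
        split at h2 <;> exact absurd h2 (by decide)
      · by_cases ha2 : (a : ℤ) + y0 = S i
        · by_cases hb2 : (b : ℤ) + y0 = S i
          · have : (a : ℤ) = b := by omega
            exact Fin.ext (by exact_mod_cast this)
          · simp [ha1, hb1, ha2, hb2] at h2
        · by_cases hb2 : (b : ℤ) + y0 = S i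
          · simp [ha1, hb1, ha2, hb2] at h2
          · have ha3 : (a : ℤ) - y0 = D i := by tauto
            have hb3 : (b : ℤ) - y0 = D i := by tauto
            have : (a : ℤ) = b := by omega
            exact Fin.ext (by exact_mod_cast this)
  have hcard := Fintype.card_le_of_injective F hFinj
  simp [Fintype.card_prod] at hcard
  omega
end

section
/- For all natural numbers m ≥ n ≥ 2 with m < 3n−2: if p rows, p columns, p sum diagonals and p difference diagonals cover the m × n board, then 4p ≥ m + n − 2. -/
open Finset

/-- Number of indices `i` whose line value `f i` lies in `[lo, hi)`. -/
def cnt (p : ℕ) (f : Fin p → ℤ) (lo hi : ℤ) : ℕ :=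
  (Finset.univ.filter fun i => lo ≤ f i ∧ f i < hi).card

lemma cnt_le (p : ℕ) (f : Fin p → ℤ) (lo hi : ℤ) : cnt p f lo hi ≤ p := by
  classical
  simpa [cnt] using Finset.card_filter_le (Finset.univ : Finset (Fin p)) (fun i => lo ≤ f i ∧ f i < hi)

lemma cnt_mono (p : ℕ) (f : Fin p → ℤ) {lo hi lo' hi' : ℤ} (h1 : lo ≤ lo') (h2 : hi' ≤ hi) :
    cnt p f lo' hi' ≤ cnt p f lo hi := by
  apply Finset.card_le_card
  intro j hj
  simp only [Finset.mem_filter, Finset.mem_univ, true_and] at *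
  omega

lemma cnt_succ_le (p : ℕ) (f : Fin p → ℤ) {lo hi lo' hi' : ℤ} (i : Fin p)
    (h1 : lo ≤ f i) (h2 : f i < hi) (h3 : ¬(lo' ≤ f i ∧ f i < hi'))
    (h4 : lo ≤ lo') (h5 : hi' ≤ hi) :
    cnt p f lo' hi' + 1 ≤ cnt p f lo hi := by
  have hsub : (univ.filter fun j => lo' ≤ f j ∧ f j < hi')
      ⊆ (univ.filter fun j => lo ≤ f j ∧ f j < hi) := by
    intro j hj
    simp only [mem_filter, mem_univ, true_and] at *
    omega
  have hss := (Finset.ssubset_iff_of_subset hsub).mpr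
    ⟨i, mem_filter.mpr ⟨mem_univ i, h1, h2⟩, by simp only [mem_filter, mem_univ, true_and]; exact h3⟩
  exact Finset.card_lt_card hss

lemma card_union8 {γ : Type*} [DecidableEq γ] (s1 s2 s3 s4 s5 s6 s7 s8 : Finset γ) :
    (s1 ∪ (s2 ∪ (s3 ∪ (s4 ∪ (s5 ∪ (s6 ∪ (s7 ∪ s8))))))).card ≤
      s1.card + (s2.card + (s3.card + (s4.card + (s5.card + (s6.card + (s7.card + s8.card)))))) := by
  refine le_trans (Finset.card_union_le _ _) (Nat.add_le_add_left ?_ _)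
  refine le_trans (Finset.card_union_le _ _) (Nat.add_le_add_left ?_ _)
  refine le_trans (Finset.card_union_le _ _) (Nat.add_le_add_left ?_ _)
  refine le_trans (Finset.card_union_le _ _) (Nat.add_le_add_left ?_ _)
  refine le_trans (Finset.card_union_le _ _) (Nat.add_le_add_left ?_ _)
  refine le_trans (Finset.card_union_le _ _) (Nat.add_le_add_left ?_ _)
  exact Finset.card_union_le _ _

lemma card_union3 {γ : Type*} [DecidableEq γ] (s1 s2 s3 : Finset γ) :
    (s1 ∪ (s2 ∪ s3)).card ≤ s1.card + (s2.card + s3.card) := by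
  refine le_trans (Finset.card_union_le _ _) (Nat.add_le_add_left ?_ _)
  exact Finset.card_union_le _ _

/-- Key induction: for a sub-board `[x0, x0+a) × [y0, y0+b)` covered by the chosen lines,
either the number of chosen lines meeting the board is at least `a + b - 2`, or all `b`
row-values of the board (resp. all `a` column-values) appear among the chosen rows (columns). -/
lemma key (p : ℕ) (R C S D : Fin p → ℤ) :
    ∀ (N : ℕ), ∀ (a b x0 y0 : ℤ), 0 ≤ a → 0 ≤ b → a + b ≤ (N : ℤ) →
    (∀ x y : ℤ, x0 ≤ x → x < x0 + a → y0 ≤ y → y < y0 + b →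
      ∃ i, y = R i ∨ x = C i ∨ x + y = S i ∨ x - y = D i) →
    (a + b ≤ 2 + ((cnt p R y0 (y0 + b) : ℤ) + (cnt p C x0 (x0 + a) : ℤ) +
        (cnt p S (x0 + y0) (x0 + y0 + a + b - 1) : ℤ) +
        (cnt p D (x0 - y0 - b + 1) (x0 - y0 + a) : ℤ))) ∨
      b ≤ (cnt p R y0 (y0 + b) : ℤ) ∨ a ≤ (cnt p C x0 (x0 + a) : ℤ) := by
  classical
  intro N
  induction N with
  | zero =>
      intro a b x0 y0 ha hb hN _
      right; left
      have : b = 0 := by omega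
      simp [this]
  | succ N IH =>
      intro a b x0 y0 ha hb hN hcov
      rcases eq_or_lt_of_le hb with hb0 | hb0
      · right; left; omega
      rcases eq_or_lt_of_le ha with ha0 | ha0
      · right; right; omega
      by_cases hbot : ∃ i, R i = y0
      · -- peel bottom row
        obtain ⟨i, hi⟩ := hbot
        have hcov' : ∀ x y : ℤ, x0 ≤ x → x < x0 + a → y0 + 1 ≤ y → y < (y0 + 1) + (b - 1) →
            ∃ i, y = R i ∨ x = C i ∨ x + y = S i ∨ x - y = D i := by
          intro x y h1 h2 h3 h4
          exact hcov x y h1 h2 (by omega) (by omega)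
        have IH' := IH a (b-1) x0 (y0+1) (by omega) (by omega) (by omega) hcov'
        have hr : cnt p R (y0+1) ((y0+1) + (b-1)) + 1 ≤ cnt p R y0 (y0 + b) :=
          cnt_succ_le p R i (by omega) (by omega) (by omega) (by omega) (by omega)
        have hs : cnt p S (x0 + (y0+1)) (x0 + (y0+1) + a + (b-1) - 1) ≤
            cnt p S (x0 + y0) (x0 + y0 + a + b - 1) := cnt_mono p S (by omega) (by omega)
        have hd : cnt p D (x0 - (y0+1) - (b-1) + 1) (x0 - (y0+1) + a) ≤
            cnt p D (x0 - y0 - b + 1) (x0 - y0 + a) := cnt_mono p D (by omega) (by omega)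
        rcases IH' with h | h | h <;> omega
      by_cases htop : ∃ i, R i = y0 + b - 1
      · -- peel top row
        obtain ⟨i, hi⟩ := htop
        have hcov' : ∀ x y : ℤ, x0 ≤ x → x < x0 + a → y0 ≤ y → y < y0 + (b - 1) →
            ∃ i, y = R i ∨ x = C i ∨ x + y = S i ∨ x - y = D i := by
          intro x y h1 h2 h3 h4
          exact hcov x y h1 h2 h3 (by omega)
        have IH' := IH a (b-1) x0 y0 (by omega) (by omega) (by omega) hcov'
        have hr : cnt p R y0 (y0 + (b-1)) + 1 ≤ cnt p R y0 (y0 + b) :=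
          cnt_succ_le p R i (by omega) (by omega) (by omega) (by omega) (by omega)
        have hs : cnt p S (x0 + y0) (x0 + y0 + a + (b-1) - 1) ≤
            cnt p S (x0 + y0) (x0 + y0 + a + b - 1) := cnt_mono p S (by omega) (by omega)
        have hd : cnt p D (x0 - y0 - (b-1) + 1) (x0 - y0 + a) ≤
            cnt p D (x0 - y0 - b + 1) (x0 - y0 + a) := cnt_mono p D (by omega) (by omega)
        rcases IH' with h | h | h <;> omega
      by_cases hleft : ∃ i, C i = x0
      · -- peel left column
        obtain ⟨i, hi⟩ := hleft
        have hcov' : ∀ x y : ℤ, x0 + 1 ≤ x → x < (x0 + 1) + (a - 1) → y0 ≤ y → y < y0 + b →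
            ∃ i, y = R i ∨ x = C i ∨ x + y = S i ∨ x - y = D i := by
          intro x y h1 h2 h3 h4
          exact hcov x y (by omega) (by omega) h3 h4
        have IH' := IH (a-1) b (x0+1) y0 (by omega) (by omega) (by omega) hcov'
        have hc : cnt p C (x0+1) ((x0+1) + (a-1)) + 1 ≤ cnt p C x0 (x0 + a) :=
          cnt_succ_le p C i (by omega) (by omega) (by omega) (by omega) (by omega)
        have hs : cnt p S ((x0+1) + y0) ((x0+1) + y0 + (a-1) + b - 1) ≤
            cnt p S (x0 + y0) (x0 + y0 + a + b - 1) := cnt_mono p S (by omega) (by omega)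
        have hd : cnt p D ((x0+1) - y0 - b + 1) ((x0+1) - y0 + (a-1)) ≤
            cnt p D (x0 - y0 - b + 1) (x0 - y0 + a) := cnt_mono p D (by omega) (by omega)
        rcases IH' with h | h | h <;> omega
      by_cases hright : ∃ i, C i = x0 + a - 1
      · -- peel right column
        obtain ⟨i, hi⟩ := hright
        have hcov' : ∀ x y : ℤ, x0 ≤ x → x < x0 + (a - 1) → y0 ≤ y → y < y0 + b →
            ∃ i, y = R i ∨ x = C i ∨ x + y = S i ∨ x - y = D i := by
          intro x y h1 h2 h3 h4
          exact hcov x y h1 (by omega) h3 h4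
        have IH' := IH (a-1) b x0 y0 (by omega) (by omega) (by omega) hcov'
        have hc : cnt p C x0 (x0 + (a-1)) + 1 ≤ cnt p C x0 (x0 + a) :=
          cnt_succ_le p C i (by omega) (by omega) (by omega) (by omega) (by omega)
        have hs : cnt p S (x0 + y0) (x0 + y0 + (a-1) + b - 1) ≤
            cnt p S (x0 + y0) (x0 + y0 + a + b - 1) := cnt_mono p S (by omega) (by omega)
        have hd : cnt p D (x0 - y0 - b + 1) (x0 - y0 + (a-1)) ≤
            cnt p D (x0 - y0 - b + 1) (x0 - y0 + a) := cnt_mono p D (by omega) (by omega)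
        rcases IH' with h | h | h <;> omega
      -- no border line chosen
      push_neg at hbot htop hleft hright
      by_cases hb1 : b = 1
      · -- single row board
        left
        have hsub : Finset.Icc x0 (x0 + a - 1) ⊆
            ((Finset.univ.filter fun i => x0 ≤ C i ∧ C i < x0 + a).image C) ∪
            (((Finset.univ.filter fun i => x0 + y0 ≤ S i ∧ S i < x0 + y0 + a + b - 1).image
                (fun i => S i - y0)) ∪
              ((Finset.univ.filter fun i => x0 - y0 - b + 1 ≤ D i ∧ D i < x0 - y0 + a).image
                (fun i => D i + y0))) := by
          intro x hx
          simp only [mem_Icc] at hx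
          obtain ⟨i, hi⟩ := hcov x y0 (by omega) (by omega) (by omega) (by omega)
          simp only [mem_union, mem_image, mem_filter, mem_univ, true_and]
          rcases hi with h | h | h | h
          · exact absurd h.symm (hbot i)
          · exact Or.inl ⟨i, by omega, h.symm⟩
          · exact Or.inr (Or.inl ⟨i, by omega, by omega⟩)
          · exact Or.inr (Or.inr ⟨i, by omega, by omega⟩)
        have hcard := le_trans (Finset.card_le_card hsub) (card_union3 _ _ _)
        have h1 : (Finset.Icc x0 (x0 + a - 1)).card = a.toNat := by
          rw [Int.card_Icc]; omega
        have h2 := Finset.card_image_le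
          (s := (Finset.univ.filter fun i => x0 ≤ C i ∧ C i < x0 + a)) (f := C)
        have h3 := Finset.card_image_le
          (s := (Finset.univ.filter fun i => x0 + y0 ≤ S i ∧ S i < x0 + y0 + a + b - 1))
          (f := fun i => S i - y0)
        have h4 := Finset.card_image_le
          (s := (Finset.univ.filter fun i => x0 - y0 - b + 1 ≤ D i ∧ D i < x0 - y0 + a))
          (f := fun i => D i + y0)
        have e2 : (Finset.univ.filter fun i => x0 ≤ C i ∧ C i < x0 + a).card
            = cnt p C x0 (x0 + a) := rfl
        have e3 : (Finset.univ.filter fun i => x0 + y0 ≤ S i ∧ S i < x0 + y0 + a + b - 1).card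
            = cnt p S (x0 + y0) (x0 + y0 + a + b - 1) := rfl
        have e4 : (Finset.univ.filter fun i => x0 - y0 - b + 1 ≤ D i ∧ D i < x0 - y0 + a).card
            = cnt p D (x0 - y0 - b + 1) (x0 - y0 + a) := rfl
        rw [h1] at hcard
        rw [e2] at h2; rw [e3] at h3; rw [e4] at h4
        omega
      by_cases ha1 : a = 1
      · -- single column board
        left
        have hsub : Finset.Icc y0 (y0 + b - 1) ⊆
            ((Finset.univ.filter fun i => y0 ≤ R i ∧ R i < y0 + b).image R) ∪
            (((Finset.univ.filter fun i => x0 + y0 ≤ S i ∧ S i < x0 + y0 + a + b - 1).image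
                (fun i => S i - x0)) ∪
              ((Finset.univ.filter fun i => x0 - y0 - b + 1 ≤ D i ∧ D i < x0 - y0 + a).image
                (fun i => x0 - D i))) := by
          intro y hy
          simp only [mem_Icc] at hy
          obtain ⟨i, hi⟩ := hcov x0 y (by omega) (by omega) (by omega) (by omega)
          simp only [mem_union, mem_image, mem_filter, mem_univ, true_and]
          rcases hi with h | h | h | h
          · exact Or.inl ⟨i, by omega, h.symm⟩
          · exact absurd h.symm (hleft i)
          · exact Or.inr (Or.inl ⟨i, by omega, by omega⟩)
          · exact Or.inr (Or.inr ⟨i, by omega, by omega⟩)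
        have hcard := le_trans (Finset.card_le_card hsub) (card_union3 _ _ _)
        have h1 : (Finset.Icc y0 (y0 + b - 1)).card = b.toNat := by
          rw [Int.card_Icc]; omega
        have h2 := Finset.card_image_le
          (s := (Finset.univ.filter fun i => y0 ≤ R i ∧ R i < y0 + b)) (f := R)
        have h3 := Finset.card_image_le
          (s := (Finset.univ.filter fun i => x0 + y0 ≤ S i ∧ S i < x0 + y0 + a + b - 1))
          (f := fun i => S i - x0)
        have h4 := Finset.card_image_le
          (s := (Finset.univ.filter fun i => x0 - y0 - b + 1 ≤ D i ∧ D i < x0 - y0 + a))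
          (f := fun i => x0 - D i)
        have e2 : (Finset.univ.filter fun i => y0 ≤ R i ∧ R i < y0 + b).card
            = cnt p R y0 (y0 + b) := rfl
        have e3 : (Finset.univ.filter fun i => x0 + y0 ≤ S i ∧ S i < x0 + y0 + a + b - 1).card
            = cnt p S (x0 + y0) (x0 + y0 + a + b - 1) := rfl
        have e4 : (Finset.univ.filter fun i => x0 - y0 - b + 1 ≤ D i ∧ D i < x0 - y0 + a).card
            = cnt p D (x0 - y0 - b + 1) (x0 - y0 + a) := rfl
        rw [h1] at hcard
        rw [e2] at h2; rw [e3] at h3; rw [e4] at h4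
        omega
      -- general case: a, b ≥ 2, border double counting
      have ha2 : 2 ≤ a := by omega
      have hb2 : 2 ≤ b := by omega
      left
      set Tr := Finset.univ.filter (fun i => y0 ≤ R i ∧ R i < y0 + b) with hTrdef
      set Tc := Finset.univ.filter (fun i => x0 ≤ C i ∧ C i < x0 + a) with hTcdef
      set Ts := Finset.univ.filter (fun i => x0 + y0 ≤ S i ∧ S i < x0 + y0 + a + b - 1) with hTsdef
      set Td := Finset.univ.filter (fun i => x0 - y0 - b + 1 ≤ D i ∧ D i < x0 - y0 + a) with hTddef
      set u1 : Finset (ℤ × ℤ) := Finset.Icc x0 (x0 + a - 1) ×ˢ ({y0} : Finset ℤ) with hu1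
      set u2 : Finset (ℤ × ℤ) := Finset.Icc x0 (x0 + a - 1) ×ˢ ({y0 + b - 1} : Finset ℤ) with hu2
      set u3 : Finset (ℤ × ℤ) := ({x0} : Finset ℤ) ×ˢ Finset.Icc (y0 + 1) (y0 + b - 2) with hu3
      set u4 : Finset (ℤ × ℤ) :=
        ({x0 + a - 1} : Finset ℤ) ×ˢ Finset.Icc (y0 + 1) (y0 + b - 2) with hu4
      have d12 : Disjoint u1 u2 := by
        rw [Finset.disjoint_left]; rintro ⟨x, y⟩ h1 h2
        simp only [hu1, hu2, mem_product, mem_Icc, mem_singleton] at h1 h2; omega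
      have d13 : Disjoint u1 u3 := by
        rw [Finset.disjoint_left]; rintro ⟨x, y⟩ h1 h2
        simp only [hu1, hu3, mem_product, mem_Icc, mem_singleton] at h1 h2; omega
      have d14 : Disjoint u1 u4 := by
        rw [Finset.disjoint_left]; rintro ⟨x, y⟩ h1 h2
        simp only [hu1, hu4, mem_product, mem_Icc, mem_singleton] at h1 h2; omega
      have d23 : Disjoint u2 u3 := by
        rw [Finset.disjoint_left]; rintro ⟨x, y⟩ h1 h2
        simp only [hu2, hu3, mem_product, mem_Icc, mem_singleton] at h1 h2; omega
      have d24 : Disjoint u2 u4 := by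
        rw [Finset.disjoint_left]; rintro ⟨x, y⟩ h1 h2
        simp only [hu2, hu4, mem_product, mem_Icc, mem_singleton] at h1 h2; omega
      have d34 : Disjoint u3 u4 := by
        rw [Finset.disjoint_left]; rintro ⟨x, y⟩ h1 h2
        simp only [hu3, hu4, mem_product, mem_Icc, mem_singleton] at h1 h2; omega
      have hBcard : (u1 ∪ (u2 ∪ (u3 ∪ u4))).card
          = a.toNat + (a.toNat + ((b-2).toNat + (b-2).toNat)) := by
        rw [Finset.card_union_of_disjoint (Finset.disjoint_union_right.mpr
            ⟨d12, Finset.disjoint_union_right.mpr ⟨d13, d14⟩⟩),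
          Finset.card_union_of_disjoint (Finset.disjoint_union_right.mpr ⟨d23, d24⟩),
          Finset.card_union_of_disjoint d34]
        have c1 : (Finset.Icc x0 (x0 + a - 1)).card = a.toNat := by rw [Int.card_Icc]; omega
        have c2 : (Finset.Icc (y0 + 1) (y0 + b - 2)).card = (b - 2).toNat := by
          rw [Int.card_Icc]; omega
        simp only [hu1, hu2, hu3, hu4, Finset.card_product, Finset.card_singleton, c1, c2,
          mul_one, one_mul]
      have hsub : u1 ∪ (u2 ∪ (u3 ∪ u4)) ⊆
          (Tr.image fun i => ((x0, R i) : ℤ × ℤ)) ∪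
          ((Tr.image fun i => ((x0 + a - 1, R i) : ℤ × ℤ)) ∪
          ((Tc.image fun i => ((C i, y0) : ℤ × ℤ)) ∪
          ((Tc.image fun i => ((C i, y0 + b - 1) : ℤ × ℤ)) ∪
          ((Ts.image fun i =>
              ((max x0 (S i - (y0 + b - 1)), S i - max x0 (S i - (y0 + b - 1))) : ℤ × ℤ)) ∪
          ((Ts.image fun i =>
              ((min (x0 + a - 1) (S i - y0), S i - min (x0 + a - 1) (S i - y0)) : ℤ × ℤ)) ∪
          ((Td.image fun i => ((max x0 (D i + y0), max x0 (D i + y0) - D i) : ℤ × ℤ)) ∪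
           (Td.image fun i => ((min (x0 + a - 1) (D i + (y0 + b - 1)),
              min (x0 + a - 1) (D i + (y0 + b - 1)) - D i) : ℤ × ℤ)))))))) := by
        rintro ⟨x, y⟩ hz
        simp only [hu1, hu2, hu3, hu4, mem_union, mem_product, mem_Icc, mem_singleton] at hz
        have hxb : x0 ≤ x ∧ x ≤ x0 + a - 1 ∧ y0 ≤ y ∧ y ≤ y0 + b - 1 := by omega
        have hbord : x = x0 ∨ x = x0 + a - 1 ∨ y = y0 ∨ y = y0 + b - 1 := by omega
        obtain ⟨i, hi⟩ := hcov x y (by omega) (by omega) (by omega) (by omega)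
        simp only [mem_union, mem_image, hTrdef, hTcdef, hTsdef, hTddef, mem_filter, mem_univ,
          true_and, Prod.mk.injEq]
        rcases hi with h | h | h | h
        · have h1 := hbot i; have h2 := htop i
          have hx : x = x0 ∨ x = x0 + a - 1 := by omega
          rcases hx with hx | hx
          · exact Or.inl ⟨i, by omega, by omega, by omega⟩
          · exact Or.inr (Or.inl ⟨i, by omega, by omega, by omega⟩)
        · have h1 := hleft i; have h2 := hright i
          have hy : y = y0 ∨ y = y0 + b - 1 := by omega
          rcases hy with hy | hy
          · exact Or.inr (Or.inr (Or.inl ⟨i, by omega, by omega, by omega⟩))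
          · exact Or.inr (Or.inr (Or.inr (Or.inl ⟨i, by omega, by omega, by omega⟩)))
        · have hmem : x0 + y0 ≤ S i ∧ S i < x0 + y0 + a + b - 1 := by omega
          have hM1 := le_max_left x0 (S i - (y0 + b - 1))
          have hM2 := le_max_right x0 (S i - (y0 + b - 1))
          have hM3 := max_choice x0 (S i - (y0 + b - 1))
          have hm1 := min_le_left (x0 + a - 1) (S i - y0)
          have hm2 := min_le_right (x0 + a - 1) (S i - y0)
          have hm3 := min_choice (x0 + a - 1) (S i - y0)
          rcases hbord with hx | hx | hy | hy
          · exact Or.inr (Or.inr (Or.inr (Or.inr (Or.inl ⟨i, hmem, by omega, by omega⟩))))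
          · exact Or.inr (Or.inr (Or.inr (Or.inr (Or.inr (Or.inl ⟨i, hmem, by omega, by omega⟩)))))
          · exact Or.inr (Or.inr (Or.inr (Or.inr (Or.inr (Or.inl ⟨i, hmem, by omega, by omega⟩)))))
          · exact Or.inr (Or.inr (Or.inr (Or.inr (Or.inl ⟨i, hmem, by omega, by omega⟩))))
        · have hmem : x0 - y0 - b + 1 ≤ D i ∧ D i < x0 - y0 + a := by omega
          have hM1 := le_max_left x0 (D i + y0)
          have hM2 := le_max_right x0 (D i + y0)
          have hM3 := max_choice x0 (D i + y0)
          have hm1 := min_le_left (x0 + a - 1) (D i + (y0 + b - 1))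
          have hm2 := min_le_right (x0 + a - 1) (D i + (y0 + b - 1))
          have hm3 := min_choice (x0 + a - 1) (D i + (y0 + b - 1))
          rcases hbord with hx | hx | hy | hy
          · exact Or.inr (Or.inr (Or.inr (Or.inr (Or.inr
              (Or.inr (Or.inl ⟨i, hmem, by omega, by omega⟩))))))
          · exact Or.inr (Or.inr (Or.inr (Or.inr (Or.inr
              (Or.inr (Or.inr ⟨i, hmem, by omega, by omega⟩))))))
          · exact Or.inr (Or.inr (Or.inr (Or.inr (Or.inr
              (Or.inr (Or.inl ⟨i, hmem, by omega, by omega⟩))))))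
          · exact Or.inr (Or.inr (Or.inr (Or.inr (Or.inr
              (Or.inr (Or.inr ⟨i, hmem, by omega, by omega⟩))))))
      have hchain := le_trans (Finset.card_le_card hsub) (card_union8 _ _ _ _ _ _ _ _)
      have i1 := Finset.card_image_le (s := Tr) (f := fun i => ((x0, R i) : ℤ × ℤ))
      have i2 := Finset.card_image_le (s := Tr) (f := fun i => ((x0 + a - 1, R i) : ℤ × ℤ))
      have i3 := Finset.card_image_le (s := Tc) (f := fun i => ((C i, y0) : ℤ × ℤ))
      have i4 := Finset.card_image_le (s := Tc) (f := fun i => ((C i, y0 + b - 1) : ℤ × ℤ))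
      have i5 := Finset.card_image_le (s := Ts)
        (f := fun i => ((max x0 (S i - (y0 + b - 1)), S i - max x0 (S i - (y0 + b - 1))) : ℤ × ℤ))
      have i6 := Finset.card_image_le (s := Ts)
        (f := fun i => ((min (x0 + a - 1) (S i - y0), S i - min (x0 + a - 1) (S i - y0)) : ℤ × ℤ))
      have i7 := Finset.card_image_le (s := Td)
        (f := fun i => ((max x0 (D i + y0), max x0 (D i + y0) - D i) : ℤ × ℤ))
      have i8 := Finset.card_image_le (s := Td)
        (f := fun i => ((min (x0 + a - 1) (D i + (y0 + b - 1)),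
            min (x0 + a - 1) (D i + (y0 + b - 1)) - D i) : ℤ × ℤ))
      have eR : Tr.card = cnt p R y0 (y0 + b) := rfl
      have eC : Tc.card = cnt p C x0 (x0 + a) := rfl
      have eS : Ts.card = cnt p S (x0 + y0) (x0 + y0 + a + b - 1) := rfl
      have eD : Td.card = cnt p D (x0 - y0 - b + 1) (x0 - y0 + a) := rfl
      omega

/-- For `m ≥ n ≥ 2` with `m < 3n - 2`: if `p` rows, `p` columns, `p` sum diagonals
and `p` difference diagonals cover the `m × n` board, then `4p ≥ m + n - 2`. -/
theorem relaxed_queens_rect_lower_bound (m n p : ℕ) (hmn : n ≤ m) (hn : 2 ≤ n)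
    (hnontriv : m < 3 * n - 2)
    (R C : Fin p → ℕ) (S D : Fin p → ℤ)
    (hcover : ∀ x y : ℕ, x < m → y < n →
      ∃ i : Fin p, y = R i ∨ x = C i ∨ (x : ℤ) + y = S i ∨ (x : ℤ) - y = D i) :
    4 * p ≥ m + n - 2 := by
  classical
  have hcov' : ∀ x y : ℤ, (0:ℤ) ≤ x → x < 0 + (m:ℤ) → (0:ℤ) ≤ y → y < 0 + (n:ℤ) →
      ∃ i, y = (fun i => ((R i : ℤ))) i ∨ x = (fun i => ((C i : ℤ))) i ∨
        x + y = S i ∨ x - y = D i := by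
    intro x y h1 h2 h3 h4
    lift x to ℕ using h1 with x'
    lift y to ℕ using h3 with y'
    obtain ⟨i, hi⟩ := hcover x' y' (by omega) (by omega)
    refine ⟨i, ?_⟩
    rcases hi with h | h | h | h
    · exact Or.inl (by exact_mod_cast h)
    · exact Or.inr (Or.inl (by exact_mod_cast h))
    · exact Or.inr (Or.inr (Or.inl h))
    · exact Or.inr (Or.inr (Or.inr h))
  have hkey := key p (fun i => ((R i : ℤ))) (fun i => ((C i : ℤ))) S D (m + n)
    (m:ℤ) (n:ℤ) 0 0 (by positivity) (by positivity) (by push_cast; omega) hcov'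
  have c1 := cnt_le p (fun i => ((R i : ℤ))) 0 (0 + (n:ℤ))
  have c2 := cnt_le p (fun i => ((C i : ℤ))) 0 (0 + (m:ℤ))
  have c3 := cnt_le p S (0 + 0) (0 + 0 + (m:ℤ) + (n:ℤ) - 1)
  have c4 := cnt_le p D (0 - 0 - (n:ℤ) + 1) (0 - 0 + (m:ℤ))
  rcases hkey with h | h | h <;> omega
end

section
/- Let m' and n' both be odd natural numbers with m', n' ≥ 1, let C'_0 < ... < C'_{m'-1} and R'_0 < ... < R'_{n'-1} be column and row indices, and let G be the spaced grid {(C'_i, R'_j)}. If p sum diagonals and p difference diagonals cover G, then p ≥ (m' + n' − 2)/2 + 1. -/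
open Finset

section Aux
open Polynomial

lemma coeff_lagrange_basis {m : ℕ} (x : Fin m → ℚ) (hx : Function.Injective x) (i : Fin m) :
    (Lagrange.basis Finset.univ x i).coeff (m - 1)
      = ∏ l ∈ Finset.univ.erase i, (x i - x l)⁻¹ := by
  have h1 : Lagrange.basis Finset.univ x i
      = C (∏ l ∈ Finset.univ.erase i, (x i - x l)⁻¹)
        * ∏ l ∈ Finset.univ.erase i, (X - C (x l)) := by
    rw [Lagrange.basis]
    simp_rw [Lagrange.basisDivisor]
    rw [Finset.prod_mul_distrib, map_prod]
  have hmonic : (∏ l ∈ Finset.univ.erase i, (X - C (x l)) : ℚ[X]).Monic :=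
    monic_prod_of_monic _ _ fun j _ => monic_X_sub_C _
  have hdeg : (∏ l ∈ Finset.univ.erase i, (X - C (x l)) : ℚ[X]).natDegree = m - 1 := by
    rw [natDegree_prod_of_monic _ _ fun j _ => monic_X_sub_C _]
    simp [Finset.card_erase_of_mem]
  rw [h1, coeff_C_mul, ← hdeg, hmonic.coeff_natDegree, mul_one]

lemma lagrange_power_sum {m : ℕ} (x : Fin m → ℚ) (hx : Function.Injective x) (k : ℕ)
    (hk : k < m) :
    ∑ i, (∏ l ∈ Finset.univ.erase i, (x i - x l)⁻¹) * x i ^ k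
      = if k = m - 1 then 1 else 0 := by
  have hinj : Set.InjOn x (Finset.univ : Finset (Fin m)) := hx.injOn
  have hdeg : ((X : ℚ[X]) ^ k).degree < (Finset.univ : Finset (Fin m)).card := by
    rw [degree_X_pow, Finset.card_univ, Fintype.card_fin]
    exact_mod_cast hk
  have h := Lagrange.eq_interpolate hinj hdeg
  have h2 := congrArg (fun q => Polynomial.coeff q (m - 1)) h
  simp only [Lagrange.interpolate_apply, finset_sum_coeff, coeff_C_mul, eval_pow, eval_X,
    coeff_X_pow] at h2
  simp_rw [coeff_lagrange_basis x hx] at h2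
  calc ∑ i, (∏ l ∈ Finset.univ.erase i, (x i - x l)⁻¹) * x i ^ k
      = ∑ i, x i ^ k * ∏ l ∈ Finset.univ.erase i, (x i - x l)⁻¹ := by
        apply Finset.sum_congr rfl; intro i _; ring
    _ = if m - 1 = k then 1 else 0 := h2.symm
    _ = if k = m - 1 then 1 else 0 := by
        by_cases hkm : k = m - 1 <;> simp [hkm, Ne.symm]

end Aux

section Aux2
open MvPolynomial

lemma eval_sum_vanish {m n : ℕ} (c : Fin m → ℚ) (r : Fin n → ℚ) (w : Fin m → ℚ) (u : Fin n → ℚ)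
    (hW : ∀ A, A + 1 < m → (∑ i, w i * c i ^ A) = 0)
    (hU : ∀ B, B + 1 < n → (∑ j, u j * r j ^ B) = 0)
    (g : MvPolynomial (Fin 2) ℚ) (hg : g.totalDegree + 2 < m + n) :
    ∑ i, ∑ j, w i * u j * MvPolynomial.eval (fun v => if v = 0 then c i else r j) g = 0 := by
  have heval : ∀ (i : Fin m) (j : Fin n),
      MvPolynomial.eval (fun v => if v = 0 then c i else r j) g
        = ∑ d ∈ g.support, coeff d g * (c i ^ d 0 * r j ^ d 1) := by
    intro i j
    rw [eval_eq']
    apply Finset.sum_congr rfl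
    intro d _
    congr 1
    rw [Fin.prod_univ_two]
    simp
  simp_rw [heval, Finset.mul_sum]
  have swap : ∑ i : Fin m, ∑ j : Fin n, ∑ d ∈ g.support,
        w i * u j * (coeff d g * (c i ^ d 0 * r j ^ d 1))
      = ∑ d ∈ g.support, ∑ i : Fin m, ∑ j : Fin n,
        w i * u j * (coeff d g * (c i ^ d 0 * r j ^ d 1)) := by
    calc ∑ i : Fin m, ∑ j : Fin n, ∑ d ∈ g.support,
          w i * u j * (coeff d g * (c i ^ d 0 * r j ^ d 1))
        = ∑ i : Fin m, ∑ d ∈ g.support, ∑ j : Fin n,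
          w i * u j * (coeff d g * (c i ^ d 0 * r j ^ d 1)) :=
        Finset.sum_congr rfl fun i _ => Finset.sum_comm
      _ = _ := Finset.sum_comm
  rw [swap]
  apply Finset.sum_eq_zero
  intro d hd
  have hdle : d 0 + d 1 ≤ g.totalDegree := by
    have h := MvPolynomial.le_totalDegree hd
    rwa [Finsupp.sum_fintype _ _ (fun _ => rfl), Fin.sum_univ_two] at h
  have key : (∑ i, w i * c i ^ d 0) * (∑ j, u j * r j ^ d 1) = 0 := by
    rcases (by omega : d 0 + 1 < m ∨ d 1 + 1 < n) with h | h
    · rw [hW _ h, zero_mul]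
    · rw [hU _ h, mul_zero]
  calc ∑ i : Fin m, ∑ j : Fin n, w i * u j * (coeff d g * (c i ^ d 0 * r j ^ d 1))
      = coeff d g * ((∑ i, w i * c i ^ d 0) * (∑ j, u j * r j ^ d 1)) := by
        rw [Finset.sum_mul_sum, Finset.mul_sum]
        apply Finset.sum_congr rfl
        intro i _
        rw [Finset.mul_sum]
        apply Finset.sum_congr rfl
        intro j _
        ring
    _ = 0 := by rw [key, mul_zero]

end Aux2


lemma dfact {m n : ℕ} (w G : Fin m → ℚ) (u H : Fin n → ℚ) :
    ∑ i, ∑ j, w i * u j * (G i * H j) = (∑ i, w i * G i) * (∑ j, u j * H j) := by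
  rw [Finset.sum_mul_sum]
  apply Finset.sum_congr rfl
  intro i _
  apply Finset.sum_congr rfl
  intro j _
  ring

lemma dswap {m n : ℕ} (w : Fin m → ℚ) (u : Fin n → ℚ) {γ : Type*} (s : Finset γ)
    (f : γ → ℚ) (P : γ → Fin m → Fin n → ℚ) :
    ∑ i, ∑ j, w i * u j * (∑ k ∈ s, f k * P k i j)
      = ∑ k ∈ s, f k * (∑ i, ∑ j, w i * u j * P k i j) := by
  simp_rw [Finset.mul_sum]
  calc ∑ i : Fin m, ∑ j : Fin n, ∑ k ∈ s, w i * u j * (f k * P k i j)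
      = ∑ i : Fin m, ∑ k ∈ s, ∑ j : Fin n, w i * u j * (f k * P k i j) :=
        Finset.sum_congr rfl fun i _ => Finset.sum_comm
    _ = ∑ k ∈ s, ∑ i : Fin m, ∑ j : Fin n, w i * u j * (f k * P k i j) := Finset.sum_comm
    _ = _ := by
        apply Finset.sum_congr rfl
        intro k _
        apply Finset.sum_congr rfl
        intro i _
        apply Finset.sum_congr rfl
        intro j _
        ring

lemma core_contradiction (a b : ℕ) (c : Fin (2*a+1) → ℚ) (r : Fin (2*b+1) → ℚ)
    (hc : Function.Injective c) (hr : Function.Injective r)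
    (S D : Fin (a+b) → ℚ)
    (hcover : ∀ i j, (∏ t, (c i + r j - S t)) * (∏ t, (c i - r j - D t)) = 0) : False := by
  set w : Fin (2*a+1) → ℚ := fun i => ∏ l ∈ Finset.univ.erase i, (c i - c l)⁻¹ with hw
  set u : Fin (2*b+1) → ℚ := fun j => ∏ l ∈ Finset.univ.erase j, (r j - r l)⁻¹ with hu
  have hW : ∀ A, A + 1 < 2*a+1 → (∑ i, w i * c i ^ A) = 0 := fun A hA => by
    rw [hw]; rw [lagrange_power_sum c hc A (by omega), if_neg (by omega)]
  have hU : ∀ B, B + 1 < 2*b+1 → (∑ j, u j * r j ^ B) = 0 := fun B hB => by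
    rw [hu]; rw [lagrange_power_sum r hr B (by omega), if_neg (by omega)]
  have hW1 : (∑ i, w i * c i ^ (2*a)) = 1 := by
    rw [hw]; rw [lagrange_power_sum c hc _ (by omega), if_pos (by omega)]
  have hU1 : (∑ j, u j * r j ^ (2*b)) = 1 := by
    rw [hu]; rw [lagrange_power_sum r hr _ (by omega), if_pos (by omega)]
  -- Ψ s t := ∑ i, ∑ j, w i * u j * ((c i + r j)^s * (c i - r j)^t)
  have hPsi0 : ∀ s t : ℕ, s + t < 2*(a+b) →
      ∑ i, ∑ j, w i * u j * ((c i + r j)^s * (c i - r j)^t) = 0 := by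
    intro s t hst
    have hdeg : ((MvPolynomial.X 0 + MvPolynomial.X 1)^s
        * (MvPolynomial.X 0 - MvPolynomial.X 1)^t
        : MvPolynomial (Fin 2) ℚ).totalDegree + 2 < (2*a+1) + (2*b+1) := by
      have h1 : (MvPolynomial.X 0 + MvPolynomial.X 1 : MvPolynomial (Fin 2) ℚ).totalDegree ≤ 1 :=
        (MvPolynomial.totalDegree_add _ _).trans (by simp [MvPolynomial.totalDegree_X])
      have h2 : (MvPolynomial.X 0 - MvPolynomial.X 1 : MvPolynomial (Fin 2) ℚ).totalDegree ≤ 1 :=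
        (MvPolynomial.totalDegree_sub _ _).trans (by simp [MvPolynomial.totalDegree_X])
      have h3 := MvPolynomial.totalDegree_mul
        ((MvPolynomial.X 0 + MvPolynomial.X 1 : MvPolynomial (Fin 2) ℚ)^s)
        ((MvPolynomial.X 0 - MvPolynomial.X 1 : MvPolynomial (Fin 2) ℚ)^t)
      have h4 := (MvPolynomial.totalDegree_pow
        (MvPolynomial.X 0 + MvPolynomial.X 1 : MvPolynomial (Fin 2) ℚ) s).trans
        (Nat.mul_le_mul_left s h1)
      have h5 := (MvPolynomial.totalDegree_pow
        (MvPolynomial.X 0 - MvPolynomial.X 1 : MvPolynomial (Fin 2) ℚ) t).trans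
        (Nat.mul_le_mul_left t h2)
      omega
    have hv := eval_sum_vanish c r w u hW hU _ hdeg
    have heq : ∀ (i : Fin (2*a+1)) (j : Fin (2*b+1)),
        MvPolynomial.eval (fun v : Fin 2 => if v = 0 then c i else r j)
          (((MvPolynomial.X 0 + MvPolynomial.X 1)^s
            * (MvPolynomial.X 0 - MvPolynomial.X 1)^t : MvPolynomial (Fin 2) ℚ))
          = (c i + r j)^s * (c i - r j)^t := by
      intro i j; simp
    simp_rw [heq] at hv
    exact hv
  have hPsiTop : ∑ i, ∑ j, w i * u j * ((c i + r j)^(a+b) * (c i - r j)^(a+b))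
      = (-1:ℚ)^b * ((a+b).choose a) := by
    have hpoint : ∀ x y : ℚ, (x + y)^(a+b) * (x - y)^(a+b)
        = ∑ k ∈ Finset.range (a+b+1),
            (((a+b).choose k : ℚ) * (-1)^(a+b-k)) * (x^(2*k) * y^(2*(a+b-k))) := by
      intro x y
      rw [← mul_pow, show (x + y) * (x - y) = x^2 + (-y^2) by ring, add_pow]
      apply Finset.sum_congr rfl
      intro k _
      rw [neg_pow, ← pow_mul, ← pow_mul]
      ring
    simp_rw [hpoint]
    rw [dswap]
    have hz : ∀ k ∈ Finset.range (a+b+1), k ≠ a →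
        (((a+b).choose k : ℚ) * (-1)^(a+b-k))
          * (∑ i, ∑ j, w i * u j * (c i ^ (2*k) * r j ^ (2*(a+b-k)))) = 0 := by
      intro k hk hka
      have hk' := Finset.mem_range.mp hk
      rw [dfact]
      rcases lt_or_gt_of_ne hka with h | h
      · rw [hW (2*k) (by omega), zero_mul, mul_zero]
      · rw [hU (2*(a+b-k)) (by omega), mul_zero, mul_zero]
    rw [Finset.sum_eq_single_of_mem a (Finset.mem_range.mpr (by omega)) hz, dfact,
      show 2*(a+b-a) = 2*b by omega, hW1, hU1,
      show a+b-a = b by omega]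
    ring
  -- expansion of the covering product
  have hx : ∀ x y : ℚ, (∏ t, (x + y - S t)) * (∏ t, (x - y - D t))
      = ∑ k ∈ (Finset.univ : Finset (Fin (a+b))).powerset
            ×ˢ (Finset.univ : Finset (Fin (a+b))).powerset,
          ((∏ t ∈ Finset.univ \ k.1, (-S t)) * (∏ t ∈ Finset.univ \ k.2, (-D t)))
            * ((x+y)^(k.1.card) * (x-y)^(k.2.card)) := by
    intro x y
    have e1 : (∏ t, (x + y - S t))
        = ∑ U ∈ (Finset.univ : Finset (Fin (a+b))).powerset,
            (x+y)^U.card * ∏ t ∈ Finset.univ \ U, (-S t) := by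
      simp_rw [sub_eq_add_neg]
      rw [Finset.prod_add]
      apply Finset.sum_congr rfl
      intro U _
      rw [Finset.prod_const]
    have e2 : (∏ t, (x - y - D t))
        = ∑ V ∈ (Finset.univ : Finset (Fin (a+b))).powerset,
            (x-y)^V.card * ∏ t ∈ Finset.univ \ V, (-D t) := by
      simp_rw [sub_eq_add_neg]
      rw [Finset.prod_add]
      apply Finset.sum_congr rfl
      intro V _
      rw [Finset.prod_const]
    rw [e1, e2, Finset.sum_mul_sum, ← Finset.sum_product']
    apply Finset.sum_congr rfl
    intro k _
    ring
  have h0 : (0:ℚ) = ∑ i, ∑ j, w i * u j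
      * ((∏ t, (c i + r j - S t)) * (∏ t, (c i - r j - D t))) := by
    symm
    apply Finset.sum_eq_zero
    intro i _
    apply Finset.sum_eq_zero
    intro j _
    rw [hcover i j, mul_zero]
  simp_rw [hx] at h0
  rw [dswap] at h0
  rw [Finset.sum_eq_single_of_mem (Finset.univ, Finset.univ)
    (Finset.mem_product.mpr ⟨Finset.mem_powerset_self _, Finset.mem_powerset_self _⟩)] at h0
  · simp only [Finset.sdiff_self, Finset.prod_empty, one_mul, Finset.card_univ,
      Fintype.card_fin] at h0
    rw [hPsiTop] at h0
    have hne : ((-1:ℚ)^b * ((a+b).choose a)) ≠ 0 := by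
      apply mul_ne_zero (pow_ne_zero _ (by norm_num))
      exact_mod_cast (Nat.choose_pos (Nat.le_add_right a b)).ne'
    exact hne h0.symm
  · intro k hk hkne
    have hcard1 : k.1.card ≤ a + b := by
      have := Finset.mem_powerset.mp (Finset.mem_product.mp hk).1
      calc k.1.card ≤ (Finset.univ : Finset (Fin (a+b))).card := Finset.card_le_card this
        _ = a + b := by rw [Finset.card_univ, Fintype.card_fin]
    have hcard2 : k.2.card ≤ a + b := by
      have := Finset.mem_powerset.mp (Finset.mem_product.mp hk).2
      calc k.2.card ≤ (Finset.univ : Finset (Fin (a+b))).card := Finset.card_le_card this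
        _ = a + b := by rw [Finset.card_univ, Fintype.card_fin]
    have hlt : k.1.card + k.2.card < 2*(a+b) := by
      have : k.1 ≠ Finset.univ ∨ k.2 ≠ Finset.univ := by
        by_contra h
        push_neg at h
        exact hkne (Prod.ext h.1 h.2)
      rcases this with h | h
      · have : k.1.card < a + b := by
          have := Finset.card_lt_card
            ((Finset.mem_powerset.mp (Finset.mem_product.mp hk).1).ssubset_of_ne h)
          rwa [Finset.card_univ, Fintype.card_fin] at this
        omega
      · have : k.2.card < a + b := by
          have := Finset.card_lt_card
            ((Finset.mem_powerset.mp (Finset.mem_product.mp hk).2).ssubset_of_ne h)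
          rwa [Finset.card_univ, Fintype.card_fin] at this
        omega
    rw [hPsi0 _ _ hlt, mul_zero]


/-- If `m'` and `n'` are odd and `p` sum diagonals and `p` difference diagonals
cover the spaced grid with strictly increasing columns `C'` (of size `m'`) and
rows `R'` (of size `n'`), then `p ≥ (m' + n' - 2)/2 + 1`. -/
theorem spaced_odd_grid_lower_bound (m' n' p : ℕ) (hm : Odd m') (hn : Odd n')
    (C' : Fin m' → ℤ) (R' : Fin n' → ℤ) (hC : StrictMono C') (hR : StrictMono R')
    (S D : Fin p → ℤ)
    (hcover : ∀ (i : Fin m') (j : Fin n'),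
      ∃ t : Fin p, C' i + R' j = S t ∨ C' i - R' j = D t) :
    p ≥ (m' + n' - 2) / 2 + 1 := by
  obtain ⟨a, ha⟩ := hm
  obtain ⟨b, hb⟩ := hn
  subst ha
  subst hb
  by_contra hlt
  push_neg at hlt
  have hple : p ≤ a + b := by omega
  refine absurd (core_contradiction a b (fun i => (C' i : ℚ)) (fun j => (R' j : ℚ))
    (fun x y h => hC.injective (Int.cast_injective h))
    (fun x y h => hR.injective (Int.cast_injective h))
    (fun t => if h : (t : ℕ) < p then (S ⟨t, h⟩ : ℚ) else 0)
    (fun t => if h : (t : ℕ) < p then (D ⟨t, h⟩ : ℚ) else 0)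
    ?_) (fun f => f)
  intro i j
  obtain ⟨t, ht | ht⟩ := hcover i j
  · apply mul_eq_zero_of_left
    apply Finset.prod_eq_zero
      (Finset.mem_univ (⟨(t : ℕ), lt_of_lt_of_le t.isLt hple⟩ : Fin (a+b)))
    simp only [dif_pos t.isLt, Fin.eta]
    rw [sub_eq_zero]
    exact_mod_cast ht
  · apply mul_eq_zero_of_right
    apply Finset.prod_eq_zero
      (Finset.mem_univ (⟨(t : ℕ), lt_of_lt_of_le t.isLt hple⟩ : Fin (a+b)))
    simp only [dif_pos t.isLt, Fin.eta]
    rw [sub_eq_zero]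
    exact_mod_cast ht
end

section
/- For all natural numbers m, n with m, n both even and m + n ≡ 6 (mod 8), and with max{m,n} < 3·min{m,n} − 2: if p rows, p columns, p sum diagonals and p difference diagonals cover the m × n board, then p ≥ (m+n−2)/4 + 1. -/
set_option maxHeartbeats 4000000 in
/-- If `m, n` are even, `m + n ≡ 6 [MOD 8]` and `max m n < 3 * min m n - 2`, then
any cover of the `m × n` board by `p` rows, `p` columns, `p` sum diagonals and
`p` difference diagonals satisfies `p ≥ (m+n-2)/4 + 1`. -/
theorem relaxed_queens_rect_even_improved (m n p : ℕ) (hm : Even m) (hn : Even n)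
    (hmod : (m + n) % 8 = 6) (hnontriv : max m n < 3 * min m n - 2)
    (R C : Fin p → ℕ) (S D : Fin p → ℤ)
    (hcover : ∀ x y : ℕ, x < m → y < n →
      ∃ i : Fin p, y = R i ∨ x = C i ∨ (x : ℤ) + y = S i ∨ (x : ℤ) - y = D i) :
    p ≥ (m + n - 2) / 4 + 1 := by
  classical
  set k := (m + n - 2) / 4 with hkdef
  have hm2 : m % 2 = 0 := Nat.even_iff.mp hm
  have hn2 : n % 2 = 0 := Nat.even_iff.mp hn
  have hmn : (m ≤ n ∧ n + 2 < 3*m) ∨ (n ≤ m ∧ m + 2 < 3*n) := by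
    rcases le_total m n with h | h
    · left
      rw [max_eq_right h, min_eq_left h] at hnontriv
      omega
    · right
      rw [max_eq_left h, min_eq_right h] at hnontriv
      omega
  have hk4 : m + n = 4*k + 2 := by omega
  have hkodd : k % 2 = 1 := by omega
  have hmk : k + 2 ≤ m := by omega
  have hnk : k + 2 ≤ n := by omega
  by_contra hgoal
  have hpk : p ≤ k := by omega
  have hppos : 0 < p := by
    obtain ⟨i, -⟩ := hcover 0 0 (by omega) (by omega)
    exact i.pos
  -- uncovered columns and rows
  set X := (Finset.range m).filter (fun x => ∀ i, x ≠ C i) with hXdef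
  set Y := (Finset.range n).filter (fun y => ∀ i, y ≠ R i) with hYdef
  have hXcard : m ≤ X.card + p := by
    have h1 : (Finset.range m).filter (fun x => ¬ ∀ i, x ≠ C i) ⊆ Finset.image C Finset.univ := by
      intro x hx
      simp only [Finset.mem_filter, not_forall, not_ne_iff] at hx
      obtain ⟨-, i, hi⟩ := hx
      exact Finset.mem_image.mpr ⟨i, Finset.mem_univ i, hi.symm⟩
    have h2 := Finset.card_filter_add_card_filter_not (s := Finset.range m)
        (p := fun x => ∀ i, x ≠ C i)
    have h3 : ((Finset.range m).filter (fun x => ¬ ∀ i, x ≠ C i)).card ≤ p :=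
      le_trans (Finset.card_le_card h1) (le_trans Finset.card_image_le (by simp))
    rw [Finset.card_range] at h2
    rw [hXdef]
    omega
  have hYcard : n ≤ Y.card + p := by
    have h1 : (Finset.range n).filter (fun y => ¬ ∀ i, y ≠ R i) ⊆ Finset.image R Finset.univ := by
      intro y hy
      simp only [Finset.mem_filter, not_forall, not_ne_iff] at hy
      obtain ⟨-, i, hi⟩ := hy
      exact Finset.mem_image.mpr ⟨i, Finset.mem_univ i, hi.symm⟩
    have h2 := Finset.card_filter_add_card_filter_not (s := Finset.range n)
        (p := fun y => ∀ i, y ≠ R i)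
    have h3 : ((Finset.range n).filter (fun y => ¬ ∀ i, y ≠ R i)).card ≤ p :=
      le_trans (Finset.card_le_card h1) (le_trans Finset.card_image_le (by simp))
    rw [Finset.card_range] at h2
    rw [hYdef]
    omega
  have hXne : X.Nonempty := Finset.card_pos.mp (by omega)
  have hYne : Y.Nonempty := Finset.card_pos.mp (by omega)
  set x1 := X.min' hXne with hx1def
  set xa := X.max' hXne with hxadef
  set y1 := Y.min' hYne with hy1def
  set yb := Y.max' hYne with hybdef
  have hx1X : x1 ∈ X := X.min'_mem hXne
  have hxaX : xa ∈ X := X.max'_mem hXne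
  have hy1Y : y1 ∈ Y := Y.min'_mem hYne
  have hybY : yb ∈ Y := Y.max'_mem hYne
  have hx1xa : x1 < xa := Finset.min'_lt_max'_of_card X (by omega)
  have hy1yb : y1 < yb := Finset.min'_lt_max'_of_card Y (by omega)
  have hXlb : ∀ x ∈ X, x1 ≤ x := fun x hx => X.min'_le x hx
  have hXub : ∀ x ∈ X, x ≤ xa := fun x hx => X.le_max' x hx
  have hYlb : ∀ y ∈ Y, y1 ≤ y := fun y hy => Y.min'_le y hy
  have hYub : ∀ y ∈ Y, y ≤ yb := fun y hy => Y.le_max' y hy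
  -- the boundary
  set bd := (X ×ˢ Y).filter (fun c => c.1 = x1 ∨ c.1 = xa ∨ c.2 = y1 ∨ c.2 = yb) with hbddef
  have hbdmem : ∀ c : ℕ × ℕ, c ∈ bd ↔
      c.1 ∈ X ∧ c.2 ∈ Y ∧ (c.1 = x1 ∨ c.1 = xa ∨ c.2 = y1 ∨ c.2 = yb) := by
    intro c
    rw [hbddef, Finset.mem_filter, Finset.mem_product]
    tauto
  have hYc2 : 2 ≤ Y.card := by omega
  have hXc2 : 2 ≤ X.card := by omega
  have hcard_bd : bd.card + 4 = 2 * X.card + 2 * Y.card := by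
    have he1 : (Y.erase yb).card = Y.card - 1 := Finset.card_erase_of_mem hybY
    have he2 : ((Y.erase yb).erase y1).card = (Y.erase yb).card - 1 :=
      Finset.card_erase_of_mem (Finset.mem_erase.mpr ⟨hy1yb.ne, hy1Y⟩)
    have hdec : bd = (X ×ˢ ({y1, yb} : Finset ℕ)) ∪
        (({x1, xa} : Finset ℕ) ×ˢ ((Y.erase yb).erase y1)) := by
      ext ⟨x, y⟩
      simp only [hbdmem, Finset.mem_union, Finset.mem_product, Finset.mem_insert,
        Finset.mem_singleton, Finset.mem_erase]
      constructor
      · rintro ⟨hx, hy, hcond⟩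
        by_cases h1 : y = y1
        · exact Or.inl ⟨hx, Or.inl h1⟩
        by_cases h2 : y = yb
        · exact Or.inl ⟨hx, Or.inr h2⟩
        rcases hcond with h | h | h | h
        · exact Or.inr ⟨Or.inl h, h1, h2, hy⟩
        · exact Or.inr ⟨Or.inr h, h1, h2, hy⟩
        · exact absurd h h1
        · exact absurd h h2
      · rintro (⟨hx, h | h⟩ | ⟨hx, h1, h2, hy⟩)
        · exact ⟨hx, h ▸ hy1Y, Or.inr (Or.inr (Or.inl h))⟩
        · exact ⟨hx, h ▸ hybY, Or.inr (Or.inr (Or.inr h))⟩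
        · rcases hx with h | h
          · exact ⟨h ▸ hx1X, hy, Or.inl h⟩
          · exact ⟨h ▸ hxaX, hy, Or.inr (Or.inl h)⟩
    have hdisj : Disjoint (X ×ˢ ({y1, yb} : Finset ℕ))
        (({x1, xa} : Finset ℕ) ×ˢ ((Y.erase yb).erase y1)) := by
      rw [Finset.disjoint_left]
      rintro ⟨x, y⟩ h1 h2
      simp only [Finset.mem_product, Finset.mem_insert, Finset.mem_singleton,
        Finset.mem_erase] at h1 h2
      rcases h1.2 with h | h
      · exact h2.2.1 h
      · exact h2.2.2.1 h
    rw [hdec, Finset.card_union_of_disjoint hdisj, Finset.card_product, Finset.card_product]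
    have h5 : ({y1, yb} : Finset ℕ).card = 2 := by
      rw [Finset.card_insert_of_notMem (by simp [hy1yb.ne]), Finset.card_singleton]
    have h6 : ({x1, xa} : Finset ℕ).card = 2 := by
      rw [Finset.card_insert_of_notMem (by simp [hx1xa.ne]), Finset.card_singleton]
    rw [h5, h6]
    omega
  -- properties of membership in X, Y
  have hXprop : ∀ x ∈ X, x < m ∧ ∀ i, x ≠ C i := by
    intro x hx
    rw [hXdef, Finset.mem_filter, Finset.mem_range] at hx
    exact hx
  have hYprop : ∀ y ∈ Y, y < n ∧ ∀ i, y ≠ R i := by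
    intro y hy
    rw [hYdef, Finset.mem_filter, Finset.mem_range] at hy
    exact hy
  -- assignment of boundary cells to diagonals
  set Pr : ℕ × ℕ → Fin p × Bool → Prop := fun c t =>
    (t.2 = true ∧ (c.1 : ℤ) + c.2 = S t.1) ∨ (t.2 = false ∧ (c.1 : ℤ) - c.2 = D t.1)
    with hPrdef
  have hPrex : ∀ c ∈ bd, ∃ t, Pr c t := by
    intro c hc
    obtain ⟨hx, hy, -⟩ := (hbdmem c).mp hc
    obtain ⟨hxm, hxC⟩ := hXprop c.1 hx
    obtain ⟨hyn, hyR⟩ := hYprop c.2 hy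
    obtain ⟨i, hi⟩ := hcover c.1 c.2 hxm hyn
    rcases hi with h | h | h | h
    · exact absurd h (hyR i)
    · exact absurd h (hxC i)
    · exact ⟨(i, true), Or.inl ⟨rfl, h⟩⟩
    · exact ⟨(i, false), Or.inr ⟨rfl, h⟩⟩
  set f : ℕ × ℕ → Fin p × Bool := fun c =>
    if h : ∃ t, Pr c t then h.choose else (⟨0, hppos⟩, true) with hfdef
  have hfP : ∀ c ∈ bd, Pr c (f c) := by
    intro c hc
    have h := hPrex c hc
    simp only [hfdef, dif_pos h]
    exact h.choose_spec
  -- at most two boundary cells on each diagonal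
  have hsumfib : ∀ s : ℤ, ((bd.filter (fun c => (c.1:ℤ) + c.2 = s)).card ≤ 2) := by
    intro s
    by_contra hlt
    have hlt' : 2 < (bd.filter (fun c => (c.1:ℤ) + c.2 = s)).card := by omega
    obtain ⟨u, v, w, hu, hv, hw, huv, huw, hvw⟩ := Finset.two_lt_card_iff.mp hlt'
    rw [Finset.mem_filter] at hu hv hw
    have key : ∀ c c' c'' : ℕ × ℕ,
        c ∈ bd → c' ∈ bd → c'' ∈ bd →
        (c.1:ℤ) + c.2 = s → (c'.1:ℤ) + c'.2 = s → (c''.1:ℤ) + c''.2 = s →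
        c.1 < c'.1 → c'.1 < c''.1 → False := by
      intro c c' c'' hc hc' hc'' hs hs' hs'' h1 h2
      obtain ⟨hcx, hcy, -⟩ := (hbdmem c).mp hc
      obtain ⟨hcx', hcy', hd'⟩ := (hbdmem c').mp hc'
      obtain ⟨hcx'', hcy'', -⟩ := (hbdmem c'').mp hc''
      have b1 := hXlb c.1 hcx
      have b2 := hXub c''.1 hcx''
      have b3 := hYlb c''.2 hcy''
      have b4 := hYub c.2 hcy
      rcases hd' with h | h | h | h <;> omega
    have hxne : ∀ c c' : ℕ × ℕ, c ∈ bd → c' ∈ bd →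
        (c.1:ℤ) + c.2 = s → (c'.1:ℤ) + c'.2 = s → c.1 = c'.1 → c = c' := by
      intro c c' _ _ hs hs' hx
      have : c.2 = c'.2 := by omega
      exact Prod.ext hx this
    have d1 : u.1 ≠ v.1 := fun h => huv (hxne u v hu.1 hv.1 hu.2 hv.2 h)
    have d2 : u.1 ≠ w.1 := fun h => huw (hxne u w hu.1 hw.1 hu.2 hw.2 h)
    have d3 : v.1 ≠ w.1 := fun h => hvw (hxne v w hv.1 hw.1 hv.2 hw.2 h)
    rcases lt_trichotomy u.1 v.1 with h1 | h1 | h1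
    · rcases lt_trichotomy v.1 w.1 with h2 | h2 | h2
      · exact key u v w hu.1 hv.1 hw.1 hu.2 hv.2 hw.2 h1 h2
      · exact d3 h2
      · rcases lt_trichotomy u.1 w.1 with h3 | h3 | h3
        · exact key u w v hu.1 hw.1 hv.1 hu.2 hw.2 hv.2 h3 h2
        · exact d2 h3
        · exact key w u v hw.1 hu.1 hv.1 hw.2 hu.2 hv.2 h3 h1
    · exact d1 h1
    · rcases lt_trichotomy u.1 w.1 with h2 | h2 | h2
      · exact key v u w hv.1 hu.1 hw.1 hv.2 hu.2 hw.2 h1 h2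
      · exact d2 h2
      · rcases lt_trichotomy v.1 w.1 with h3 | h3 | h3
        · exact key v w u hv.1 hw.1 hu.1 hv.2 hw.2 hu.2 h3 h2
        · exact d3 h3
        · exact key w v u hw.1 hv.1 hu.1 hw.2 hv.2 hu.2 h3 h1
  have hdifffib : ∀ d : ℤ, ((bd.filter (fun c => (c.1:ℤ) - c.2 = d)).card ≤ 2) := by
    intro s
    by_contra hlt
    have hlt' : 2 < (bd.filter (fun c => (c.1:ℤ) - c.2 = s)).card := by omega
    obtain ⟨u, v, w, hu, hv, hw, huv, huw, hvw⟩ := Finset.two_lt_card_iff.mp hlt'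
    rw [Finset.mem_filter] at hu hv hw
    have key : ∀ c c' c'' : ℕ × ℕ,
        c ∈ bd → c' ∈ bd → c'' ∈ bd →
        (c.1:ℤ) - c.2 = s → (c'.1:ℤ) - c'.2 = s → (c''.1:ℤ) - c''.2 = s →
        c.1 < c'.1 → c'.1 < c''.1 → False := by
      intro c c' c'' hc hc' hc'' hs hs' hs'' h1 h2
      obtain ⟨hcx, hcy, -⟩ := (hbdmem c).mp hc
      obtain ⟨hcx', hcy', hd'⟩ := (hbdmem c').mp hc'
      obtain ⟨hcx'', hcy'', -⟩ := (hbdmem c'').mp hc''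
      have b1 := hXlb c.1 hcx
      have b2 := hXub c''.1 hcx''
      have b3 := hYlb c.2 hcy
      have b4 := hYub c''.2 hcy''
      rcases hd' with h | h | h | h <;> omega
    have hxne : ∀ c c' : ℕ × ℕ, c ∈ bd → c' ∈ bd →
        (c.1:ℤ) - c.2 = s → (c'.1:ℤ) - c'.2 = s → c.1 = c'.1 → c = c' := by
      intro c c' _ _ hs hs' hx
      have : c.2 = c'.2 := by omega
      exact Prod.ext hx this
    have d1 : u.1 ≠ v.1 := fun h => huv (hxne u v hu.1 hv.1 hu.2 hv.2 h)
    have d2 : u.1 ≠ w.1 := fun h => huw (hxne u w hu.1 hw.1 hu.2 hw.2 h)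
    have d3 : v.1 ≠ w.1 := fun h => hvw (hxne v w hv.1 hw.1 hv.2 hw.2 h)
    rcases lt_trichotomy u.1 v.1 with h1 | h1 | h1
    · rcases lt_trichotomy v.1 w.1 with h2 | h2 | h2
      · exact key u v w hu.1 hv.1 hw.1 hu.2 hv.2 hw.2 h1 h2
      · exact d3 h2
      · rcases lt_trichotomy u.1 w.1 with h3 | h3 | h3
        · exact key u w v hu.1 hw.1 hv.1 hu.2 hw.2 hv.2 h3 h2
        · exact d2 h3
        · exact key w u v hw.1 hu.1 hv.1 hw.2 hu.2 hv.2 h3 h1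
    · exact d1 h1
    · rcases lt_trichotomy u.1 w.1 with h2 | h2 | h2
      · exact key v u w hv.1 hu.1 hw.1 hv.2 hu.2 hw.2 h1 h2
      · exact d2 h2
      · rcases lt_trichotomy v.1 w.1 with h3 | h3 | h3
        · exact key v w u hv.1 hw.1 hu.1 hv.2 hw.2 hu.2 h3 h2
        · exact d3 h3
        · exact key w v u hw.1 hv.1 hu.1 hw.2 hv.2 hu.2 h3 h1
  have hfib_le : ∀ t : Fin p × Bool, (bd.filter (fun c => f c = t)).card ≤ 2 := by
    rintro ⟨i, b⟩
    cases b
    · refine le_trans (Finset.card_le_card ?_) (hdifffib (D i))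
      intro c hc
      rw [Finset.mem_filter] at hc ⊢
      obtain ⟨hcbd, hft⟩ := hc
      have hp := hfP c hcbd
      rw [hft] at hp
      rcases hp with ⟨h1, -⟩ | ⟨-, h2⟩
      · exact absurd h1 (by simp)
      · exact ⟨hcbd, h2⟩
    · refine le_trans (Finset.card_le_card ?_) (hsumfib (S i))
      intro c hc
      rw [Finset.mem_filter] at hc ⊢
      obtain ⟨hcbd, hft⟩ := hc
      have hp := hfP c hcbd
      rw [hft] at hp
      rcases hp with ⟨-, h2⟩ | ⟨h1, -⟩
      · exact ⟨hcbd, h2⟩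
      · exact absurd h1 (by simp)
  have hsum_card : bd.card = ∑ t : Fin p × Bool, (bd.filter (fun c => f c = t)).card :=
    Finset.card_eq_sum_card_fiberwise (fun c _ => Finset.mem_univ (f c))
  have huniv_card : (Finset.univ : Finset (Fin p × Bool)).card = 2 * p := by
    rw [Finset.card_univ]
    simp [Fintype.card_prod]
    ring
  have hcard_le : bd.card ≤ 4 * p := by
    calc bd.card = ∑ t : Fin p × Bool, (bd.filter (fun c => f c = t)).card := hsum_card
    _ ≤ ∑ _t : Fin p × Bool, 2 := Finset.sum_le_sum (fun t _ => hfib_le t)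
    _ = 4 * p := by
        rw [Finset.sum_const, huniv_card, smul_eq_mul]
        omega
  have hpeq : p = k := by omega
  have hXa : X.card = m - k := by omega
  have hYb : Y.card = n - k := by omega
  have hbd4k : bd.card = 4 * p := by omega
  have hfib_eq : ∀ t : Fin p × Bool, (bd.filter (fun c => f c = t)).card = 2 := by
    by_contra hco
    push_neg at hco
    obtain ⟨t0, ht0⟩ := hco
    have hlt : (bd.filter (fun c => f c = t0)).card < 2 := lt_of_le_of_ne (hfib_le t0) ht0
    have hbig : bd.card < 4 * p := by
      calc bd.card = ∑ t : Fin p × Bool, (bd.filter (fun c => f c = t)).card := hsum_card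
      _ < ∑ _t : Fin p × Bool, 2 :=
          Finset.sum_lt_sum (fun t _ => hfib_le t) ⟨t0, Finset.mem_univ t0, hlt⟩
      _ = 4 * p := by
          rw [Finset.sum_const, huniv_card, smul_eq_mul]
          omega
    omega
  -- the circle coordinate
  set A : ℕ := xa - x1 with hAdef
  set Bn : ℕ := yb - y1 with hBndef
  obtain ⟨Pn, hPndef⟩ : ∃ q : ℕ, q = 2 * (A + Bn) := ⟨_, rfl⟩
  set A' : ℤ := (xa : ℤ) - (x1 : ℤ) with hA'def
  set B' : ℤ := (yb : ℤ) - (y1 : ℤ) with hB'def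
  have hPnZ : (Pn : ℤ) = 2 * (A' + B') := by
    rw [hPndef, hA'def, hB'def, hAdef, hBndef]
    push_cast [Nat.cast_sub hx1xa.le, Nat.cast_sub hy1yb.le]
    ring
  set g : ℕ × ℕ → ℤ := fun c => (c.1 : ℤ) + c.2 - x1 - y1 with hgdef
  set gd : ℕ × ℕ → ℤ := fun c => (c.1 : ℤ) - c.2 - x1 + y1 with hgddef
  set θ : ℕ × ℕ → ZMod Pn := fun c =>
    if c.2 = y1 ∨ c.1 = xa then ((g c : ℤ) : ZMod Pn) else ((-(g c) : ℤ) : ZMod Pn) with hθdef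
  have hcast_eq : ∀ u v : ℤ, (Pn:ℤ) ∣ (u - v) → ((u : ZMod Pn) = (v : ZMod Pn)) := by
    intro u v huv
    rw [ZMod.intCast_eq_intCast_iff]
    exact (Int.modEq_iff_dvd.mpr (dvd_sub_comm.mp huv))
  -- θ expressed through differences
  have hθD : ∀ c ∈ bd, θ c = if c.2 = y1 ∨ c.1 = x1
      then ((gd c : ℤ) : ZMod Pn) else (((2*A' - gd c) : ℤ) : ZMod Pn) := by
    intro c hc
    obtain ⟨hxX, hyY, hdisj⟩ := (hbdmem c).mp hc
    by_cases h1 : c.2 = y1 ∨ c.1 = xa <;> by_cases h2 : c.2 = y1 ∨ c.1 = x1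
    · rw [hθdef]
      simp only [if_pos h1, if_pos h2]
      by_cases hy : c.2 = y1
      · apply hcast_eq
        refine ⟨0, ?_⟩
        simp only [hgdef, hgddef, hy]
        ring
      · exfalso
        have ha : c.1 = xa := h1.resolve_left hy
        have hb : c.1 = x1 := h2.resolve_left hy
        omega
    · rw [hθdef]
      simp only [if_pos h1, if_neg h2]
      have hy : c.2 ≠ y1 := fun h => h2 (Or.inl h)
      have ha : c.1 = xa := h1.resolve_left hy
      apply hcast_eq
      refine ⟨0, ?_⟩
      simp only [hgdef, hgddef, hA'def, ha]
      ring
    · rw [hθdef]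
      simp only [if_neg h1, if_pos h2]
      have hy : c.2 ≠ y1 := fun h => h1 (Or.inl h)
      have hb : c.1 = x1 := h2.resolve_left hy
      apply hcast_eq
      refine ⟨0, ?_⟩
      simp only [hgdef, hgddef, hb]
      ring
    · rw [hθdef]
      simp only [if_neg h1, if_neg h2]
      have hy : c.2 ≠ y1 := fun h => h1 (Or.inl h)
      have ha : c.1 ≠ xa := fun h => h1 (Or.inr h)
      have hb : c.1 ≠ x1 := fun h => h2 (Or.inr h)
      have hyb : c.2 = yb := by
        rcases hdisj with h | h | h | h
        · exact absurd h hb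
        · exact absurd h ha
        · exact absurd h hy
        · exact h
      apply hcast_eq
      refine ⟨-1, ?_⟩
      rw [hPnZ]
      simp only [hgdef, hgddef, hA'def, hB'def, hyb]
      ring
  -- pairing lemmas
  have hpairS : ∀ c c' : ℕ × ℕ, c ∈ bd → c' ∈ bd → c ≠ c' →
      (c.1:ℤ) + c.2 = (c'.1:ℤ) + c'.2 → θ c + θ c' = 0 := by
    have asym : ∀ c c' : ℕ × ℕ, c ∈ bd → c' ∈ bd → c.1 < c'.1 →
        (c.1:ℤ) + c.2 = (c'.1:ℤ) + c'.2 → θ c + θ c' = 0 := by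
      intro c c' hc hc' hlt hsum
      obtain ⟨hxX, hyY, hdisj⟩ := (hbdmem c).mp hc
      obtain ⟨hxX', hyY', hdisj'⟩ := (hbdmem c').mp hc'
      have hb1 := hYlb c'.2 hyY'
      have hb2 := hXub c'.1 hxX'
      have hb3 := hXlb c.1 hxX
      have hb4 := hYub c.2 hyY
      have h1 : ¬ (c.2 = y1 ∨ c.1 = xa) := by
        rintro (h | h) <;> omega
      have h2 : c'.2 = y1 ∨ c'.1 = xa := by
        rcases hdisj' with h | h | h | h
        · exfalso; omega
        · exact Or.inr h
        · exact Or.inl h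
        · exfalso; omega
      rw [hθdef]
      simp only [if_neg h1, if_pos h2]
      rw [← Int.cast_add]
      have hz : -g c + g c' = 0 := by
        simp only [hgdef]
        omega
      rw [hz, Int.cast_zero]
    intro c c' hc hc' hne hsum
    rcases lt_trichotomy c.1 c'.1 with h | h | h
    · exact asym c c' hc hc' h hsum
    · exfalso
      apply hne
      have h2 : c.2 = c'.2 := by omega
      exact Prod.ext h h2
    · rw [add_comm]
      exact asym c' c hc' hc h hsum.symm
  have hpairD : ∀ c c' : ℕ × ℕ, c ∈ bd → c' ∈ bd → c ≠ c' →
      (c.1:ℤ) - c.2 = (c'.1:ℤ) - c'.2 → θ c + θ c' = (((2*A') : ℤ) : ZMod Pn) := by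
    have asym : ∀ c c' : ℕ × ℕ, c ∈ bd → c' ∈ bd → c.1 < c'.1 →
        (c.1:ℤ) - c.2 = (c'.1:ℤ) - c'.2 → θ c + θ c' = (((2*A') : ℤ) : ZMod Pn) := by
      intro c c' hc hc' hlt hdiff
      obtain ⟨hxX, hyY, hdisj⟩ := (hbdmem c).mp hc
      obtain ⟨hxX', hyY', hdisj'⟩ := (hbdmem c').mp hc'
      have hb1 := hYlb c.2 hyY
      have hb2 := hXub c'.1 hxX'
      have hb3 := hXlb c.1 hxX
      have hb4 := hYub c'.2 hyY'
      have h1 : c.2 = y1 ∨ c.1 = x1 := by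
        rcases hdisj with h | h | h | h
        · exact Or.inr h
        · exfalso; omega
        · exact Or.inl h
        · exfalso; omega
      have h2 : ¬ (c'.2 = y1 ∨ c'.1 = x1) := by
        rintro (h | h) <;> omega
      rw [hθD c hc, hθD c' hc']
      simp only [if_pos h1, if_neg h2]
      rw [← Int.cast_add]
      congr 1
      simp only [hgddef]
      omega
    intro c c' hc hc' hne hdiff
    rcases lt_trichotomy c.1 c'.1 with h | h | h
    · exact asym c c' hc hc' h hdiff
    · exfalso
      apply hne
      have h2 : c.2 = c'.2 := by omega
      exact Prod.ext h h2
    · rw [add_comm]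
      exact asym c' c hc' hc h hdiff.symm
  -- sum of θ over the boundary via fibers
  have hSum1 : ∑ c ∈ bd, θ c = ((((p:ℤ) * (2*A')) : ℤ) : ZMod Pn) := by
    rw [← Finset.sum_fiberwise_of_maps_to (t := (Finset.univ : Finset (Fin p × Bool)))
        (fun c _ => Finset.mem_univ (f c)) θ]
    have hval : ∀ t : Fin p × Bool, (∑ c ∈ bd.filter (fun c => f c = t), θ c)
        = if t.2 = true then 0 else (((2*A') : ℤ) : ZMod Pn) := by
      intro t
      obtain ⟨c, c', hne, hpair⟩ := Finset.card_eq_two.mp (hfib_eq t)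
      have hcmem : c ∈ bd.filter (fun c => f c = t) := by
        rw [hpair]; exact Finset.mem_insert_self c {c'}
      have hc'mem : c' ∈ bd.filter (fun c => f c = t) := by
        rw [hpair]; exact Finset.mem_insert_of_mem (Finset.mem_singleton_self c')
      rw [Finset.mem_filter] at hcmem hc'mem
      obtain ⟨hcbd, hfc⟩ := hcmem
      obtain ⟨hc'bd, hfc'⟩ := hc'mem
      have hPc := hfP c hcbd
      have hPc' := hfP c' hc'bd
      rw [hfc] at hPc
      rw [hfc'] at hPc'
      rw [hpair, Finset.sum_pair hne]
      rcases t with ⟨i, b⟩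
      cases b
      · simp only [Bool.false_eq_true, if_false]
        rcases hPc with ⟨h1, -⟩ | ⟨-, hdc⟩
        · exact absurd h1 (by simp)
        rcases hPc' with ⟨h1, -⟩ | ⟨-, hdc'⟩
        · exact absurd h1 (by simp)
        exact hpairD c c' hcbd hc'bd hne (by rw [hdc, hdc'])
      · simp only [if_pos rfl]
        rcases hPc with ⟨-, hsc⟩ | ⟨h1, -⟩
        swap
        · exact absurd h1 (by simp)
        rcases hPc' with ⟨-, hsc'⟩ | ⟨h1, -⟩
        swap
        · exact absurd h1 (by simp)
        exact hpairS c c' hcbd hc'bd hne (by rw [hsc, hsc'])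
    rw [Finset.sum_congr rfl (fun t _ => hval t)]
    rw [Fintype.sum_prod_type]
    simp only [Fintype.sum_bool, if_pos rfl, Bool.false_eq_true, if_false, zero_add]
    rw [Finset.sum_const, Finset.card_univ, Fintype.card_fin, nsmul_eq_mul]
    push_cast
    ring
  -- sum of θ over the boundary, directly
  set L1 : Finset (ℕ × ℕ) := X ×ˢ ({y1} : Finset ℕ) with hL1def
  set L2 : Finset (ℕ × ℕ) := ({xa} : Finset ℕ) ×ˢ (Y.erase y1) with hL2def
  set U1 : Finset (ℕ × ℕ) := ({x1} : Finset ℕ) ×ˢ (Y.erase y1) with hU1def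
  set U2 : Finset (ℕ × ℕ) := ((X.erase x1).erase xa) ×ˢ ({yb} : Finset ℕ) with hU2def
  have hL1mem : ∀ c : ℕ × ℕ, c ∈ L1 ↔ (c.1 ∈ X ∧ c.2 = y1) := by
    intro c
    rw [hL1def, Finset.mem_product, Finset.mem_singleton]
  have hL2mem : ∀ c : ℕ × ℕ, c ∈ L2 ↔ (c.1 = xa ∧ c.2 ≠ y1 ∧ c.2 ∈ Y) := by
    intro c
    rw [hL2def, Finset.mem_product, Finset.mem_singleton, Finset.mem_erase]
  have hU1mem : ∀ c : ℕ × ℕ, c ∈ U1 ↔ (c.1 = x1 ∧ c.2 ≠ y1 ∧ c.2 ∈ Y) := by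
    intro c
    rw [hU1def, Finset.mem_product, Finset.mem_singleton, Finset.mem_erase]
  have hU2mem : ∀ c : ℕ × ℕ, c ∈ U2 ↔ (c.1 ≠ xa ∧ c.1 ≠ x1 ∧ c.1 ∈ X ∧ c.2 = yb) := by
    intro c
    rw [hU2def, Finset.mem_product, Finset.mem_singleton, Finset.mem_erase, Finset.mem_erase]
    tauto
  have hdisjL : Disjoint L1 L2 := by
    rw [Finset.disjoint_left]
    intro c h1 h2
    exact ((hL2mem c).mp h2).2.1 ((hL1mem c).mp h1).2
  have hdisjU : Disjoint U1 U2 := by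
    rw [Finset.disjoint_left]
    intro c h1 h2
    exact ((hU2mem c).mp h2).2.1 ((hU1mem c).mp h1).1
  have hdisjLU : Disjoint (L1 ∪ L2) (U1 ∪ U2) := by
    rw [Finset.disjoint_left]
    intro c h1 h2
    rw [Finset.mem_union] at h1 h2
    rcases h1 with h1 | h1 <;> rcases h2 with h2 | h2
    · exact ((hU1mem c).mp h2).2.1 ((hL1mem c).mp h1).2
    · exact hy1yb.ne (((hL1mem c).mp h1).2.symm.trans ((hU2mem c).mp h2).2.2.2)
    · exact hx1xa.ne' (((hL2mem c).mp h1).1.symm.trans ((hU1mem c).mp h2).1)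
    · exact ((hU2mem c).mp h2).1 ((hL2mem c).mp h1).1
  have hdec2 : bd = (L1 ∪ L2) ∪ (U1 ∪ U2) := by
    ext c
    rw [hbdmem, Finset.mem_union, Finset.mem_union, Finset.mem_union,
      hL1mem, hL2mem, hU1mem, hU2mem]
    constructor
    · rintro ⟨hx, hy, hcond⟩
      by_cases h1 : c.2 = y1
      · exact Or.inl (Or.inl ⟨hx, h1⟩)
      by_cases h2 : c.1 = xa
      · exact Or.inl (Or.inr ⟨h2, h1, hy⟩)
      by_cases h3 : c.1 = x1
      · exact Or.inr (Or.inl ⟨h3, h1, hy⟩)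
      have h4 : c.2 = yb := by tauto
      exact Or.inr (Or.inr ⟨h2, h3, hx, h4⟩)
    · rintro ((⟨hx, hy⟩ | ⟨hx, hy1', hy⟩) | (⟨hx, hy1', hy⟩ | ⟨hx1', hx2', hx, hy⟩))
      · exact ⟨hx, hy ▸ hy1Y, Or.inr (Or.inr (Or.inl hy))⟩
      · exact ⟨hx ▸ hxaX, hy, Or.inr (Or.inl hx)⟩
      · exact ⟨hx ▸ hx1X, hy, Or.inl hx⟩
      · exact ⟨hx, hy ▸ hybY, Or.inr (Or.inr (Or.inr hy))⟩
  -- θ values on the pieces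
  have hθL1 : ∀ c ∈ L1, θ c = ((g c : ℤ) : ZMod Pn) := by
    intro c hc
    rw [hθdef]
    exact if_pos (Or.inl ((hL1mem c).mp hc).2)
  have hθL2 : ∀ c ∈ L2, θ c = ((g c : ℤ) : ZMod Pn) := by
    intro c hc
    rw [hθdef]
    exact if_pos (Or.inr ((hL2mem c).mp hc).1)
  have hθU1 : ∀ c ∈ U1, θ c = ((-(g c) : ℤ) : ZMod Pn) := by
    intro c hc
    rw [hθdef]
    refine if_neg ?_
    obtain ⟨hx, hy, -⟩ := (hU1mem c).mp hc
    rintro (h | h)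
    · exact hy h
    · exact hx1xa.ne (hx.symm.trans h)
  have hθU2 : ∀ c ∈ U2, θ c = ((-(g c) : ℤ) : ZMod Pn) := by
    intro c hc
    rw [hθdef]
    refine if_neg ?_
    obtain ⟨hxa', hx1', -, hy⟩ := (hU2mem c).mp hc
    rintro (h | h)
    · exact hy1yb.ne (h.symm.trans hy)
    · exact hxa' h
  -- integer sums over the pieces
  have hSYe : (∑ y ∈ Y.erase y1, (y:ℤ)) + (y1:ℤ) = ∑ y ∈ Y, (y:ℤ) := by
    rw [add_comm]
    exact Finset.add_sum_erase Y (fun y => (y:ℤ)) hy1Y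
  have hSXe : (∑ x ∈ (X.erase x1).erase xa, (x:ℤ)) + (x1:ℤ) + (xa:ℤ) = ∑ x ∈ X, (x:ℤ) := by
    have h1 : xa ∈ X.erase x1 := Finset.mem_erase.mpr ⟨hx1xa.ne', hxaX⟩
    have h2 := Finset.add_sum_erase (X.erase x1) (fun x => (x:ℤ)) h1
    have h3 := Finset.add_sum_erase X (fun x => (x:ℤ)) hx1X
    rw [← h3, ← h2]
    ring
  have hcYe : ((Y.erase y1).card : ℤ) = (Y.card : ℤ) - 1 := by
    have := Finset.card_erase_of_mem hy1Y
    omega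
  have hcXe : (((X.erase x1).erase xa).card : ℤ) = (X.card : ℤ) - 2 := by
    have h1 : xa ∈ X.erase x1 := Finset.mem_erase.mpr ⟨hx1xa.ne', hxaX⟩
    have h2 := Finset.card_erase_of_mem h1
    have h3 := Finset.card_erase_of_mem hx1X
    omega
  have hSL1 : ∑ c ∈ L1, g c = (∑ x ∈ X, (x:ℤ)) + (X.card : ℤ) * (-(x1:ℤ)) := by
    rw [hL1def, Finset.sum_product]
    simp only [Finset.sum_singleton]
    have he : ∀ x ∈ X, g (x, y1) = (x:ℤ) + (-(x1:ℤ)) := by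
      intro x _
      simp only [hgdef]
      ring
    rw [Finset.sum_congr rfl he, Finset.sum_add_distrib, Finset.sum_const, nsmul_eq_mul]
  have hSL2 : ∑ c ∈ L2, g c = (∑ y ∈ Y.erase y1, (y:ℤ))
      + ((Y.erase y1).card : ℤ) * (A' - (y1:ℤ)) := by
    rw [hL2def, Finset.sum_product]
    simp only [Finset.sum_singleton]
    have he : ∀ y ∈ Y.erase y1, g (xa, y) = (y:ℤ) + (A' - (y1:ℤ)) := by
      intro y _
      simp only [hgdef, hA'def]
      ring
    rw [Finset.sum_congr rfl he, Finset.sum_add_distrib, Finset.sum_const, nsmul_eq_mul]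
  have hSU1 : ∑ c ∈ U1, g c = (∑ y ∈ Y.erase y1, (y:ℤ))
      + ((Y.erase y1).card : ℤ) * (-(y1:ℤ)) := by
    rw [hU1def, Finset.sum_product]
    simp only [Finset.sum_singleton]
    have he : ∀ y ∈ Y.erase y1, g (x1, y) = (y:ℤ) + (-(y1:ℤ)) := by
      intro y _
      simp only [hgdef]
      ring
    rw [Finset.sum_congr rfl he, Finset.sum_add_distrib, Finset.sum_const, nsmul_eq_mul]
  have hSU2 : ∑ c ∈ U2, g c = (∑ x ∈ (X.erase x1).erase xa, (x:ℤ))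
      + (((X.erase x1).erase xa).card : ℤ) * (B' - (x1:ℤ)) := by
    rw [hU2def, Finset.sum_product]
    simp only [Finset.sum_singleton]
    have he : ∀ x ∈ (X.erase x1).erase xa, g (x, yb) = (x:ℤ) + (B' - (x1:ℤ)) := by
      intro x _
      simp only [hgdef, hB'def]
      ring
    rw [Finset.sum_congr rfl he, Finset.sum_add_distrib, Finset.sum_const, nsmul_eq_mul]
  have hSum2 : ∑ c ∈ bd, θ c
      = ((((Y.card:ℤ) * A' - ((X.card:ℤ) - 2) * B') : ℤ) : ZMod Pn) := by
    rw [hdec2, Finset.sum_union hdisjLU, Finset.sum_union hdisjL, Finset.sum_union hdisjU]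
    rw [Finset.sum_congr rfl hθL1, Finset.sum_congr rfl hθL2,
      Finset.sum_congr rfl hθU1, Finset.sum_congr rfl hθU2]
    rw [← Int.cast_sum, ← Int.cast_sum, ← Int.cast_sum, ← Int.cast_sum]
    rw [← Int.cast_add, ← Int.cast_add, ← Int.cast_add]
    congr 1
    rw [Finset.sum_neg_distrib, Finset.sum_neg_distrib]
    rw [hSL1, hSL2, hSU1, hSU2, hcYe, hcXe]
    rw [hA'def, hB'def]
    linear_combination (-1 : ℤ) * hSXe
  -- the contradiction
  have hfinal : ((((Y.card:ℤ) * A' - ((X.card:ℤ) - 2) * B') : ℤ) : ZMod Pn)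
      = ((((p:ℤ) * (2*A')) : ℤ) : ZMod Pn) := by
    rw [← hSum2, hSum1]
  rw [ZMod.intCast_eq_intCast_iff] at hfinal
  have hdvd : (Pn:ℤ) ∣ ((p:ℤ) * (2*A')) - ((Y.card:ℤ) * A' - ((X.card:ℤ) - 2) * B') :=
    Int.ModEq.dvd hfinal
  have hYcZ : (Y.card : ℤ) = (n:ℤ) - (k:ℤ) := by omega
  have hXcZ : (X.card : ℤ) = (m:ℤ) - (k:ℤ) := by omega
  have hpZ : (p:ℤ) = (k:ℤ) := by omega
  have hmnZ : (m:ℤ) + (n:ℤ) = 4*(k:ℤ) + 2 := by omega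
  have hkey : ((p:ℤ) * (2*A')) - ((Y.card:ℤ) * A' - ((X.card:ℤ) - 2) * B')
      = ((X.card:ℤ) - 2) * (A' + B') := by
    rw [hYcZ, hXcZ, hpZ]
    linear_combination (-(A' : ℤ)) * hmnZ
  rw [hkey, hPnZ] at hdvd
  obtain ⟨c, hc⟩ := hdvd
  have hABpos : (0:ℤ) < A' + B' := by
    rw [hA'def, hB'def]
    have h1 : (x1:ℤ) < (xa:ℤ) := by exact_mod_cast hx1xa
    have h2 : (y1:ℤ) < (yb:ℤ) := by exact_mod_cast hy1yb
    omega
  have hceq : (X.card:ℤ) - 2 = 2 * c := by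
    have h2 : ((X.card:ℤ) - 2) * (A' + B') = (2 * c) * (A' + B') := by
      rw [hc]
      ring
    exact mul_right_cancel₀ (ne_of_gt hABpos) h2
  omega
end
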